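/- arXiv:1703.01080 — 10 statements merged into one kernel-verified Lean document; each statement's English description precedes it below -/
import Mathlib

section
/- Let A be a finite abelian group and f : A → ℂ a nonzero function. Then |supp(f)| · |supp(f̂)| ≥ |A|, where f̂ is the Fourier transform of f on the dual group of A. -/
open scoped BigOperators

/-- Donoho–Stark uncertainty principle: for a finite abelian group `A` and a nonzero
function `f : A → ℂ`, we have `|supp f| * |supp f̂| ≥ |A|`, where
`f̂(χ) = (1/|A|) ∑ a, f a * conj (χ a)` is the Fourier transform on the dual group. -/
theorem donoho_stark (A : Type*) [AddCommGroup A] [Fintype A] (f : A → ℂ) (hf : f ≠ 0) :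
    Fintype.card A ≤
      (Function.support f).ncard *
      (Function.support (fun χ : AddChar A ℂ =>
        (∑ a : A, f a * (starRingEnd ℂ) (χ a)) / (Fintype.card A : ℂ))).ncard := by
  classical
  set N := Fintype.card A with hNdef
  have hN0 : 0 < N := Fintype.card_pos
  have hNR : (0:ℝ) < N := by exact_mod_cast hN0
  set g : AddChar A ℂ → ℂ :=
    fun χ => (∑ a : A, f a * (starRingEnd ℂ) (χ a)) / (N : ℂ) with hg
  -- characters have unit norm
  have hnorm : ∀ (χ : AddChar A ℂ) (a : A), ‖χ a‖ = 1 := by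
    intro χ a
    refine Complex.norm_eq_one_of_pow_eq_one (n := N) ?_ hN0.ne'
    rw [← AddChar.map_nsmul_eq_pow, hNdef, card_nsmul_eq_zero, AddChar.map_zero_eq_one]
  have hconj : ∀ (χ : AddChar A ℂ) (a : A), (starRingEnd ℂ) (χ a) = χ (-a) := by
    intro χ a
    rw [AddChar.map_neg_eq_inv, Complex.inv_eq_conj (hnorm χ a)]
  -- Fourier inversion
  have hinv : ∀ a : A, ∑ χ : AddChar A ℂ, g χ * χ a = f a := by
    intro a
    have h1 : ∀ χ : AddChar A ℂ, g χ * χ a = (∑ b : A, f b * χ (a - b)) / (N : ℂ) := by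
      intro χ
      rw [hg]
      rw [div_mul_eq_mul_div, Finset.sum_mul]
      congr 1
      refine Finset.sum_congr rfl fun b _ => ?_
      rw [mul_assoc, hconj, ← AddChar.map_add_eq_mul, neg_add_eq_sub]
    calc ∑ χ : AddChar A ℂ, g χ * χ a
        = (∑ χ : AddChar A ℂ, ∑ b : A, f b * χ (a - b)) / (N : ℂ) := by
          simp_rw [h1]; rw [Finset.sum_div]
      _ = (∑ b : A, f b * ∑ χ : AddChar A ℂ, χ (a - b)) / (N : ℂ) := by
          rw [Finset.sum_comm]; simp_rw [Finset.mul_sum]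
      _ = f a := by
          simp_rw [AddChar.sum_apply_eq_ite, sub_eq_zero, mul_ite, mul_zero]
          rw [Finset.sum_ite_eq Finset.univ a (fun b => f b * ((Fintype.card A):ℂ))]
          simp only [Finset.mem_univ, if_true]
          rw [mul_div_assoc, ← hNdef, div_self (by exact_mod_cast hN0.ne'), mul_one]
  -- supports as finsets
  set S : Finset A := Finset.univ.filter (fun a => f a ≠ 0) with hS
  set T : Finset (AddChar A ℂ) := Finset.univ.filter (fun χ => g χ ≠ 0) with hT
  have hSsupp : Function.support f = ↑S := by
    ext a; simp [hS, Function.mem_support]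
  have hTsupp : Function.support g = ↑T := by
    ext χ; simp [hT, Function.mem_support]
  -- choose a point of maximal norm
  obtain ⟨a₀, -, ha₀⟩ := Finset.exists_max_image Finset.univ (fun a => ‖f a‖)
    ⟨Classical.arbitrary A, Finset.mem_univ _⟩
  set M := ‖f a₀‖ with hM
  have hMpos : 0 < M := by
    obtain ⟨a₁, ha₁⟩ := Function.ne_iff.1 hf
    have := ha₀ a₁ (Finset.mem_univ _)
    have h1 : 0 < ‖f a₁‖ := by simpa [norm_pos_iff] using ha₁
    linarith
  -- bound on each Fourier coefficient
  have hgbound : ∀ χ : AddChar A ℂ, ‖g χ‖ ≤ S.card * M / N := by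
    intro χ
    rw [hg]
    simp only [norm_div, Complex.norm_natCast]
    rw [div_le_div_iff_of_pos_right hNR]
    calc ‖∑ a : A, f a * (starRingEnd ℂ) (χ a)‖
        ≤ ∑ a : A, ‖f a * (starRingEnd ℂ) (χ a)‖ := norm_sum_le _ _
      _ = ∑ a : A, ‖f a‖ := by
          refine Finset.sum_congr rfl fun a _ => ?_
          rw [norm_mul, RCLike.norm_conj, hnorm, mul_one]
      _ = ∑ a ∈ S, ‖f a‖ := by
          rw [eq_comm]
          refine Finset.sum_subset (Finset.subset_univ _) fun a _ ha => ?_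
          simp only [hS, Finset.mem_filter, Finset.mem_univ, true_and, not_not] at ha
          simp [ha]
      _ ≤ ∑ _a ∈ S, M := Finset.sum_le_sum fun a _ => ha₀ a (Finset.mem_univ _)
      _ = S.card * M := by rw [Finset.sum_const, nsmul_eq_mul]
  -- main estimate
  have hmain : M ≤ T.card * (S.card * M / N) := by
    calc M = ‖∑ χ : AddChar A ℂ, g χ * χ a₀‖ := by rw [hinv a₀]
      _ = ‖∑ χ ∈ T, g χ * χ a₀‖ := by
          congr 1
          refine (Finset.sum_subset (Finset.subset_univ _) fun χ _ hχ => ?_).symm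
          simp only [hT, Finset.mem_filter, Finset.mem_univ, true_and, not_not] at hχ
          simp [hχ]
      _ ≤ ∑ χ ∈ T, ‖g χ * χ a₀‖ := norm_sum_le _ _
      _ = ∑ χ ∈ T, ‖g χ‖ := by
          refine Finset.sum_congr rfl fun χ _ => ?_
          rw [norm_mul, hnorm, mul_one]
      _ ≤ ∑ _χ ∈ T, (S.card * M / N) := Finset.sum_le_sum fun χ _ => hgbound χ
      _ = T.card * (S.card * M / N) := by rw [Finset.sum_const, nsmul_eq_mul]
  have hfinal : (N : ℝ) ≤ S.card * T.card := by
    have h2 : M * N ≤ (T.card : ℝ) * (S.card * M) := by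
      have h := mul_le_mul_of_nonneg_right hmain hNR.le
      calc M * N ≤ (T.card:ℝ) * (S.card * M / N) * N := h
        _ = (T.card:ℝ) * (S.card * M) := by field_simp
    nlinarith [hMpos, h2]
  rw [hSsupp, hTsupp, Set.ncard_coe_finset, Set.ncard_coe_finset]
  exact_mod_cast hfinal
end

section
/- Let p be a prime and f : Z/pZ → ℂ a nonzero function. Then |supp(f)| + |supp(f̂)| ≥ p + 1. -/
open scoped BigOperators

section AuxUncertainty
open MvPolynomial Matrix Finset



lemma my_prod_primes_dvd {R : Type*} [CommMonoidWithZero R] {ι : Type*} [DecidableEq ι]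
    (s : Finset ι) (g : ι → R) :
    ∀ (a : R), (∀ i ∈ s, Prime (g i)) → (∀ i ∈ s, g i ∣ a) →
    (∀ i ∈ s, ∀ j ∈ s, i ≠ j → ¬ (g i ∣ g j)) → (∏ i ∈ s, g i) ∣ a := by
  induction s using Finset.induction_on with
  | empty => simp
  | @insert x s hx ih =>
    intro a hp hd hnd
    obtain ⟨b, rfl⟩ := hd x (Finset.mem_insert_self x s)
    rw [Finset.prod_insert hx]
    refine mul_dvd_mul_left _ (ih b (fun i hi => hp i (Finset.mem_insert_of_mem hi))
      (fun i hi => ?_) (fun i hi j hj hij => hnd i (Finset.mem_insert_of_mem hi) j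
        (Finset.mem_insert_of_mem hj) hij))
    have hix : i ≠ x := fun h => hx (h ▸ hi)
    have hpi := hp i (Finset.mem_insert_of_mem hi)
    rcases hpi.dvd_or_dvd (hd i (Finset.mem_insert_of_mem hi)) with h | h
    · exact absurd h (hnd i (Finset.mem_insert_of_mem hi) x (Finset.mem_insert_self x s) hix)
    · exact h

lemma my_prime_X_sub_X {n : ℕ} {i j : Fin (n+1)} (hij : i ≠ j) :
    Prime (X j - X i : MvPolynomial (Fin (n+1)) ℤ) := by
  have h0 : Prime (X j : MvPolynomial (Fin (n+1)) ℤ) := by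
    rw [← MulEquiv.prime_iff (renameEquiv ℤ (Equiv.swap j (0 : Fin (n+1)))).toMulEquiv]
    have : (renameEquiv ℤ (Equiv.swap j (0 : Fin (n+1)))).toMulEquiv (X j)
        = (X 0 : MvPolynomial (Fin (n+1)) ℤ) := by
      simp [renameEquiv_apply, rename_X]
    rw [this, ← MulEquiv.prime_iff (finSuccEquiv ℤ n).toMulEquiv]
    have : (finSuccEquiv ℤ n).toMulEquiv (X 0) = (Polynomial.X : Polynomial (MvPolynomial (Fin n) ℤ)) := by
      simp [finSuccEquiv_X_zero]
    rw [this]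
    exact Polynomial.prime_X
  -- shear automorphism
  let F : MvPolynomial (Fin (n+1)) ℤ →ₐ[ℤ] MvPolynomial (Fin (n+1)) ℤ :=
    aeval (fun t => if t = j then X j - X i else X t)
  let G : MvPolynomial (Fin (n+1)) ℤ →ₐ[ℤ] MvPolynomial (Fin (n+1)) ℤ :=
    aeval (fun t => if t = j then X j + X i else X t)
  have hFG : F.comp G = AlgHom.id ℤ _ := by
    apply algHom_ext
    intro t
    by_cases h : t = j
    · subst h
      simp [F, G, hij]
    · simp [F, G, h]
  have hGF : G.comp F = AlgHom.id ℤ _ := by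
    apply algHom_ext
    intro t
    by_cases h : t = j
    · subst h
      simp [F, G, hij]
    · simp [F, G, h]
  let e : MvPolynomial (Fin (n+1)) ℤ ≃ₐ[ℤ] MvPolynomial (Fin (n+1)) ℤ :=
    AlgEquiv.ofAlgHom F G hFG hGF
  have := (MulEquiv.prime_iff (p := (X j : MvPolynomial (Fin (n+1)) ℤ)) e.toMulEquiv).mpr h0
  have he : e.toMulEquiv (X j) = X j - X i := by
    show e (X j) = _
    show F (X j) = _
    simp [F]
  rwa [he] at this
lemma my_pair_dvd_det {n : ℕ} (b : Fin n → ℕ) {i j : Fin n} (hij : i ≠ j) :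
    (X i - X j : MvPolynomial (Fin n) ℤ) ∣
      (Matrix.of fun i j : Fin n => (X i : MvPolynomial (Fin n) ℤ) ^ (b j)).det := by
  classical
  set M : Matrix (Fin n) (Fin n) (MvPolynomial (Fin n) ℤ) :=
    Matrix.of fun i j : Fin n => (X i : MvPolynomial (Fin n) ℤ) ^ (b j) with hM
  set u : Fin n → MvPolynomial (Fin n) ℤ :=
    fun m => (X i : MvPolynomial (Fin n) ℤ) ^ b m - (X j) ^ b m with hu
  set w : Fin n → MvPolynomial (Fin n) ℤ :=
    fun m => (X j : MvPolynomial (Fin n) ℤ) ^ b m with hw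
  have h3 : (M.updateRow i w).det = 0 := by
    apply Matrix.det_zero_of_row_eq hij
    funext m
    rw [Matrix.updateRow_self, Matrix.updateRow_ne (Ne.symm hij)]
    rfl
  have h4 : M.det = (M.updateRow i u).det := by
    have : M.updateRow i (u + w) = M := by
      have : u + w = M i := by funext m; simp [hu, hw, hM]
      rw [this, M.updateRow_eq_self i]
    conv_lhs => rw [← this]
    rw [Matrix.det_updateRow_add, h3, add_zero]
  set c : Fin n → MvPolynomial (Fin n) ℤ :=
    fun m => ∑ l ∈ Finset.range (b m), (X i : MvPolynomial (Fin n) ℤ) ^ l * (X j) ^ (b m - 1 - l)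
    with hc
  have h5 : u = (X i - X j : MvPolynomial (Fin n) ℤ) • c := by
    funext m
    simp only [hu, hc, Pi.smul_apply, smul_eq_mul]
    rw [mul_comm, geom_sum₂_mul]
  rw [h4, h5, Matrix.det_updateRow_smul]
  exact Dvd.intro _ rfl

lemma my_vandermonde_dvd_det {n : ℕ} (b : Fin n → ℕ) :
    (∏ i : Fin n, ∏ j ∈ Finset.Ioi i, (X j - X i : MvPolynomial (Fin n) ℤ)) ∣
      (Matrix.of fun i j : Fin n => (X i : MvPolynomial (Fin n) ℤ) ^ (b j)).det := by
  classical
  cases n with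
  | zero => simp
  | succ n =>
    rw [← Finset.prod_sigma (Finset.univ) (fun i => Finset.Ioi i)
      (fun x => (X x.2 - X x.1 : MvPolynomial (Fin (n+1)) ℤ))]
    apply my_prod_primes_dvd
    · rintro ⟨i, j⟩ hij
      simp only [Finset.mem_sigma, Finset.mem_univ, Finset.mem_Ioi, true_and] at hij
      show Prime (X j - X i : MvPolynomial (Fin (n+1)) ℤ)
      exact my_prime_X_sub_X (ne_of_lt hij)
    · rintro ⟨i, j⟩ hij
      simp only [Finset.mem_sigma, Finset.mem_univ, Finset.mem_Ioi, true_and] at hij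
      show (X j - X i : MvPolynomial (Fin (n+1)) ℤ) ∣ _
      exact my_pair_dvd_det b (ne_of_gt hij)
    · rintro ⟨i, j⟩ hij ⟨k, l⟩ hkl hne hdvd
      simp only [Finset.mem_sigma, Finset.mem_univ, Finset.mem_Ioi, true_and] at hij hkl
      rw [show (⟨i,j⟩ : Σ _ : Fin (n+1), Fin (n+1)).snd = j from rfl,
        show (⟨i,j⟩ : Σ _ : Fin (n+1), Fin (n+1)).fst = i from rfl,
        show (⟨k,l⟩ : Σ _ : Fin (n+1), Fin (n+1)).snd = l from rfl,
        show (⟨k,l⟩ : Σ _ : Fin (n+1), Fin (n+1)).fst = k from rfl] at hdvd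
      have hpair : ¬ (i = k ∧ j = l) := by
        rintro ⟨rfl, rfl⟩
        exact hne rfl
      have hex : ∃ v : Fin (n+1) → ℤ, v j = v i ∧ v l ≠ v k := by
        by_cases hl : l ≠ i ∧ l ≠ j
        · refine ⟨fun m => if m = l then 1 else 0, ?_, ?_⟩
          · show (if j = l then (1:ℤ) else 0) = (if i = l then 1 else 0)
            rw [if_neg hl.2.symm, if_neg hl.1.symm]
          · show (if l = l then (1:ℤ) else 0) ≠ (if k = l then 1 else 0)
            rw [if_pos rfl, if_neg (ne_of_lt hkl)]
            exact one_ne_zero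
        · have hk : k ≠ i ∧ k ≠ j := by
            push_neg at hl
            constructor
            · intro hki
              rcases em (l = i) with h1 | h1
              · exact absurd (hki.trans h1.symm) (ne_of_lt hkl)
              · exact hpair ⟨hki.symm, (hl h1).symm⟩
            · intro hkj
              rcases em (l = i) with h1 | h1
              · subst h1; subst hkj
                exact absurd (hij.trans hkl) (lt_irrefl _)
              · have h2 := hl h1
                subst h2
                exact absurd (hkj ▸ hkl) (lt_irrefl _)
          refine ⟨fun m => if m = k then 1 else 0, ?_, ?_⟩
          · show (if j = k then (1:ℤ) else 0) = (if i = k then 1 else 0)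
            rw [if_neg hk.2.symm, if_neg hk.1.symm]
          · show (if l = k then (1:ℤ) else 0) ≠ (if k = k then 1 else 0)
            rw [if_neg (ne_of_gt hkl), if_pos rfl]
            exact (zero_ne_one)
      obtain ⟨v, hv1, hv2⟩ := hex
      have hdv := map_dvd (MvPolynomial.eval v) hdvd
      simp only [map_sub, MvPolynomial.eval_X, hv1, sub_self] at hdv
      rw [zero_dvd_iff, sub_eq_zero] at hdv
      exact hv2 hdv
lemma my_factor (m n : ℕ) (h : m ≤ n) :
    (Polynomial.X : Polynomial ℤ) ^ n - Polynomial.X ^ m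
      = (Polynomial.X - 1) * (Polynomial.X ^ m * ∑ l ∈ Finset.range (n - m), Polynomial.X ^ l) := by
  have hgs := geom_sum_mul (Polynomial.X : Polynomial ℤ) (n - m)
  have h2 : (Polynomial.X : Polynomial ℤ) ^ m * (Polynomial.X ^ (n - m) - 1)
      = Polynomial.X ^ n - Polynomial.X ^ m := by
    rw [mul_sub, mul_one, ← pow_add, Nat.add_sub_cancel' h]
  rw [← h2, ← hgs]
  ring

lemma my_nested_factor {k : ℕ} (γ : Fin k → ℕ) (hγ : StrictMono γ) :
    (∏ i : Fin k, ∏ j ∈ Finset.Ioi i, ((Polynomial.X : Polynomial ℤ) ^ (γ j) - Polynomial.X ^ (γ i)))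
      = (∏ i : Fin k, ∏ j ∈ Finset.Ioi i, (Polynomial.X - 1 : Polynomial ℤ)) *
        ∏ i : Fin k, ∏ j ∈ Finset.Ioi i,
          (Polynomial.X ^ (γ i) * ∑ l ∈ Finset.range (γ j - γ i), Polynomial.X ^ l) := by
  rw [← Finset.prod_mul_distrib]
  apply Finset.prod_congr rfl
  intro i _
  rw [← Finset.prod_mul_distrib]
  apply Finset.prod_congr rfl
  intro j hj
  exact my_factor _ _ (le_of_lt (hγ (Finset.mem_Ioi.mp hj)))

lemma my_eval_one_nested {k : ℕ} (γ : Fin k → ℕ) :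
    Polynomial.eval (1:ℤ) (∏ i : Fin k, ∏ j ∈ Finset.Ioi i,
        (Polynomial.X ^ (γ i) * ∑ l ∈ Finset.range (γ j - γ i), Polynomial.X ^ l))
      = ∏ i : Fin k, ∏ j ∈ Finset.Ioi i, ((γ j - γ i : ℕ) : ℤ) := by
  rw [Polynomial.eval_prod]
  apply Finset.prod_congr rfl
  intro i _
  rw [Polynomial.eval_prod]
  apply Finset.prod_congr rfl
  intro j _
  simp

lemma my_not_dvd_nested (p : ℕ) [hp : Fact p.Prime] {k : ℕ} (γ : Fin k → ℕ)
    (hγ : StrictMono γ) (hlt : ∀ i, γ i < p) :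
    ¬ ((p : ℤ) ∣ ∏ i : Fin k, ∏ j ∈ Finset.Ioi i, ((γ j - γ i : ℕ) : ℤ)) := by
  intro h
  have hpZ : Prime (p : ℤ) := Nat.prime_iff_prime_int.mp hp.out
  obtain ⟨i, -, hi⟩ := (hpZ.dvd_finset_prod_iff _).mp h
  obtain ⟨j, hj, hij⟩ := (hpZ.dvd_finset_prod_iff _).mp hi
  rw [Int.natCast_dvd_natCast] at hij
  have h1 : 0 < γ j - γ i := Nat.sub_pos_of_lt (hγ (Finset.mem_Ioi.mp hj))
  have h2 : γ j - γ i < p := lt_of_le_of_lt (Nat.sub_le _ _) (hlt j)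
  exact absurd (Nat.le_of_dvd h1 hij) (not_le.mpr h2)

lemma my_cheb (p : ℕ) [hp : Fact p.Prime] {k : ℕ} (α β : Fin k → ℕ)
    (hαinj : Function.Injective α) (hα : ∀ i, α i < p)
    (hβmono : StrictMono β) (hβ : ∀ i, β i < p) :
    (Matrix.of fun i j : Fin k =>
      Complex.exp (2 * Real.pi * Complex.I / p) ^ (α i * β j)).det ≠ 0 := by
  classical
  set ω : ℂ := Complex.exp (2 * Real.pi * Complex.I / p) with hωdef
  have hω : IsPrimitiveRoot ω p := Complex.isPrimitiveRoot_exp p hp.out.ne_zero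
  obtain ⟨Q, hQ⟩ := my_vandermonde_dvd_det (n := k) β
  set φt : MvPolynomial (Fin k) ℤ →ₐ[ℤ] Polynomial ℤ :=
    MvPolynomial.aeval (fun i : Fin k => (Polynomial.X : Polynomial ℤ) ^ (i : ℕ)) with hφt
  -- image of the determinant under x_i = t^i
  have hdetT : φt ((Matrix.of fun i j : Fin k => (X i : MvPolynomial (Fin k) ℤ) ^ (β j)).det)
      = ∏ i : Fin k, ∏ j ∈ Finset.Ioi i,
          ((Polynomial.X : Polynomial ℤ) ^ (β j) - Polynomial.X ^ (β i)) := by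
    rw [AlgHom.map_det, AlgHom.mapMatrix_apply]
    have hmat : ((Matrix.of fun i j : Fin k => (X i : MvPolynomial (Fin k) ℤ) ^ (β j)).map φt)
        = (Matrix.vandermonde (fun i : Fin k => (Polynomial.X : Polynomial ℤ) ^ (β i)))ᵀ := by
      ext i j
      simp only [Matrix.map_apply, Matrix.of_apply, map_pow, MvPolynomial.aeval_X, hφt,
        Matrix.transpose_apply, Matrix.vandermonde_apply, ← pow_mul]
      rw [Nat.mul_comm]
    rw [hmat, Matrix.det_transpose, Matrix.det_vandermonde]
  -- image of the Vandermonde product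
  have hVT : φt (∏ i : Fin k, ∏ j ∈ Finset.Ioi i, (X j - X i : MvPolynomial (Fin k) ℤ))
      = ∏ i : Fin k, ∏ j ∈ Finset.Ioi i,
          ((Polynomial.X : Polynomial ℤ) ^ (j : ℕ) - Polynomial.X ^ (i : ℕ)) := by
    rw [map_prod]
    apply Finset.prod_congr rfl
    intro i _
    rw [map_prod]
    apply Finset.prod_congr rfl
    intro j _
    simp [hφt]
  have hQt := congrArg φt hQ
  rw [_root_.map_mul, hdetT, hVT, my_nested_factor β hβmono,
    my_nested_factor (fun i : Fin k => (i : ℕ)) Fin.val_strictMono] at hQt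
  set W : Polynomial ℤ := ∏ i : Fin k, ∏ j ∈ Finset.Ioi i, (Polynomial.X - 1 : Polynomial ℤ) with hW
  have hW0 : W ≠ 0 := by
    rw [hW]
    apply Finset.prod_ne_zero_iff.mpr
    intro i _
    apply Finset.prod_ne_zero_iff.mpr
    intro j _
    simpa using Polynomial.X_sub_C_ne_zero (1 : ℤ)
  rw [mul_assoc] at hQt
  have hGH := mul_left_cancel₀ hW0 hQt
  -- evaluate at 1
  have hev := congrArg (Polynomial.eval (1:ℤ)) hGH
  rw [Polynomial.eval_mul, my_eval_one_nested β, my_eval_one_nested (fun i : Fin k => (i : ℕ))] at hev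
  set q : ℤ := Polynomial.eval 1 (φt Q) with hq
  have hqdvd : q ∣ ∏ i : Fin k, ∏ j ∈ Finset.Ioi i, ((β j - β i : ℕ) : ℤ) := by
    rw [hev]; exact Dvd.intro_left _ rfl
  have hpq : ¬ ((p:ℤ) ∣ q) := fun h =>
    my_not_dvd_nested p β hβmono hβ (h.trans hqdvd)
  -- the one-variable polynomial z
  set φz : MvPolynomial (Fin k) ℤ →ₐ[ℤ] Polynomial ℤ :=
    MvPolynomial.aeval (fun i : Fin k => (Polynomial.X : Polynomial ℤ) ^ (α i)) with hφz
  set z : Polynomial ℤ := φz Q with hz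
  have hz1 : Polynomial.eval 1 z = q := by
    rw [hz, hq]
    have e1 : Polynomial.eval (1:ℤ) (φz Q) = (Polynomial.aeval (1:ℤ)).comp φz Q := by
      simp [Polynomial.coe_aeval_eq_eval]
    have e2 : Polynomial.eval (1:ℤ) (φt Q) = (Polynomial.aeval (1:ℤ)).comp φt Q := by
      simp [Polynomial.coe_aeval_eq_eval]
    rw [e1, e2, hφz, hφt, MvPolynomial.comp_aeval, MvPolynomial.comp_aeval]
    simp
  -- complex evaluation
  intro hdet0
  set ψ : MvPolynomial (Fin k) ℤ →ₐ[ℤ] ℂ :=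
    MvPolynomial.aeval (fun i : Fin k => ω ^ (α i)) with hψ
  have hψD : ψ ((Matrix.of fun i j : Fin k => (X i : MvPolynomial (Fin k) ℤ) ^ (β j)).det)
      = (Matrix.of fun i j : Fin k => ω ^ (α i * β j)).det := by
    rw [AlgHom.map_det, AlgHom.mapMatrix_apply]
    congr 1
    ext i j
    simp only [Matrix.map_apply, Matrix.of_apply, map_pow, MvPolynomial.aeval_X, hψ, ← pow_mul]
  have hψV : ψ (∏ i : Fin k, ∏ j ∈ Finset.Ioi i, (X j - X i : MvPolynomial (Fin k) ℤ)) ≠ 0 := by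
    rw [map_prod]
    apply Finset.prod_ne_zero_iff.mpr
    intro i _
    rw [map_prod]
    apply Finset.prod_ne_zero_iff.mpr
    intro j hj
    rw [map_sub, hψ, MvPolynomial.aeval_X, MvPolynomial.aeval_X, sub_ne_zero]
    intro hcon
    have := hω.pow_inj (hα j) (hα i) hcon
    exact absurd (hαinj this) (ne_of_gt (Finset.mem_Ioi.mp hj))
  have hψQ : ψ Q = 0 := by
    have := congrArg ψ hQ
    rw [_root_.map_mul, hψD, hdet0] at this
    rcases mul_eq_zero.mp this.symm with h | h
    · exact absurd h hψV
    · exact h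
  have haev : Polynomial.aeval ω z = 0 := by
    have e1 : Polynomial.aeval ω (φz Q) = ((Polynomial.aeval ω).comp φz) Q := rfl
    rw [hz, e1, hφz, MvPolynomial.comp_aeval]
    have e2 : (fun i : Fin k => Polynomial.aeval ω ((Polynomial.X : Polynomial ℤ) ^ (α i)))
        = fun i : Fin k => ω ^ (α i) := by
      funext i; simp
    rw [e2, ← hψ, hψQ]
  have hint : IsIntegral ℤ ω := hω.isIntegral hp.out.pos
  have hdvdz : minpoly ℤ ω ∣ z := minpoly.isIntegrallyClosed_dvd hint haev
  rw [← Polynomial.cyclotomic_eq_minpoly hω hp.out.pos] at hdvdz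
  have := Polynomial.eval_dvd (x := (1:ℤ)) hdvdz
  rw [Polynomial.eval_one_cyclotomic_prime, hz1] at this
  exact hpq this
end AuxUncertainty

/-- Uncertainty principle for cyclic groups of prime order: for a nonzero `f : ℤ/pℤ → ℂ`,
`|supp f| + |supp f̂| ≥ p + 1`, where `f̂(χ) = (1/p) ∑ a, f a * conj (χ a)`. -/
theorem uncertainty_zmod (p : ℕ) [Fact p.Prime] (f : ZMod p → ℂ) (hf : f ≠ 0) :
    p + 1 ≤
      (Function.support f).ncard +
      (Function.support (fun χ : AddChar (ZMod p) ℂ =>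
        (∑ a : ZMod p, f a * (starRingEnd ℂ) (χ a)) / (p : ℂ))).ncard := by
  classical
  have hpp : p.Prime := Fact.out
  haveI : NeZero p := ⟨hpp.ne_zero⟩
  by_contra hcon
  push_neg at hcon
  rw [Nat.lt_succ_iff] at hcon
  set ω : ℂ := Complex.exp (2 * Real.pi * Complex.I / p) with hωdef
  have hω : IsPrimitiveRoot ω p := Complex.isPrimitiveRoot_exp p hpp.ne_zero
  -- every character is conjugate-represented by a power of ω
  have hchar : ∀ χ : AddChar (ZMod p) ℂ, ∃ e : ℕ, e < p ∧
      ∀ a : ZMod p, (starRingEnd ℂ) (χ a) = ω ^ (a.val * e) := by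
    intro χ
    have hζp : (χ 1) ^ p = 1 := by
      rw [← AddChar.map_nsmul_eq_pow]
      have h0 : (p • (1 : ZMod p)) = 0 := by
        simp [nsmul_eq_mul]
      rw [h0, AddChar.map_zero_eq_one]
    obtain ⟨c, hcp, hc⟩ := hω.eq_pow_of_pow_eq_one hζp
    refine ⟨(-(c : ZMod p)).val, ZMod.val_lt _, fun a => ?_⟩
    have hχa : χ a = ω ^ (c * a.val) := by
      have h1 : a = a.val • (1 : ZMod p) := by
        simp [nsmul_eq_mul, ZMod.natCast_zmod_val]
      conv_lhs => rw [h1]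
      rw [AddChar.map_nsmul_eq_pow, ← hc, ← pow_mul, Nat.mul_comm]
    have hmul : ω ^ (a.val * (-(c : ZMod p)).val) * χ a = 1 := by
      rw [hχa, ← pow_add]
      apply (hω.pow_eq_one_iff_dvd _).mpr
      have h2 : p ∣ (-(c : ZMod p)).val + c := by
        rw [← ZMod.natCast_eq_zero_iff]
        push_cast [ZMod.natCast_zmod_val]
        ring
      have h3 : a.val * (-(c : ZMod p)).val + c * a.val = a.val * ((-(c : ZMod p)).val + c) := by
        ring
      rw [h3]
      exact Dvd.dvd.mul_left h2 _
    have hconj : (starRingEnd ℂ) (χ a) * χ a = 1 := by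
      have h4 : ringChar (ZMod p) = p := ZMod.ringChar_zmod_n p
      rw [AddChar.starComp_apply (by rw [h4]; exact hpp.pos)]
      rw [AddChar.inv_apply, ← AddChar.map_add_eq_mul]
      simp
    have hne : χ a ≠ 0 := by
      intro h0
      rw [h0, mul_zero] at hconj
      exact zero_ne_one hconj
    exact mul_right_cancel₀ hne (hconj.trans hmul.symm)
  set d : AddChar (ZMod p) ℂ → ℕ := fun χ => (hchar χ).choose with hd
  have hdlt : ∀ χ, d χ < p := fun χ => (hchar χ).choose_spec.1
  have hdspec : ∀ χ (a : ZMod p), (starRingEnd ℂ) (χ a) = ω ^ (a.val * d χ) :=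
    fun χ => (hchar χ).choose_spec.2
  have hdinj : Function.Injective d := by
    intro χ χ' h
    apply DFunLike.ext
    intro a
    have h1 := hdspec χ a
    have h2 := hdspec χ' a
    rw [h] at h1
    exact (starRingEnd ℂ).injective (h1.trans h2.symm)
  -- supports and finsets
  set g : AddChar (ZMod p) ℂ → ℂ :=
    fun χ => (∑ a : ZMod p, f a * (starRingEnd ℂ) (χ a)) / (p : ℂ) with hg
  have hSf : (Function.support f).Finite := Set.toFinite _
  have hSg : (Function.support g).Finite := Set.toFinite _
  set A : Finset (ZMod p) := hSf.toFinset with hA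
  set k : ℕ := A.card with hk
  rw [Set.ncard_eq_toFinset_card _ hSf, Set.ncard_eq_toFinset_card _ hSg] at hcon
  rw [← hA] at hcon
  rw [← hk] at hcon
  -- the zero set of g has at least k elements
  set Z : Finset (AddChar (ZMod p) ℂ) := Finset.univ \ hSg.toFinset with hZ
  have hZcard : k ≤ Z.card := by
    rw [hZ, Finset.card_sdiff_of_subset (Finset.subset_univ _)]
    have hcardAC : Fintype.card (AddChar (ZMod p) ℂ) = p := by
      rw [AddChar.card_eq, ZMod.card]
    rw [Finset.card_univ, hcardAC]
    omega
  obtain ⟨B, hBsub, hBcard⟩ := Finset.exists_subset_card_eq hZcard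
  have hBzero : ∀ χ ∈ B, g χ = 0 := by
    intro χ hχ
    have := hBsub hχ
    rw [hZ, Finset.mem_sdiff, Set.Finite.mem_toFinset] at this
    exact Function.notMem_support.mp this.2
  -- exponents
  set E : Finset ℕ := B.image d with hE
  have hEcard : E.card = k := by
    rw [hE, Finset.card_image_of_injective _ hdinj, hBcard]
  set β : Fin k → ℕ := fun i => ((E.orderIsoOfFin hEcard i : ℕ)) with hβ
  have hβmono : StrictMono β := fun a b hab =>
    Subtype.coe_lt_coe.mpr ((E.orderIsoOfFin hEcard).lt_iff_lt.mpr hab)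
  have hβmem : ∀ j, β j ∈ E := fun j => (E.orderIsoOfFin hEcard j).2
  have hβlt : ∀ j, β j < p := by
    intro j
    obtain ⟨χ, -, hχ⟩ := Finset.mem_image.mp (hβmem j)
    rw [← hχ]
    exact hdlt χ
  -- points of the support
  set eA : Fin k ≃ A := (finCongr hk).trans A.equivFin.symm with heA
  set av : Fin k → ZMod p := fun i => ((eA i : A) : ZMod p) with hav
  have havinj : Function.Injective av := fun a b h =>
    eA.injective (Subtype.coe_injective h)
  have havmem : ∀ i, av i ∈ A := fun i => (eA i).2
  set α : Fin k → ℕ := fun i => (av i).val with hα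
  have hαinj : Function.Injective α := fun a b h =>
    havinj (ZMod.val_injective p h)
  have hαlt : ∀ i, α i < p := fun i => ZMod.val_lt _
  -- the matrix identity
  set M : Matrix (Fin k) (Fin k) ℂ := Matrix.of fun j i => ω ^ (α i * β j) with hM
  set v : Fin k → ℂ := fun i => f (av i) with hv
  have hMv : M.mulVec v = 0 := by
    funext j
    obtain ⟨χ, hχB, hχ⟩ := Finset.mem_image.mp (hβmem j)
    have hsum : ∑ x ∈ A, f x * (starRingEnd ℂ) (χ x) = 0 := by
      have h5 : ∑ x ∈ A, f x * (starRingEnd ℂ) (χ x)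
          = ∑ x : ZMod p, f x * (starRingEnd ℂ) (χ x) := by
        apply Finset.sum_subset (Finset.subset_univ _)
        intro x _ hxA
        have : f x = 0 := by
          by_contra h6
          exact hxA (by rw [hA, Set.Finite.mem_toFinset]; exact h6)
        rw [this, zero_mul]
      rw [h5]
      have h7 := hBzero χ hχB
      rw [hg] at h7
      rcases div_eq_zero_iff.mp h7 with h8 | h8
      · exact h8
      · exact absurd h8 (Nat.cast_ne_zero.mpr hpp.ne_zero)
    have h9 : ∑ x ∈ A, f x * (starRingEnd ℂ) (χ x)
        = ∑ i : Fin k, f (av i) * (starRingEnd ℂ) (χ (av i)) := by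
      rw [← Finset.sum_coe_sort A (fun x => f x * (starRingEnd ℂ) (χ x))]
      exact (Equiv.sum_comp eA
        (fun x : A => f (x : ZMod p) * (starRingEnd ℂ) (χ (x : ZMod p)))).symm
    show ∑ i : Fin k, M j i * v i = 0
    calc ∑ i : Fin k, M j i * v i
        = ∑ i : Fin k, f (av i) * (starRingEnd ℂ) (χ (av i)) := by
          apply Finset.sum_congr rfl
          intro i _
          show ω ^ ((av i).val * β j) * f (av i) = f (av i) * (starRingEnd ℂ) (χ (av i))
          rw [hdspec χ (av i), hχ]
          exact mul_comm _ _
      _ = 0 := by rw [← h9, hsum]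
  have hdet : M.det ≠ 0 := by
    have hMT : M = (Matrix.of fun i j : Fin k => ω ^ (α i * β j)).transpose := by
      ext i j
      rfl
    rw [hMT, Matrix.det_transpose]
    exact my_cheb p α β hαinj hαlt hβmono hβlt
  have hU : IsUnit M := (Matrix.isUnit_iff_isUnit_det M).mpr (isUnit_iff_ne_zero.mpr hdet)
  have hv0 : v = 0 := by
    have hinj := Matrix.mulVec_injective_iff_isUnit.mpr hU
    apply hinj
    rw [hMv, Matrix.mulVec_zero]
  -- contradiction : the support is nonempty
  have hk0 : 0 < k := by
    rw [hk, hA, Finset.card_pos]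
    obtain ⟨x, hx⟩ := Function.support_nonempty_iff.mpr hf
    exact ⟨x, (Set.Finite.mem_toFinset _).mpr hx⟩
  have hmem := havmem ⟨0, hk0⟩
  rw [hA, Set.Finite.mem_toFinset] at hmem
  apply hmem
  show f (av ⟨0, hk0⟩) = 0
  exact congrFun hv0 ⟨0, hk0⟩
end

section
/- Let p be a prime and f = Σ_{i=0}^{p-1} a_i X^i ∈ ℂ[X] a nonzero polynomial of degree < p. Let wt(f) = #{i : a_i ≠ 0} and Z(f) = the number of p-th roots of unity μ in ℂ with f(μ) = 0. Then Z(f) ≤ wt(f) - 1. -/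
open Polynomial

open Finset Matrix


/-- An injective function `Fin k → ℕ` has sum at least `0+1+...+(k-1)`, with equality
only if all values are `< k`. -/
lemma injective_sum_lower {k : ℕ} (φ : Fin k → ℕ) (hφ : Function.Injective φ) :
    (∑ i : Fin k, (i : ℕ)) ≤ ∑ i, φ i ∧
      ((∑ i, φ i) = (∑ i : Fin k, (i : ℕ)) → ∀ i, φ i < k) := by
  classical
  set s : Finset ℕ := Finset.image φ Finset.univ with hs
  have hcard : s.card = k := by
    rw [hs, Finset.card_image_of_injective _ hφ, Finset.card_univ, Fintype.card_fin]
  set e := s.orderIsoOfFin hcard with he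
  have hle' : ∀ n, ∀ i : Fin k, (i : ℕ) = n → n ≤ (e i : ℕ) := by
    intro n
    induction n with
    | zero => intro i _; exact Nat.zero_le _
    | succ n ih =>
      intro i hi
      have hn : n < k := by omega
      have hlt : (⟨n, hn⟩ : Fin k) < i := by simp [Fin.lt_def, hi]
      have h1 : (e ⟨n, hn⟩ : ℕ) < (e i : ℕ) := by exact_mod_cast e.strictMono hlt
      have h2 := ih ⟨n, hn⟩ rfl
      omega
  have hle : ∀ i : Fin k, (i : ℕ) ≤ (e i : ℕ) := fun i => hle' _ i rfl
  have hsum : (∑ i, φ i) = ∑ i : Fin k, (e i : ℕ) := by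
    have h1 : (∑ i, φ i) = ∑ x ∈ s, x := by
      rw [hs, Finset.sum_image (fun x _ y _ h => hφ h)]
    rw [h1]
    rw [← Finset.sum_attach s (fun x => x)]
    exact (Fintype.sum_equiv e.toEquiv _ _ (fun i => rfl)).symm
  constructor
  · rw [hsum]; exact Finset.sum_le_sum (fun i _ => hle i)
  · intro hEq i
    by_contra hge
    push_neg at hge
    have hmem : φ i ∈ s := Finset.mem_image_of_mem φ (Finset.mem_univ i)
    obtain ⟨j, hj⟩ := e.surjective ⟨φ i, hmem⟩
    have hj' : (e j : ℕ) = φ i := by rw [hj]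
    have hjlt : (j : ℕ) < (e j : ℕ) := by
      have : (j : ℕ) < k := j.isLt
      omega
    have : (∑ i : Fin k, (i : ℕ)) < ∑ i : Fin k, (e i : ℕ) :=
      Finset.sum_lt_sum (fun i _ => hle i) ⟨j, Finset.mem_univ j, hjlt⟩
    rw [← hsum, hEq] at this
    exact lt_irrefl _ this

/-- A prime `p` does not divide the Vandermonde-type product of differences of
distinct naturals below `p`. -/
lemma not_dvd_vandermonde_prod {p k : ℕ} (hp : p.Prime) (v : Fin k → ℕ)
    (hv : ∀ i, v i < p) (hinj : Function.Injective v) :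
    ¬ (p : ℤ) ∣ ∏ i : Fin k, ∏ j ∈ Finset.Ioi i, ((v j : ℤ) - (v i : ℤ)) := by
  intro h
  have hpp : Prime (p : ℤ) := Nat.prime_iff_prime_int.mp hp
  obtain ⟨i, -, hi⟩ := hpp.exists_mem_finset_dvd h
  obtain ⟨j, hj, hij⟩ := hpp.exists_mem_finset_dvd hi
  have hne : i ≠ j := (Finset.mem_Ioi.mp hj).ne'.symm
  have habs : ((v j : ℤ) - (v i : ℤ)).natAbs < p := by
    have h1 := hv i; have h2 := hv j; omega
  have hdvd : p ∣ ((v j : ℤ) - (v i : ℤ)).natAbs := by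
    rwa [Int.natCast_dvd] at hij
  have : ((v j : ℤ) - (v i : ℤ)).natAbs = 0 := Nat.eq_zero_of_dvd_of_lt hdvd habs
  have : v j = v i := by omega
  exact hne (hinj this).symm

/-- `p` does not divide the binomial determinant `det (choose (a i) m)` when the `a i`
are distinct naturals below `p` and `k ≤ p`. -/
lemma choose_det_not_dvd {p k : ℕ} (hp : p.Prime) (a : Fin k → ℕ)
    (ha : ∀ i, a i < p) (hinj : Function.Injective a) :
    ¬ (p : ℤ) ∣ (Matrix.of fun i m : Fin k => (Nat.choose (a i) (m : ℕ) : ℤ)).det := by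
  intro h
  have h1 : (Matrix.vandermonde fun i => ((a i : ℤ))).det =
      (Matrix.of fun i m : Fin k => ((descPochhammer ℤ (m : ℕ)).eval (a i : ℤ))).det :=
    Matrix.det_eval_matrixOfPolynomials_eq_det_vandermonde _ _
      (fun i => descPochhammer_natDegree ℤ i) (fun i => monic_descPochhammer ℤ i)
  have h2 : (Matrix.of fun i m : Fin k => ((descPochhammer ℤ (m : ℕ)).eval (a i : ℤ))).det
      = (∏ m : Fin k, (Nat.factorial (m : ℕ) : ℤ)) *
        (Matrix.of fun i m : Fin k => (Nat.choose (a i) (m : ℕ) : ℤ)).det := by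
    have hent : (Matrix.of fun i m : Fin k => ((descPochhammer ℤ (m : ℕ)).eval (a i : ℤ)))
        = Matrix.of fun i m : Fin k =>
            (Nat.factorial (m : ℕ) : ℤ) * (Nat.choose (a i) (m : ℕ) : ℤ) := by
      ext i m
      simp only [Matrix.of_apply]
      rw [descPochhammer_eval_eq_descFactorial ℤ _ _]
      rw [Nat.descFactorial_eq_factorial_mul_choose]
      push_cast; ring
    rw [hent]
    exact Matrix.det_mul_row (fun m : Fin k => ((Nat.factorial (m : ℕ)) : ℤ)) _
  have hdvdV : (p : ℤ) ∣ (Matrix.vandermonde fun i => ((a i : ℤ))).det := by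
    rw [h1, h2]; exact Dvd.dvd.mul_left h _
  rw [Matrix.det_vandermonde] at hdvdV
  exact not_dvd_vandermonde_prod hp a ha hinj hdvdV

/-- Chebotarëv's theorem: minors of the DFT matrix at a primitive `p`-th root of unity,
`p` prime, are nonsingular. -/
lemma chebotarev {p k : ℕ} (hp : p.Prime) {ζ : ℂ} (hζ : IsPrimitiveRoot ζ p)
    (a b : Fin k → ℕ) (ha : ∀ i, a i < p) (hb : ∀ i, b i < p)
    (hainj : Function.Injective a) (hbinj : Function.Injective b) :
    (Matrix.of fun i j : Fin k => ζ ^ (a i * b j)).det ≠ 0 := by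
  classical
  intro hdet0
  haveI : Fact p.Prime := ⟨hp⟩
  have hppos : 0 < p := hp.pos
  have hkp : k ≤ p := by
    have := Fintype.card_le_of_injective (fun i => (⟨a i, ha i⟩ : Fin p))
      (fun i j hij => hainj (by simpa using congrArg Fin.val hij))
    simpa using this
  set C : ℕ := ∑ i : Fin k, (i : ℕ) with hC
  set u : Fin k → ℤ[X] := fun j => X ^ (b j) - 1 with hu
  set g : Fin k → ℤ[X] := fun j => ∑ t ∈ Finset.range (b j), X ^ t with hg
  have hug : ∀ j, u j = (X - 1) * g j := by
    intro j
    rw [hu, hg, mul_comm]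
    exact (geom_sum_mul X (b j)).symm
  -- the matrix of monomials over ℤ[X]
  set Mp : Matrix (Fin k) (Fin k) ℤ[X] := Matrix.of fun i j => (X : ℤ[X]) ^ (a i * b j)
    with hMp
  -- row expansion
  have hrow : ∀ i j, (X : ℤ[X]) ^ (a i * b j)
      = ∑ m : Fin p, (Nat.choose (a i) (m : ℕ) : ℤ[X]) * (u j) ^ (m : ℕ) := by
    intro i j
    have h1 : (X : ℤ[X]) ^ (a i * b j) = (u j + 1) ^ (a i) := by
      rw [hu]
      simp only [sub_add_cancel]
      rw [mul_comm, pow_mul]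
    rw [h1, add_pow]
    simp only [one_pow, mul_one]
    have h2 : ∑ m ∈ Finset.range (a i + 1), (u j) ^ m * ((a i).choose m : ℤ[X])
        = ∑ m ∈ Finset.range p, (u j) ^ m * ((a i).choose m : ℤ[X]) := by
      apply Finset.sum_subset (Finset.range_subset_range.mpr (ha i))
      intro m hm hnm
      have hlt : a i < m := by
        simp only [Finset.mem_range] at hm hnm; omega
      simp [Nat.choose_eq_zero_of_lt hlt]
    rw [h2, ← Fin.sum_univ_eq_sum_range (fun m => (u j) ^ m * ((a i).choose m : ℤ[X])) p]
    exact Finset.sum_congr rfl (fun m _ => by ring)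
  -- determinant expansion over all functions
  have hdet : Mp.det = ∑ φ : Fin k → Fin p,
      (∏ i, (Nat.choose (a i) ((φ i : ℕ)) : ℤ[X])) *
        (Matrix.of fun i j : Fin k => (u j) ^ ((φ i : ℕ))).det := by
    have hM : Mp = fun i => ∑ m : Fin p,
        (Nat.choose (a i) (m : ℕ) : ℤ[X]) • (fun j => (u j) ^ (m : ℕ)) := by
      funext i j
      simp only [hMp, Matrix.of_apply, Finset.sum_apply, Pi.smul_apply, smul_eq_mul]
      exact hrow i j
    set F := (Matrix.detRowAlternating :
        (Fin k → ℤ[X]) [⋀^Fin k]→ₗ[ℤ[X]] ℤ[X]).toMultilinearMap with hF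
    have hdra : Mp.det = F (fun i => ∑ m : Fin p,
        (Nat.choose (a i) (m : ℕ) : ℤ[X]) • (fun j => (u j) ^ (m : ℕ))) := by
      rw [hM]; rfl
    rw [hdra, F.map_sum]
    refine Finset.sum_congr rfl (fun φ _ => ?_)
    rw [F.map_smul_univ]
    rw [smul_eq_mul]
    rfl
  -- the good set of functions
  set P : Finset (Fin k → Fin p) :=
    Finset.univ.filter (fun φ => Function.Injective φ ∧ (∑ i, ((φ i : ℕ))) = C) with hP
  set G0 : Matrix (Fin k) (Fin k) ℤ[X] := Matrix.of fun m j : Fin k => (g j) ^ (m : ℕ)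
    with hG0
  set U : Matrix (Fin k) (Fin k) ℤ[X] := Matrix.of fun m j : Fin k => (u j) ^ (m : ℕ)
    with hU
  have hUdet : U.det = (X - 1) ^ C * G0.det := by
    have h1 : U = Matrix.of fun m j : Fin k =>
        ((X - 1 : ℤ[X]) ^ (m : ℕ)) * ((g j) ^ (m : ℕ)) := by
      ext m j
      simp only [hU, Matrix.of_apply, hug j, mul_pow]
    rw [h1]
    exact (Matrix.det_mul_column (fun m : Fin k => (X - 1 : ℤ[X]) ^ (m : ℕ)) G0).trans
      (congrArg (· * G0.det)
        (Finset.prod_pow_eq_pow_sum Finset.univ (fun m : Fin k => (m : ℕ)) (X - 1 : ℤ[X])))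
  set B0 : Matrix (Fin k) (Fin k) ℤ := Matrix.of fun m i : Fin k =>
    (Nat.choose (a i) (m : ℕ) : ℤ) with hB0
  -- grouping the good terms
  have hgood : ∑ φ ∈ P, (∏ i, (Nat.choose (a i) ((φ i : ℕ)) : ℤ[X])) *
        (Matrix.of fun i j : Fin k => (u j) ^ ((φ i : ℕ))).det
      = ((B0.det : ℤ) : ℤ[X]) * ((X - 1) ^ C * G0.det) := by
    have hPim : P = Finset.image
        (fun σ : Equiv.Perm (Fin k) => fun i => Fin.castLE hkp (σ i)) Finset.univ := by
      ext φ
      simp only [hP, Finset.mem_filter, Finset.mem_univ, true_and, Finset.mem_image]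
      constructor
      · rintro ⟨hinj, hsum⟩
        have hvinj : Function.Injective (fun i => ((φ i : ℕ))) :=
          fun i j h => hinj (Fin.val_injective h)
        have hlt : ∀ i, ((φ i : ℕ)) < k := (injective_sum_lower _ hvinj).2 hsum
        have hbij : Function.Bijective (fun i : Fin k => (⟨(φ i : ℕ), hlt i⟩ : Fin k)) := by
          apply Finite.injective_iff_bijective.mp
          intro i j h
          exact hinj (Fin.val_injective (by simpa using congrArg Fin.val h))
        refine ⟨Equiv.ofBijective _ hbij, ?_⟩
        funext i
        apply Fin.val_injective
        simp [Equiv.ofBijective, Fin.coe_castLE]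
      · rintro ⟨σ, rfl⟩
        refine ⟨fun i j h => σ.injective (Fin.castLE_injective hkp h), ?_⟩
        simp only [Fin.coe_castLE]
        exact Equiv.sum_comp σ (fun i => ((i : Fin k) : ℕ))
    have himinj : ∀ σ ∈ (Finset.univ : Finset (Equiv.Perm (Fin k))),
        ∀ τ ∈ (Finset.univ : Finset (Equiv.Perm (Fin k))),
        (fun i => Fin.castLE hkp (σ i)) = (fun i => Fin.castLE hkp (τ i)) → σ = τ := by
      intro σ _ τ _ h
      ext i : 1
      exact Fin.castLE_injective hkp (congrFun h i)
    rw [hPim, Finset.sum_image himinj]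
    have hB0cast : ((B0.det : ℤ) : ℤ[X]) = ∑ σ : Equiv.Perm (Fin k),
        ((Equiv.Perm.sign σ : ℤ) : ℤ[X]) * ∏ i, (Nat.choose (a i) ((σ i : ℕ)) : ℤ[X]) := by
      rw [Matrix.det_apply, Int.cast_sum]
      refine Finset.sum_congr rfl (fun σ _ => ?_)
      rw [Units.smul_def, zsmul_eq_mul]
      simp only [hB0, Matrix.of_apply]
      push_cast
      ring
    rw [← hUdet, hB0cast, Finset.sum_mul]
    refine Finset.sum_congr rfl (fun σ _ => ?_)
    have h1 : (Matrix.of fun i j : Fin k => (u j) ^ (((σ i) : ℕ))) = U.submatrix σ id := rfl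
    have hterm : (Matrix.of fun i j : Fin k => (u j) ^ (((Fin.castLE hkp (σ i)) : ℕ))).det
        = ((Equiv.Perm.sign σ : ℤ) : ℤ[X]) * U.det := by
      simp only [Fin.coe_castLE, h1, Matrix.det_permute]
    rw [hterm]
    simp only [Fin.coe_castLE]
    ring
  -- the bad terms are divisible by (X-1)^(C+1)
  have hbad : ∀ φ : Fin k → Fin p, φ ∉ P → (X - 1 : ℤ[X]) ^ (C + 1) ∣
      (∏ i, (Nat.choose (a i) ((φ i : ℕ)) : ℤ[X])) *
        (Matrix.of fun i j : Fin k => (u j) ^ ((φ i : ℕ))).det := by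
    intro φ hφ
    by_cases hinj : Function.Injective φ
    · have hvinj : Function.Injective (fun i => ((φ i : ℕ))) :=
        fun i j h => hinj (Fin.val_injective h)
      have hge := (injective_sum_lower _ hvinj).1
      have hne : (∑ i, ((φ i : ℕ))) ≠ C := fun hEq => hφ (by
        rw [hP]; exact Finset.mem_filter.mpr ⟨Finset.mem_univ _, hinj, hEq⟩)
      have hgt : C + 1 ≤ ∑ i, ((φ i : ℕ)) := by
        have hge' : C ≤ ∑ i, ((φ i : ℕ)) := hge
        omega
      have hfac : (Matrix.of fun i j : Fin k => (u j) ^ ((φ i : ℕ))).det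
          = (X - 1) ^ (∑ i, ((φ i : ℕ))) *
            (Matrix.of fun i j : Fin k => (g j) ^ ((φ i : ℕ))).det := by
        have h1 : (Matrix.of fun i j : Fin k => (u j) ^ ((φ i : ℕ)))
            = Matrix.of fun i j : Fin k =>
                ((X - 1 : ℤ[X]) ^ ((φ i : ℕ))) * ((g j) ^ ((φ i : ℕ))) := by
          ext i j
          simp only [Matrix.of_apply, hug j, mul_pow]
        rw [h1]
        exact (Matrix.det_mul_column (fun i : Fin k => (X - 1 : ℤ[X]) ^ ((φ i : ℕ)))
          (Matrix.of fun i j : Fin k => (g j) ^ ((φ i : ℕ)))).trans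
          (congrArg (· * (Matrix.of fun i j : Fin k => (g j) ^ ((φ i : ℕ))).det)
            (Finset.prod_pow_eq_pow_sum Finset.univ (fun i : Fin k => ((φ i : ℕ))) (X - 1 : ℤ[X])))
      rw [hfac]
      exact Dvd.dvd.mul_left (dvd_mul_of_dvd_left (pow_dvd_pow _ hgt) _) _
    · obtain ⟨i, i', heq, hne⟩ := Function.not_injective_iff.mp hinj
      have hz : (Matrix.of fun i j : Fin k => (u j) ^ ((φ i : ℕ))).det = 0 := by
        apply Matrix.det_zero_of_row_eq hne
        funext j
        simp only [Matrix.of_apply, heq]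
      rw [hz, mul_zero]
      exact dvd_zero _
  obtain ⟨R, hR⟩ : (X - 1 : ℤ[X]) ^ (C + 1) ∣
      ∑ φ ∈ Finset.univ \ P, (∏ i, (Nat.choose (a i) ((φ i : ℕ)) : ℤ[X])) *
        (Matrix.of fun i j : Fin k => (u j) ^ ((φ i : ℕ))).det :=
    Finset.dvd_sum (fun φ hφ => hbad φ (Finset.mem_sdiff.mp hφ).2)
  set E : ℤ[X] := ((B0.det : ℤ) : ℤ[X]) * G0.det + (X - 1) * R with hE
  have hfactor : Mp.det = (X - 1) ^ C * E := by
    rw [hdet, ← Finset.sum_sdiff (Finset.subset_univ P), hR, hgood, hE]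
    ring
  -- evaluate at ζ
  have hDeval : (aeval ζ) Mp.det = 0 := by
    have hmap : (aeval ζ) Mp.det = (Mp.map (aeval ζ)).det := RingHom.map_det (aeval ζ).toRingHom Mp
    rw [hmap, ← hdet0]
    congr 1
    ext i j
    simp [hMp]
  have hz1 : (ζ - 1 : ℂ) ≠ 0 := sub_ne_zero.mpr (hζ.ne_one hp.one_lt)
  have hEz : (aeval ζ) E = 0 := by
    rw [hfactor] at hDeval
    simp only [_root_.map_mul, map_pow, _root_.map_sub, aeval_X, _root_.map_one] at hDeval
    rcases mul_eq_zero.mp hDeval with h | h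
    · exact absurd h (pow_ne_zero _ hz1)
    · exact h
  have hdvd : Polynomial.cyclotomic p ℤ ∣ E := by
    rw [Polynomial.cyclotomic_eq_minpoly hζ hppos]
    exact minpoly.isIntegrallyClosed_dvd (hζ.isIntegral hppos) hEz
  obtain ⟨H, hH⟩ := hdvd
  have hpE : (p : ℤ) ∣ E.eval 1 := by
    rw [hH, Polynomial.eval_mul, Polynomial.eval_one_cyclotomic_prime]
    exact Dvd.intro _ rfl
  have hevalE : E.eval 1 = B0.det *
      (∏ i : Fin k, ∏ j ∈ Finset.Ioi i, ((b j : ℤ) - (b i : ℤ))) := by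
    have hG0eval : G0.det.eval 1 = ∏ i : Fin k, ∏ j ∈ Finset.Ioi i, ((b j : ℤ) - (b i : ℤ)) := by
      have h1 : (Polynomial.evalRingHom (1 : ℤ)) G0.det
          = (G0.map (Polynomial.evalRingHom (1 : ℤ))).det :=
        RingHom.map_det (Polynomial.evalRingHom (1 : ℤ)) G0
      have h2 : G0.map (Polynomial.evalRingHom (1 : ℤ))
          = (Matrix.vandermonde fun j => ((b j : ℤ))).transpose := by
        ext m j
        simp [hG0, hg, Matrix.vandermonde, Polynomial.eval_finset_sum]
      have h3 : G0.det.eval 1 = (Polynomial.evalRingHom (1 : ℤ)) G0.det := rfl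
      rw [h3, h1, h2, Matrix.det_transpose, Matrix.det_vandermonde]
    rw [hE]
    simp [Polynomial.eval_add, Polynomial.eval_mul, hG0eval]
  rw [hevalE] at hpE
  rcases (Nat.prime_iff_prime_int.mp hp).dvd_mul.mp hpE with h | h
  · have hBt : B0 = (Matrix.of fun i m : Fin k => (Nat.choose (a i) (m : ℕ) : ℤ)).transpose := by
      ext m i; simp [hB0]
    rw [hBt, Matrix.det_transpose] at h
    exact choose_det_not_dvd hp a ha hainj h
  · exact not_dvd_vandermonde_prod hp b hb hbinj h

/-- For a prime `p` and a nonzero polynomial `f ∈ ℂ[X]` of degree `< p`, the number `Z(f)`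
of `p`-th roots of unity that are roots of `f` satisfies `Z(f) ≤ wt(f) - 1`, where `wt(f)`
is the number of nonzero coefficients of `f`. -/
theorem roots_of_unity_le_weight (p : ℕ) (hp : p.Prime) (f : Polynomial ℂ) (hf : f ≠ 0)
    (hdeg : f.natDegree < p) :
    {μ : ℂ | μ ^ p = 1 ∧ f.eval μ = 0}.ncard + 1 ≤ f.support.card := by
  classical
  by_contra hcon
  push_neg at hcon
  have hcard : f.support.card ≤ {μ : ℂ | μ ^ p = 1 ∧ f.eval μ = 0}.ncard := by omega
  set k := f.support.card with hk
  have hppos : 0 < p := hp.pos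
  set S : Set ℂ := {μ : ℂ | μ ^ p = 1 ∧ f.eval μ = 0} with hS
  have hfin : S.Finite := by
    apply Set.Finite.subset (Polynomial.nthRootsFinset p (1 : ℂ)).finite_toSet
    intro μ hμ
    exact (Polynomial.mem_nthRootsFinset hppos (1 : ℂ)).mpr hμ.1
  have hcard' : k ≤ hfin.toFinset.card := by
    rwa [Set.ncard_eq_toFinset_card S hfin] at hcard
  obtain ⟨t, hts, htcard⟩ := Finset.exists_subset_card_eq hcard'
  -- enumerate the roots
  set ν : Fin k → ℂ := fun i => (t.equivFin.symm (Fin.cast htcard.symm i) : ℂ) with hν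
  have hνinj : Function.Injective ν := by
    intro i j h
    have := t.equivFin.symm.injective (Subtype.ext h)
    have := congrArg Fin.val this
    simpa [Fin.ext_iff] using this
  have hνS : ∀ i, ν i ∈ S := fun i => by
    have := hts (t.equivFin.symm (Fin.cast htcard.symm i)).2
    simpa using hfin.mem_toFinset.mp this
  -- primitive root
  obtain ⟨ζ, hζ⟩ : ∃ ζ : ℂ, IsPrimitiveRoot ζ p :=
    ⟨_, Complex.isPrimitiveRoot_exp p hppos.ne'⟩
  haveI : NeZero p := ⟨hppos.ne'⟩
  have hbex : ∀ i, ∃ m, m < p ∧ ζ ^ m = ν i := by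
    intro i
    obtain ⟨m, hm, hmeq⟩ := hζ.eq_pow_of_pow_eq_one (hνS i).1
    exact ⟨m, hm, hmeq⟩
  choose b hblt hbeq using hbex
  have hbinj : Function.Injective b := by
    intro i j h
    apply hνinj
    rw [← hbeq i, ← hbeq j, h]
  -- enumerate the support
  set a : Fin k → ℕ := fun i => (f.support.orderIsoOfFin hk.symm i : ℕ) with ha'
  have hainj : Function.Injective a := fun i j h =>
    (f.support.orderIsoOfFin hk.symm).injective (Subtype.ext h)
  have hamem : ∀ i, a i ∈ f.support := fun i => (f.support.orderIsoOfFin hk.symm i).2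
  have halt : ∀ i, a i < p := fun i =>
    lt_of_le_of_lt (Polynomial.le_natDegree_of_mem_supp _ (hamem i)) hdeg
  -- support is the image of a
  have hsupp : f.support = Finset.image a Finset.univ := by
    apply (Finset.eq_of_subset_of_card_le ?_ ?_).symm
    · intro x hx
      obtain ⟨i, -, rfl⟩ := Finset.mem_image.mp hx
      exact hamem i
    · rw [Finset.card_image_of_injective _ hainj, Finset.card_univ, Fintype.card_fin]
  -- the matrix and kernel vector
  set M : Matrix (Fin k) (Fin k) ℂ := Matrix.of fun i j => ζ ^ (a i * b j) with hM
  set c : Fin k → ℂ := fun i => f.coeff (a i) with hc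
  have hknz : 0 < k := by
    rw [hk]
    exact Finset.card_pos.mpr (Polynomial.support_nonempty.mpr hf)
  have hcnz : c ≠ 0 := by
    intro h
    have := congrFun h ⟨0, hknz⟩
    exact (Polynomial.mem_support_iff.mp (hamem ⟨0, hknz⟩)) this
  have hker : Matrix.vecMul c M = 0 := by
    funext j
    have heval : f.eval (ν j) = 0 := (hνS j).2
    have hev : f.eval (ν j) = ∑ i : Fin k, f.coeff (a i) * (ν j) ^ (a i) := by
      rw [Polynomial.eval_eq_sum, Polynomial.sum_def, hsupp,
        Finset.sum_image (fun x _ y _ h => hainj h)]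
    rw [Matrix.vecMul, Pi.zero_apply]
    rw [show (dotProduct (fun i => c i) fun i => M i j)
        = ∑ i : Fin k, c i * M i j from rfl]
    rw [← heval, hev]
    refine Finset.sum_congr rfl (fun i _ => ?_)
    rw [hc, hM]
    simp only [Matrix.of_apply]
    rw [← hbeq j, ← pow_mul, mul_comm (b j) (a i)]
  have hdet : M.det = 0 := Matrix.exists_vecMul_eq_zero_iff.mp ⟨c, hcnz, hker⟩
  exact chebotarev hp hζ a b halt hblt hainj hbinj hdet
end

section
/- For each prime p, the ideal I_f of ℂ[X]/(X^p - 1) generated by f = Π_{i=1}^{(p-1)/2} (X - ξ^i), where ξ = e^{2πi/p}, is a cyclic code of length p, dimension (p+1)/2, and minimum distance at least (p+1)/2. -/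
open Polynomial Complex

lemma bch_aux_rsg (g : Polynomial ℂ) (ζ : ℂ) (hζ0 : ζ ≠ 0)
    (hinj : Set.InjOn (fun a => ζ ^ a) g.support)
    (hroots : ∀ i ∈ Finset.Icc 1 g.support.card, g.eval (ζ ^ i) = 0) : g = 0 := by
  by_contra hg
  set S := g.support with hS
  set n := S.card with hn
  set e : Fin n → ℕ := fun j => ((S.equivFin.symm j : {x // x ∈ S}) : ℕ) with he
  have heS : ∀ j, e j ∈ S := fun j => (S.equivFin.symm j).2
  have hein : Function.Injective e := fun a b hab => by
    have := S.equivFin.symm.injective (Subtype.ext hab)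
    exact this
  set v : Fin n → ℂ := fun j => ζ ^ (e j) with hv
  have hvinj : Function.Injective v := fun a b hab =>
    hein (hinj (by exact_mod_cast heS a) (by exact_mod_cast heS b) hab)
  set M : Matrix (Fin n) (Fin n) ℂ := Matrix.of fun i j => v j ^ ((i : ℕ) + 1) with hM
  have hdet : M.det ≠ 0 := by
    have hMeq : M = (Matrix.vandermonde v).transpose * Matrix.diagonal v := by
      ext i j
      rw [Matrix.mul_diagonal]
      simp [hM, Matrix.vandermonde, pow_succ]
    rw [hMeq, Matrix.det_mul, Matrix.det_transpose, Matrix.det_vandermonde,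
      Matrix.det_diagonal]
    refine mul_ne_zero (Finset.prod_ne_zero_iff.mpr fun i _ =>
      Finset.prod_ne_zero_iff.mpr fun j hj => ?_)
      (Finset.prod_ne_zero_iff.mpr fun j _ => pow_ne_zero _ hζ0)
    rw [sub_ne_zero]
    intro hvj
    have := hvinj hvj
    simp only [Finset.mem_Ioi] at hj
    omega
  set c : Fin n → ℂ := fun j => g.coeff (e j) with hc
  have hmul : M.mulVec c = 0 := by
    funext i
    have hi1 : (i : ℕ) + 1 ∈ Finset.Icc 1 n := by
      simp only [Finset.mem_Icc]
      exact ⟨Nat.le_add_left 1 _, i.2⟩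
    have hz := hroots _ hi1
    rw [eval_eq_sum, Polynomial.sum_def] at hz
    have hsum : ∑ j ∈ S, g.coeff j * (ζ ^ ((i : ℕ) + 1)) ^ j
        = ∑ j : Fin n, g.coeff (e j) * (ζ ^ ((i : ℕ) + 1)) ^ (e j) := by
      rw [← Finset.sum_coe_sort S (fun j => g.coeff j * (ζ ^ ((i : ℕ) + 1)) ^ j)]
      exact (Equiv.sum_comp S.equivFin.symm
        (fun x : {x // x ∈ S} => g.coeff x * (ζ ^ ((i : ℕ) + 1)) ^ (x : ℕ))).symm
    simp only [Matrix.mulVec, dotProduct, hM, Matrix.of_apply, hc, hv,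
      Pi.zero_apply]
    calc ∑ j, (ζ ^ (e j)) ^ ((i : ℕ) + 1) * g.coeff (e j)
        = ∑ j : Fin n, g.coeff (e j) * (ζ ^ ((i : ℕ) + 1)) ^ (e j) := by
          refine Finset.sum_congr rfl fun j _ => ?_
          rw [← pow_mul, ← pow_mul, mul_comm (e j) ((i : ℕ) + 1), mul_comm]
      _ = 0 := by rw [← hsum]; exact hz
  have hc0 := Matrix.eq_zero_of_mulVec_eq_zero hdet hmul
  have hne : S.Nonempty := by
    rw [hS, Finset.nonempty_iff_ne_empty, Ne, Polynomial.support_eq_empty]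
    exact hg
  obtain ⟨j0, hj0⟩ := hne
  have : g.coeff j0 = 0 := by
    have h := congrFun hc0 (S.equivFin ⟨j0, hj0⟩)
    simpa [hc, he, Equiv.symm_apply_apply] using h
  exact Polynomial.mem_support_iff.mp hj0 this

/-- For an odd prime `p`, the ideal of `ℂ[X]/(X^p - 1)` generated by
`f = ∏_{i=1}^{(p-1)/2} (X - ξ^i)`, with `ξ = e^{2πi/p}`, is a cyclic code of length `p`,
dimension `(p+1)/2`, whose nonzero elements all have weight at least `(p+1)/2`. -/
theorem reed_solomon_good (p : ℕ) (hp : p.Prime) (hodd : p ≠ 2) :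
    Module.finrank ℂ
      (Ideal.span {Ideal.Quotient.mk (Ideal.span {(X : Polynomial ℂ) ^ p - 1})
        (∏ i ∈ Finset.Icc 1 ((p - 1) / 2),
          (X - C (Complex.exp (2 * Real.pi * Complex.I / p) ^ i)))}) = (p + 1) / 2 ∧
    ∀ g : Polynomial ℂ, g.natDegree < p →
      Ideal.Quotient.mk (Ideal.span {(X : Polynomial ℂ) ^ p - 1}) g ∈
        Ideal.span {Ideal.Quotient.mk (Ideal.span {(X : Polynomial ℂ) ^ p - 1})
          (∏ i ∈ Finset.Icc 1 ((p - 1) / 2),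
            (X - C (Complex.exp (2 * Real.pi * Complex.I / p) ^ i)))} →
      g ≠ 0 → (p + 1) / 2 ≤ g.support.card := by
  have hpos : 0 < p := hp.pos
  obtain ⟨t, ht⟩ : Odd p := hp.odd_of_ne_two hodd
  set ζ : ℂ := Complex.exp (2 * Real.pi * Complex.I / p) with hζdef
  have hζ : IsPrimitiveRoot ζ p := Complex.isPrimitiveRoot_exp p hp.ne_zero
  set k : ℕ := (p - 1) / 2 with hk
  set f : Polynomial ℂ := ∏ i ∈ Finset.Icc 1 k, (X - C (ζ ^ i)) with hf
  set q : Polynomial ℂ := X ^ p - 1 with hq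
  have hqprod : q = ∏ i ∈ Finset.range p, (X - C (ζ ^ i)) := by
    have h := X_pow_sub_C_eq_prod hζ hpos (one_pow p)
    simpa using h
  have hdvd : f ∣ q := by
    rw [hqprod]
    refine Finset.prod_dvd_prod_of_subset _ _ _ ?_
    intro i hi
    simp only [Finset.mem_Icc] at hi
    simp only [Finset.mem_range]
    omega
  have hfmonic : f.Monic := monic_prod_of_monic _ _ fun i _ => monic_X_sub_C _
  have hfne : f ≠ 0 := hfmonic.ne_zero
  have hfdeg : f.natDegree = k := by
    rw [hf, natDegree_prod _ _ fun i _ => X_sub_C_ne_zero _]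
    simp only [natDegree_X_sub_C]
    simp
  have hqdeg : q.natDegree = p := by
    rw [hq]
    have : (X : Polynomial ℂ) ^ p - 1 = X ^ p - C 1 := by simp
    rw [this, natDegree_X_pow_sub_C]
  have hqne : q ≠ 0 := by
    intro h
    rw [h] at hqdeg
    simp at hqdeg
    omega
  constructor
  · -- finrank computation
    have hle : Ideal.span {q} ≤ Ideal.span {f} :=
      Ideal.span_singleton_le_span_singleton.mpr hdvd
    have hmapeq : Ideal.span {Ideal.Quotient.mk (Ideal.span {q}) f}
        = Ideal.map (Ideal.Quotient.mkₐ ℂ (Ideal.span {q})) (Ideal.span {f}) := by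
      rw [Ideal.map_span, Set.image_singleton, Ideal.Quotient.mkₐ_eq_mk]
    rw [hmapeq]
    set I : Ideal (Polynomial ℂ ⧸ Ideal.span {q}) :=
      Ideal.map (Ideal.Quotient.mkₐ ℂ (Ideal.span {q})) (Ideal.span {f}) with hI
    have e1 : ((Polynomial ℂ ⧸ Ideal.span {q}) ⧸ I) ≃ₐ[ℂ] Polynomial ℂ ⧸ Ideal.span {f} :=
      DoubleQuot.quotQuotEquivQuotOfLEₐ ℂ hle
    have finR : Module.finrank ℂ (Polynomial ℂ ⧸ Ideal.span {q}) = p := by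
      have h1 := (AdjoinRoot.powerBasis hqne).finrank
      rwa [AdjoinRoot.powerBasis_dim, hqdeg] at h1
    have finF : Module.finrank ℂ (Polynomial ℂ ⧸ Ideal.span {f}) = k := by
      have h1 := (AdjoinRoot.powerBasis hfne).finrank
      rwa [AdjoinRoot.powerBasis_dim, hfdeg] at h1
    have finQ : Module.finrank ℂ ((Polynomial ℂ ⧸ Ideal.span {q}) ⧸ I) = k := by
      rw [e1.toLinearEquiv.finrank_eq, finF]
    haveI : Module.Finite ℂ (Polynomial ℂ ⧸ Ideal.span {q}) :=
      (AdjoinRoot.powerBasis hqne).finite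
    have hsum := Submodule.finrank_quotient_add_finrank (R := ℂ)
      (M := Polynomial ℂ ⧸ Ideal.span {q}) (I.restrictScalars ℂ)
    have h1 : Module.finrank ℂ ((Polynomial ℂ ⧸ Ideal.span {q}) ⧸ I.restrictScalars ℂ)
        = Module.finrank ℂ ((Polynomial ℂ ⧸ Ideal.span {q}) ⧸ I) :=
      (Submodule.Quotient.restrictScalarsEquiv ℂ I).finrank_eq
    have h2 : Module.finrank ℂ (I.restrictScalars ℂ) = Module.finrank ℂ I :=
      ((Submodule.restrictScalarsEquiv ℂ _ _ I).restrictScalars ℂ).finrank_eq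
    rw [h1, h2, finQ, finR] at hsum
    omega
  · -- distance bound
    intro g hgdeg hmem hgne
    rw [Ideal.mem_span_singleton] at hmem
    obtain ⟨c, hc⟩ := hmem
    obtain ⟨h, rfl⟩ := Ideal.Quotient.mk_surjective c
    rw [← map_mul, Ideal.Quotient.eq, Ideal.mem_span_singleton] at hc
    obtain ⟨u, hu⟩ := hc
    have hg_eq : g = f * h + q * u := by linear_combination hu
    have hroot : ∀ i ∈ Finset.Icc 1 k, g.eval (ζ ^ i) = 0 := by
      intro i hi
      have hfz : f.eval (ζ ^ i) = 0 := by
        rw [hf, eval_prod]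
        exact Finset.prod_eq_zero hi (by simp)
      have hqz : q.eval (ζ ^ i) = 0 := by
        have hone : (ζ ^ i) ^ p = 1 := by
          rw [← pow_mul, mul_comm, pow_mul, hζ.pow_eq_one, one_pow]
        simp [hq, hone]
      rw [hg_eq]
      simp [hfz, hqz]
    by_contra hlt
    push_neg at hlt
    have hcard : g.support.card ≤ k := by omega
    apply hgne
    apply bch_aux_rsg g ζ (Complex.exp_ne_zero _)
    · intro a ha b hb hab
      have ha' : a < p := lt_of_le_of_lt (le_natDegree_of_mem_supp a ha) hgdeg
      have hb' : b < p := lt_of_le_of_lt (le_natDegree_of_mem_supp b hb) hgdeg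
      exact hζ.pow_inj ha' hb' hab
    · intro i hi
      apply hroot
      simp only [Finset.mem_Icc] at hi ⊢
      omega
end

section
/- Let ℓ and p be distinct primes and suppose ℓ is a primitive root modulo p (i.e., ord_p(ℓ) = p - 1). Then for every nonzero f ∈ F_ℓ[X]/(X^p - 1), we have wt(f) + dim(I_f) ≥ p + 1, where I_f is the ideal generated by f. -/
open Polynomial

set_option maxHeartbeats 1000000
set_option synthInstance.maxHeartbeats 400000

lemma aux_finrank {F : Type*} [Field F] [DecidableEq F] (g f : F[X]) (hg0 : g ≠ 0) :
    Module.finrank F (Ideal.span {Ideal.Quotient.mk (Ideal.span {g}) f}) +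
      (EuclideanDomain.gcd f g).natDegree = g.natDegree := by
  classical
  set I₀ : Ideal F[X] := Ideal.span {g} with hI₀
  set d : F[X] := EuclideanDomain.gcd f g with hd
  have hd0 : d ≠ 0 := fun h => hg0 (EuclideanDomain.gcd_eq_zero_iff.mp h).2
  have h1 : Ideal.span {Ideal.Quotient.mk I₀ f} =
      Ideal.map (Ideal.Quotient.mk I₀) (Ideal.span {d}) := by
    rw [hd, EuclideanDomain.span_gcd, Ideal.span_insert, Ideal.map_sup, Ideal.map_span,
      Ideal.map_span]
    simp only [Set.image_singleton]
    have : Ideal.Quotient.mk I₀ g = 0 := Ideal.Quotient.eq_zero_iff_mem.mpr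
      (Ideal.subset_span rfl)
    rw [this, Ideal.span_singleton_eq_bot.mpr rfl, sup_bot_eq]
  have hsup : I₀ ⊔ Ideal.span {d} = Ideal.span {d} := by
    refine sup_eq_right.mpr ?_
    rw [hI₀, Ideal.span_le, Set.singleton_subset_iff]
    exact Ideal.mem_span_singleton.mpr (EuclideanDomain.gcd_dvd_right f g)
  -- finrank of F[X]/span{q} is natDegree q
  have key : ∀ q : F[X], q ≠ 0 →
      Module.finrank F (F[X] ⧸ (Ideal.span {q} : Ideal F[X])) = q.natDegree := by
    intro q hq
    have : Module.finrank F (AdjoinRoot q) = q.natDegree := by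
      rw [(AdjoinRoot.powerBasis hq).finrank, AdjoinRoot.powerBasis_dim]
    exact this
  -- finite dimensionality of the big quotient
  haveI : Module.Finite F (F[X] ⧸ I₀) :=
    Module.Finite.of_basis (AdjoinRoot.powerBasis hg0).basis
  -- the quotient of the quotient
  have e1 : ((F[X] ⧸ I₀) ⧸ Ideal.map (Ideal.Quotient.mk I₀) (Ideal.span {d})) ≃ₐ[F]
      F[X] ⧸ (Ideal.span {d} : Ideal F[X]) := by
    have := DoubleQuot.quotQuotEquivQuotSupₐ F I₀ (Ideal.span {d})
    rw [hsup] at this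
    rw [show Ideal.map (Ideal.Quotient.mk I₀) (Ideal.span {d})
        = Ideal.map (Ideal.Quotient.mkₐ F I₀) (Ideal.span {d}) from rfl]
    exact this
  have hq1 : Module.finrank F ((F[X] ⧸ I₀) ⧸ Ideal.map (Ideal.Quotient.mk I₀) (Ideal.span {d}))
      = d.natDegree := by
    rw [e1.toLinearEquiv.finrank_eq, key d hd0]
  -- relate ideal-quotient finrank with submodule-quotient finrank
  set J : Ideal (F[X] ⧸ I₀) := Ideal.span {Ideal.Quotient.mk I₀ f} with hJ
  have h3 := Submodule.finrank_quotient_add_finrank (J.restrictScalars F)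
  have h4 : Module.finrank F ((F[X] ⧸ I₀) ⧸ J.restrictScalars F)
      = Module.finrank F ((F[X] ⧸ I₀) ⧸ J) :=
    (Submodule.Quotient.restrictScalarsEquiv F J).finrank_eq
  have h5 : Module.finrank F (J.restrictScalars F) = Module.finrank F J := rfl
  have h6 : Module.finrank F (F[X] ⧸ I₀) = g.natDegree := key g hg0
  have h8 : Module.finrank F ((F[X] ⧸ I₀) ⧸ J) = d.natDegree := by
    rw [show J = Ideal.map (Ideal.Quotient.mk I₀) (Ideal.span {d}) from h1]
    exact hq1
  show Module.finrank F J + d.natDegree = g.natDegree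
  omega

lemma aux_irred (ℓ p : ℕ) (hℓ : ℓ.Prime) (hp : p.Prime) (hne : ℓ ≠ p)
    (hprim : orderOf ((ℓ : ZMod p)) = p - 1) :
    Irreducible (cyclotomic p (ZMod ℓ)) := by
  classical
  haveI : Fact ℓ.Prime := ⟨hℓ⟩
  haveI : Fact p.Prime := ⟨hp⟩
  set Φ : (ZMod ℓ)[X] := cyclotomic p (ZMod ℓ) with hΦ
  have hΦdeg : Φ.natDegree = p - 1 := by
    rw [hΦ, natDegree_cyclotomic, Nat.totient_prime hp]
  have hΦne : Φ ≠ 0 := cyclotomic_ne_zero p _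
  have hΦnu : ¬ IsUnit Φ := by
    apply not_isUnit_of_natDegree_pos
    rw [hΦdeg]
    have := hp.two_le
    omega
  obtain ⟨q, hqm, hqi, hqd⟩ := Φ.exists_monic_irreducible_factor hΦnu
  have hq0 : q ≠ 0 := hqm.ne_zero
  haveI : Fact (Irreducible q) := ⟨hqi⟩
  set K := AdjoinRoot q
  haveI : Module.Finite (ZMod ℓ) K :=
    Module.Finite.of_basis (AdjoinRoot.powerBasis hq0).basis
  haveI : Finite K := Module.finite_of_finite (ZMod ℓ)
  haveI : Fintype K := Fintype.ofFinite K
  set m := q.natDegree with hm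
  have hm1 : 1 ≤ m := hqi.natDegree_pos
  have hcard : Fintype.card K = ℓ ^ m := by
    rw [Module.card_eq_pow_finrank (K := ZMod ℓ), ZMod.card,
      (AdjoinRoot.powerBasis hq0).finrank, AdjoinRoot.powerBasis_dim]
  -- the root is a primitive p-th root of unity
  have hpK : (p : K) ≠ 0 := by
    have : (p : ZMod ℓ) ≠ 0 := by
      rw [Ne, ZMod.natCast_eq_zero_iff]
      intro h
      exact hne ((Nat.prime_dvd_prime_iff_eq hℓ hp).mp h)
    simpa using fun h => this ((algebraMap (ZMod ℓ) K).injective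
      (by simpa using h : algebraMap (ZMod ℓ) K (p : ZMod ℓ) = algebraMap (ZMod ℓ) K 0))
  haveI : NeZero (p : K) := ⟨hpK⟩
  have hroot : IsRoot (cyclotomic p K) (AdjoinRoot.root q) := by
    have h1 : (cyclotomic p K) = Polynomial.map (algebraMap (ZMod ℓ) K) Φ := by
      rw [hΦ, map_cyclotomic]
    obtain ⟨c, hc⟩ := hqd
    rw [h1, hc, Polynomial.map_mul, IsRoot, eval_mul]
    have : IsRoot (q.map (algebraMap (ZMod ℓ) K)) (AdjoinRoot.root q) := by
      rw [show algebraMap (ZMod ℓ) K = AdjoinRoot.of q from rfl]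
      exact AdjoinRoot.isRoot_root q
    rw [this.eq_zero, zero_mul]
  have hprimroot : IsPrimitiveRoot (AdjoinRoot.root q) p :=
    (isRoot_cyclotomic_iff).mp hroot
  -- p divides ℓ^m - 1
  have hαne : (AdjoinRoot.root q) ≠ 0 := by
    intro h
    have := hprimroot.pow_eq_one
    rw [h, zero_pow hp.ne_zero] at this
    exact zero_ne_one this
  have hpow : (AdjoinRoot.root q) ^ (Fintype.card K - 1) = 1 :=
    FiniteField.pow_card_sub_one_eq_one _ hαne
  have hdvd : p ∣ ℓ ^ m - 1 := by
    have h2 : orderOf (AdjoinRoot.root q) = p := (hprimroot.eq_orderOf).symm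
    have := orderOf_dvd_of_pow_eq_one hpow
    rwa [h2, hcard] at this
  -- hence p - 1 divides m
  have hℓm : (ℓ : ZMod p) ^ m = 1 := by
    have h1 : 1 ≤ ℓ ^ m := Nat.one_le_pow _ _ hℓ.pos
    have : ((ℓ ^ m - 1 : ℕ) : ZMod p) = 0 := (ZMod.natCast_eq_zero_iff _ _).mpr hdvd
    rw [Nat.cast_sub h1] at this
    push_cast at this
    linear_combination this
  have hdvd2 : p - 1 ∣ m := by
    rw [← hprim]
    exact orderOf_dvd_of_pow_eq_one hℓm
  have hmle : m ≤ p - 1 := by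
    rw [← hΦdeg]
    exact natDegree_le_of_dvd hqd hΦne
  have hmeq : m = p - 1 := Nat.le_antisymm hmle (Nat.le_of_dvd (by omega) hdvd2)
  -- conclude Φ = q
  obtain ⟨c, hc⟩ := hqd
  have hc0 : c ≠ 0 := by rintro rfl; rw [mul_zero] at hc; exact hΦne hc
  have hcdeg : c.natDegree = 0 := by
    have := hΦdeg
    rw [hc, natDegree_mul hq0 hc0] at this
    omega
  have hcmonic : c.Monic := hqm.of_mul_monic_left (hc ▸ (cyclotomic.monic p (ZMod ℓ)))
  have : c = 1 := hcmonic.natDegree_eq_zero.mp hcdeg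
  rw [hc, this, mul_one]
  exact hqi

/-- If `ℓ` is a primitive root modulo the prime `p ≠ ℓ`, then the uncertainty principle
holds for `F_ℓ` and `p`: every nonzero `f ∈ F_ℓ[X]` of degree `< p` satisfies
`wt(f) + dim I_f ≥ p + 1`. -/
theorem uncertainty_of_primitive_root (ℓ p : ℕ) (hℓ : ℓ.Prime) (hp : p.Prime) (hne : ℓ ≠ p)
    (hprim : orderOf ((ℓ : ZMod p)) = p - 1) :
    ∀ f : Polynomial (ZMod ℓ), f ≠ 0 → f.natDegree < p →
      p + 1 ≤ f.support.card +
        Module.finrank (ZMod ℓ)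
          (Ideal.span {Ideal.Quotient.mk
            (Ideal.span {(X : Polynomial (ZMod ℓ)) ^ p - 1}) f}) := by
  classical
  haveI : Fact ℓ.Prime := ⟨hℓ⟩
  haveI : Fact p.Prime := ⟨hp⟩
  intro f hf0 hfdeg
  set g : (ZMod ℓ)[X] := X ^ p - 1 with hg
  have hg0 : g ≠ 0 := by
    have : g.Monic := by
      rw [hg, ← C_1]
      exact monic_X_pow_sub_C 1 hp.ne_zero
    exact this.ne_zero
  have hgdeg : g.natDegree = p := by
    rw [hg, ← C_1, natDegree_X_pow_sub_C]
  set Φ : (ZMod ℓ)[X] := cyclotomic p (ZMod ℓ) with hΦ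
  have hΦdeg : Φ.natDegree = p - 1 := by
    rw [hΦ, natDegree_cyclotomic, Nat.totient_prime hp]
  have hΦne : Φ ≠ 0 := cyclotomic_ne_zero p _
  have hfact : Φ * (X - 1) = g := cyclotomic_prime_mul_X_sub_one (ZMod ℓ) p
  set d : (ZMod ℓ)[X] := EuclideanDomain.gcd f g with hd
  have hdf : d ∣ f := EuclideanDomain.gcd_dvd_left f g
  have hdg : d ∣ g := EuclideanDomain.gcd_dvd_right f g
  have hkey := aux_finrank g f hg0
  rw [hgdeg] at hkey
  rw [← hd] at hkey
  have hddeg : d.natDegree ≤ p - 1 := by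
    have h1 := natDegree_le_of_dvd hdf hf0
    omega
  by_cases hΦf : Φ ∣ f
  · -- f = c • Φ, weight p
    obtain ⟨c, hc⟩ := hΦf
    have hc0 : c ≠ 0 := by rintro rfl; rw [mul_zero] at hc; exact hf0 hc
    have hcdeg : c.natDegree = 0 := by
      have := hfdeg
      rw [hc, natDegree_mul hΦne hc0, hΦdeg] at this
      have := hp.two_le
      omega
    have hca : c = C (c.coeff 0) := eq_C_of_natDegree_eq_zero hcdeg
    have hca0 : c.coeff 0 ≠ 0 := fun h => hc0 (by rw [hca, h, C_0])
    have hsupp : f.support.card = p := by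
      have hcoeffΦ : ∀ n, Φ.coeff n = if n < p then 1 else 0 := by
        intro n
        rw [hΦ, cyclotomic_prime (ZMod ℓ) p, finset_sum_coeff]
        simp only [coeff_X_pow]
        rw [Finset.sum_ite_eq (Finset.range p) n (fun _ => (1 : ZMod ℓ))]
        simp [Finset.mem_range]
      have : f.support = Finset.range p := by
        ext n
        rw [mem_support_iff, hc, hca, mul_comm, coeff_C_mul, hcoeffΦ n]
        by_cases hn : n < p <;> simp [hn, hca0]
      rw [this, Finset.card_range]
    rw [hsupp]
    omega
  · -- Φ does not divide f
    have hΦd : ¬ Φ ∣ d := fun h => hΦf (h.trans hdf)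
    have hco : IsCoprime d Φ :=
      (((aux_irred ℓ p hℓ hp hne hprim).coprime_iff_not_dvd).mpr hΦd).symm
    have hdX : d ∣ X - 1 := by
      refine hco.dvd_of_dvd_mul_left ?_
      rw [hfact]
      exact hdg
    have hX0 : (X - 1 : (ZMod ℓ)[X]) ≠ 0 := by
      rw [← C_1]; exact X_sub_C_ne_zero 1
    have hd1 : d.natDegree ≤ 1 := by
      have := natDegree_le_of_dvd hdX hX0
      rwa [← C_1, natDegree_X_sub_C] at this
    have hcard1 : 1 ≤ f.support.card :=
      Finset.card_pos.mpr (support_nonempty.mpr hf0)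
    rcases Nat.le_one_iff_eq_zero_or_eq_one.mp hd1 with hd0 | hd01
    · omega
    · -- d has degree 1, so f(1) = 0, so weight ≥ 2
      obtain ⟨e, he⟩ := hdX
      have hdne : d ≠ 0 := by
        intro h; rw [h, natDegree_zero] at hd01; exact one_ne_zero hd01.symm
      have he0 : e ≠ 0 := by
        rintro rfl; rw [mul_zero] at he; exact hX0 he
      have hedeg : e.natDegree = 0 := by
        have := congrArg natDegree he
        rw [natDegree_mul hdne he0, ← C_1, natDegree_X_sub_C, hd01] at this
        omega
      have heval : eval 1 e ≠ 0 := by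
        rw [eq_C_of_natDegree_eq_zero hedeg, eval_C]
        intro h
        exact he0 (by rw [eq_C_of_natDegree_eq_zero hedeg, h, C_0])
      have hdeval : eval 1 d = 0 := by
        have := congrArg (eval 1) he
        rw [eval_mul] at this
        simp only [eval_sub, eval_X, eval_one, sub_self] at this
        rcases mul_eq_zero.mp this.symm with h | h
        · exact h
        · exact absurd h heval
      have hfeval : eval 1 f = 0 := by
        obtain ⟨w, hw⟩ := hdf
        rw [hw, eval_mul, hdeval, zero_mul]
      have hcard2 : 2 ≤ f.support.card := by
        by_contra h
        push_neg at h
        have hcc : f.support.card = 1 := by omega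
        obtain ⟨k, b, hb, hfeq⟩ := card_support_eq_one.mp hcc
        rw [hfeq, eval_mul, eval_C, eval_pow, eval_X, one_pow, mul_one] at hfeval
        exact hb hfeval
      omega
end

section
/- Let p be a prime and F a field of characteristic p. For every nonzero polynomial f ∈ F[X] of degree < p, if (X-1)^m divides f then wt(f) > m. Equivalently, wt(f) + dim(I_f) ≥ p + 1 for every nonzero f in F[X]/(X^p - 1). -/
open Polynomial

private lemma wt_gt_of_pow_dvd (p : ℕ) (hp : p.Prime) (F : Type*) [Field F] [CharP F p] :
    ∀ m : ℕ, ∀ f : Polynomial F, f ≠ 0 → f.natDegree < p →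
      ((X : Polynomial F) - 1) ^ m ∣ f → m < f.support.card := by
  intro m
  induction m with
  | zero =>
    intro f hf _ _
    simpa [Finset.card_pos, Polynomial.support_nonempty] using hf
  | succ m ih =>
    intro f hf hdeg hdvd
    -- strip off the power of X
    set k := f.natTrailingDegree with hk
    have hXk : (X : Polynomial F) ^ k ∣ f := by
      rw [Polynomial.X_pow_dvd_iff]
      exact fun d hd => Polynomial.coeff_eq_zero_of_lt_natTrailingDegree hd
    obtain ⟨g, hg⟩ := hXk
    have hgne : g ≠ 0 := by rintro rfl; simp at hg; exact hf hg
    have hg0 : g.coeff 0 ≠ 0 := by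
      have := Polynomial.coeff_X_pow_mul g k 0
      rw [← hg, zero_add] at this
      rw [← this]
      exact Polynomial.coeff_natTrailingDegree_ne_zero.2 hf
    have hcop : IsCoprime (((X : Polynomial F) - 1) ^ (m + 1)) ((X : Polynomial F) ^ k) := by
      have h1 : IsCoprime ((X : Polynomial F) - 1) (X : Polynomial F) :=
        ⟨-1, 1, by ring⟩
      exact h1.pow
    have hdvdg : ((X : Polynomial F) - 1) ^ (m + 1) ∣ g := by
      refine hcop.dvd_of_dvd_mul_left ?_
      rw [← hg]; exact hdvd
    obtain ⟨h, hh⟩ := hdvdg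
    -- derivative
    have hder : ((X : Polynomial F) - 1) ^ m ∣ derivative g := by
      refine ⟨C ((m + 1 : ℕ) : F) * h + ((X : Polynomial F) - 1) * derivative h, ?_⟩
      rw [hh, derivative_mul, derivative_pow, derivative_sub, derivative_X, derivative_one,
        Nat.add_sub_cancel]
      ring
    have hgXm1 : ((X : Polynomial F) - 1) ∣ g :=
      dvd_trans (dvd_pow_self _ (Nat.succ_ne_zero m)) ⟨h, hh⟩
    have hgdeg : g.natDegree ≤ f.natDegree :=
      Polynomial.natDegree_le_of_dvd ⟨X ^ k, by rw [hg]; ring⟩ hf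
    have hderne : derivative g ≠ 0 := by
      intro h0
      have hcoe : ∀ j : ℕ, 1 ≤ j → g.coeff j = 0 := by
        intro j hj
        by_cases hjd : j ≤ g.natDegree
        · have hjp : j < p := lt_of_le_of_lt (hjd.trans hgdeg) hdeg
          have := Polynomial.coeff_derivative g (j - 1)
          rw [h0] at this
          have hj1 : j - 1 + 1 = j := Nat.succ_pred_eq_of_pos hj
          rw [hj1] at this
          have hcast : ((j - 1 : ℕ) : F) + 1 = (j : F) := by
            push_cast [Nat.cast_sub hj]; ring
          rw [hcast] at this
          have hjne : (j : F) ≠ 0 := by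
            intro hc
            have := (CharP.cast_eq_zero_iff F p j).1 hc
            exact absurd (Nat.le_of_dvd hj this) (not_le.2 hjp)
          have := this.symm
          rcases mul_eq_zero.1 this with h' | h'
          · exact h'
          · exact absurd h' hjne
        · exact Polynomial.coeff_eq_zero_of_natDegree_lt (not_le.1 hjd)
      have heval : g.eval 1 = 0 := by
        have := Polynomial.dvd_iff_isRoot.1 (by simpa using hgXm1 : (X : Polynomial F) - C 1 ∣ g)
        simpa [Polynomial.IsRoot] using this
      have : g.eval 1 = g.coeff 0 := by
        rw [Polynomial.eval_eq_sum_range]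
        rw [Finset.sum_eq_single 0]
        · simp
        · intro b _ hb
          rw [hcoe b (Nat.one_le_iff_ne_zero.2 hb)]; ring
        · intro hb; exact absurd (Finset.mem_range.2 (Nat.succ_pos _)) hb
      rw [this] at heval
      exact hg0 heval
    have hderdeg : (derivative g).natDegree < p :=
      lt_of_le_of_lt ((Polynomial.natDegree_derivative_le g).trans
        ((Nat.sub_le _ _).trans hgdeg)) hdeg
    have hIH := ih (derivative g) hderne hderdeg hder
    -- support counting
    have hsub : insert 0 ((derivative g).support.image (· + 1)) ⊆ g.support := by
      intro j hj
      rcases Finset.mem_insert.1 hj with rfl | hj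
      · exact Polynomial.mem_support_iff.2 hg0
      · obtain ⟨i, hi, rfl⟩ := Finset.mem_image.1 hj
        have := Polynomial.mem_support_iff.1 hi
        rw [Polynomial.coeff_derivative] at this
        exact Polynomial.mem_support_iff.2 (left_ne_zero_of_mul this)
    have hcard1 : (derivative g).support.card + 1 ≤ g.support.card := by
      have h0notin : 0 ∉ (derivative g).support.image (· + 1) := by
        simp
      calc (derivative g).support.card + 1
          = ((derivative g).support.image (· + 1)).card + 1 := by
            rw [Finset.card_image_of_injective _ (add_left_injective 1)]
        _ = (insert 0 ((derivative g).support.image (· + 1))).card := by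
            rw [Finset.card_insert_of_notMem h0notin]
        _ ≤ g.support.card := Finset.card_le_card hsub
    have hcard2 : g.support.card ≤ f.support.card := by
      have : g.support.image (· + k) ⊆ f.support := by
        intro j hj
        obtain ⟨i, hi, rfl⟩ := Finset.mem_image.1 hj
        have hc := Polynomial.coeff_X_pow_mul g k i
        rw [← hg] at hc
        exact Polynomial.mem_support_iff.2 (by
          rw [hc]; exact Polynomial.mem_support_iff.1 hi)
      calc g.support.card = (g.support.image (· + k)).card :=
            (Finset.card_image_of_injective _ (add_left_injective k)).symm
        _ ≤ f.support.card := Finset.card_le_card this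
    omega

set_option maxHeartbeats 1000000 in
set_option synthInstance.maxHeartbeats 400000 in
/-- Uncertainty principle in characteristic `p`: over a field `F` of characteristic `p`,
every nonzero `f ∈ F[X]` of degree `< p` with `(X-1)^m ∣ f` satisfies `wt(f) > m`;
equivalently, `wt(f) + dim I_f ≥ p + 1` for every nonzero `f ∈ F[X]/(X^p - 1)`. -/
theorem uncertainty_char_p (p : ℕ) (hp : p.Prime) (F : Type*) [Field F] [CharP F p] :
    (∀ f : Polynomial F, f ≠ 0 → f.natDegree < p →
      ∀ m : ℕ, ((X : Polynomial F) - 1) ^ m ∣ f → m < f.support.card) ∧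
    (∀ f : Polynomial F, f ≠ 0 → f.natDegree < p →
      p + 1 ≤ f.support.card +
        Module.finrank F
          (Ideal.span {Ideal.Quotient.mk
            (Ideal.span {(X : Polynomial F) ^ p - 1}) f})) := by
  have hfact : Fact p.Prime := ⟨hp⟩
  have part1 : ∀ f : Polynomial F, f ≠ 0 → f.natDegree < p →
      ∀ m : ℕ, ((X : Polynomial F) - 1) ^ m ∣ f → m < f.support.card :=
    fun f hf hd m hdvd => wt_gt_of_pow_dvd p hp F m f hf hd hdvd
  refine ⟨part1, ?_⟩
  intro f hf hdeg
  set m := f.rootMultiplicity 1 with hm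
  set u := f /ₘ ((X : Polynomial F) - C 1) ^ m with hu
  have hfu : ((X : Polynomial F) - C 1) ^ m * u = f :=
    Polynomial.pow_mul_divByMonic_rootMultiplicity_eq f 1
  have hu1 : u.eval 1 ≠ 0 := Polynomial.eval_divByMonic_pow_rootMultiplicity_ne_zero 1 hf
  have hC1 : (C 1 : Polynomial F) = 1 := map_one C
  have hmwt : m < f.support.card := by
    refine part1 f hf hdeg m ?_
    rw [← hC1]
    exact Polynomial.pow_rootMultiplicity_dvd f 1
  have hmdeg : m ≤ f.natDegree := by
    have := Polynomial.natDegree_le_of_dvd (Polynomial.pow_rootMultiplicity_dvd f 1) hf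
    rwa [Polynomial.natDegree_pow, Polynomial.natDegree_X_sub_C, mul_one] at this
  have hmp : m < p := lt_of_le_of_lt hmdeg hdeg
  -- the quotient ring
  set J : Ideal (Polynomial F) := Ideal.span {(X : Polynomial F) ^ p - 1} with hJ
  have hXpne : (X : Polynomial F) ^ p - 1 ≠ 0 := by
    have := Polynomial.monic_X_pow_sub_C (1 : F) hp.ne_zero
    rw [hC1] at this
    exact this.ne_zero
  haveI hfinQ : Module.Finite F (Polynomial F ⧸ J) := by
    have pb := AdjoinRoot.powerBasis hXpne
    exact Module.Finite.of_basis pb.basis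
  have hXp1 : (X : Polynomial F) ^ p - 1 = ((X : Polynomial F) - 1) ^ p := by
    rw [sub_pow_char]; simp
  set I : Ideal (Polynomial F ⧸ J) := Ideal.span {Ideal.Quotient.mk J f} with hI
  -- linear map from degreeLT F (p - m) to I
  let L : Polynomial F →ₗ[F] (Polynomial F ⧸ J) :=
    (Ideal.Quotient.mkₐ F J).toLinearMap ∘ₗ LinearMap.mulLeft F f
  have hmem : ∀ h : Polynomial F, L h ∈ I := by
    intro h
    refine Ideal.mem_span_singleton.2 ⟨Ideal.Quotient.mk J h, ?_⟩
    simp only [L, LinearMap.comp_apply, LinearMap.mulLeft_apply,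
      Ideal.Quotient.mkₐ_eq_mk, AlgHom.toLinearMap_apply]
    rw [← map_mul]
  let ψ : (Polynomial.degreeLT F (p - m)) →ₗ[F] (I.restrictScalars F) :=
    (L ∘ₗ (Polynomial.degreeLT F (p - m)).subtype).codRestrict
      (I.restrictScalars F) (fun h => hmem h.1)
  have hψinj : Function.Injective ψ := by
    intro a b hab
    have : L a.1 = L b.1 := congrArg Subtype.val hab
    have hsub : L (a.1 - b.1) = 0 := by rw [map_sub, this, sub_self]
    have hker : ∀ h : Polynomial F, h ∈ Polynomial.degreeLT F (p - m) → L h = 0 → h = 0 := by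
      intro h hhmem hL
      by_contra hhne
      have : Ideal.Quotient.mk J (f * h) = 0 := by
        simpa [L, LinearMap.comp_apply] using hL
      have hdvd1 : ((X : Polynomial F) ^ p - 1) ∣ f * h :=
        Ideal.mem_span_singleton.1 (Ideal.Quotient.eq_zero_iff_mem.1 this)
      rw [hXp1, ← hC1] at hdvd1
      have hdvd2 : ((X : Polynomial F) - C 1) ^ p ∣
          ((X : Polynomial F) - C 1) ^ m * (u * h) := by
        rw [← mul_assoc, hfu]; exact hdvd1
      have hsplit : ((X : Polynomial F) - C 1) ^ p =
          ((X : Polynomial F) - C 1) ^ m * ((X : Polynomial F) - C 1) ^ (p - m) := by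
        rw [← pow_add, Nat.add_sub_cancel' hmp.le]
      have hXsne : ((X : Polynomial F) - C 1) ^ m ≠ 0 :=
        pow_ne_zero _ (Polynomial.X_sub_C_ne_zero 1)
      have hdvd3 : ((X : Polynomial F) - C 1) ^ (p - m) ∣ u * h := by
        rw [hsplit] at hdvd2
        exact (mul_dvd_mul_iff_left hXsne).1 hdvd2
      have hnotdvd : ¬ ((X : Polynomial F) - C 1) ∣ u := by
        intro hc
        exact hu1 (Polynomial.dvd_iff_isRoot.1 hc)
      have hdvd4 : ((X : Polynomial F) - C 1) ^ (p - m) ∣ h :=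
        (Polynomial.prime_X_sub_C (1 : F)).pow_dvd_of_dvd_mul_left _ hnotdvd hdvd3
      have hdle := Polynomial.natDegree_le_of_dvd hdvd4 hhne
      rw [Polynomial.natDegree_pow, Polynomial.natDegree_X_sub_C, mul_one] at hdle
      have hdlt : h.degree < ((p - m : ℕ) : WithBot ℕ) := Polynomial.mem_degreeLT.1 hhmem
      have : h.natDegree < p - m := (Polynomial.natDegree_lt_iff_degree_lt hhne).2 hdlt
      omega
    have : a.1 - b.1 = 0 :=
      hker _ (Submodule.sub_mem _ a.2 b.2) hsub
    exact Subtype.ext (sub_eq_zero.1 this)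
  have hrank : p - m ≤ Module.finrank F (I.restrictScalars F) := by
    have h1 : Module.finrank F (Polynomial.degreeLT F (p - m)) = p - m := by
      rw [(Polynomial.degreeLTEquiv F (p - m)).finrank_eq, Module.finrank_fin_fun]
    calc p - m = Module.finrank F (Polynomial.degreeLT F (p - m)) := h1.symm
      _ ≤ Module.finrank F (I.restrictScalars F) :=
          LinearMap.finrank_le_finrank_of_injective hψinj
  have hfinal : Module.finrank F I = Module.finrank F (I.restrictScalars F) := rfl
  rw [hfinal]
  omega
end

section
/- For every field F of characteristic 0 and every prime p, and every nonzero f ∈ F[X] of degree < p, we have wt(f) + dim(I_f) ≥ p + 1, where I_f is the ideal generated by f in F[X]/(X^p - 1). -/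
open Polynomial

namespace Unc

section MvStuff
open MvPolynomial


variable {σ R : Type*} [CommRing R] [DecidableEq σ]

/-- substitution X j ↦ X i -/
noncomputable def subst (i j : σ) : MvPolynomial σ R →ₐ[R] MvPolynomial σ R :=
  MvPolynomial.aeval (Function.update MvPolynomial.X j (MvPolynomial.X i))

@[simp] lemma subst_X_self (i j : σ) : subst (R := R) i j (X j) = X i := by
  simp [subst]

@[simp] lemma subst_X_ne (i j : σ) {k : σ} (h : k ≠ j) :
    subst (R := R) i j (X k) = X k := by
  simp [subst, Function.update_of_ne h]

lemma sub_dvd_sub_subst (i j : σ) (P : MvPolynomial σ R) :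
    (X j - X i : MvPolynomial σ R) ∣ P - subst i j P := by
  induction P using MvPolynomial.induction_on with
  | C a => simp [subst]
  | add p q hp hq =>
      have h := dvd_add hp hq
      have heq : p + q - subst i j (p + q)
          = (p - subst i j p) + (q - subst i j q) := by
        rw [map_add]; ring
      rwa [heq]
  | mul_X p k hp =>
      have hXk : (X j - X i : MvPolynomial σ R) ∣ (X k - subst i j (X k)) := by
        rcases eq_or_ne k j with rfl | h
        · simp
        · simp [h]
      have key : p * X k - subst i j (p * X k)
          = p * (X k - subst i j (X k)) + (subst i j (X k)) * (p - subst i j p) := by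
        rw [map_mul]; ring
      rw [key]
      exact dvd_add (Dvd.dvd.mul_left hXk p) (Dvd.dvd.mul_left hp _)

lemma dvd_of_subst_eq_zero (i j : σ) (P : MvPolynomial σ R)
    (h : subst i j P = 0) : (X j - X i : MvPolynomial σ R) ∣ P := by
  have := sub_dvd_sub_subst i j P
  rwa [h, sub_zero] at this


lemma prime_X_sub_X {σ R : Type*} [CommRing R] [IsDomain R] [DecidableEq σ] {i j : σ}
    (h : i ≠ j) : Prime (X j - X i : MvPolynomial σ R) := by
  let e : Option {k : σ // k ≠ j} ≃ σ := Equiv.optionSubtypeNe j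
  let φ : MvPolynomial σ R ≃ₐ[R] Polynomial (MvPolynomial {k : σ // k ≠ j} R) :=
    (MvPolynomial.renameEquiv R e.symm).trans (MvPolynomial.optionEquivLeft R _)
  rw [show Prime (X j - X i : MvPolynomial σ R) ↔ _ from (MulEquiv.prime_iff φ.toMulEquiv).symm]
  have hj : φ (X j) = Polynomial.X := by
    simp only [φ, AlgEquiv.trans_apply, MvPolynomial.renameEquiv_apply, rename_X]
    rw [show e.symm j = none from Equiv.optionSubtypeNe_symm_self j]
    exact optionEquivLeft_X_none R _
  have hi : φ (X i) = Polynomial.C (X ⟨i, h⟩) := by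
    simp only [φ, AlgEquiv.trans_apply, MvPolynomial.renameEquiv_apply, rename_X]
    rw [Equiv.optionSubtypeNe_symm_of_ne h]
    exact optionEquivLeft_X_some R _ _
  show Prime (φ (X j - X i))
  rw [map_sub, hj, hi]
  exact Polynomial.prime_X_sub_C _

lemma prod_primes_dvd'' {α ι : Type*} [CommMonoidWithZero α] [IsCancelMulZero α] (s : Finset ι) (f : ι → α)
    (n : α) (hp : ∀ i ∈ s, Prime (f i)) (hdvd : ∀ i ∈ s, f i ∣ n)
    (hne : ∀ i ∈ s, ∀ j ∈ s, i ≠ j → ¬ (f i ∣ f j)) : (∏ i ∈ s, f i) ∣ n := by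
  classical
  induction s using Finset.induction generalizing n with
  | empty => simp
  | @insert a s ha ih =>
      obtain ⟨m, rfl⟩ := hdvd a (Finset.mem_insert_self a s)
      rw [Finset.prod_insert ha]
      have hm : ∀ i ∈ s, f i ∣ m := by
        intro i hi
        have hia : i ≠ a := by rintro rfl; exact ha hi
        have h1 : f i ∣ f a * m := hdvd i (Finset.mem_insert_of_mem hi)
        have h2 : ¬ f i ∣ f a :=
          hne i (Finset.mem_insert_of_mem hi) a (Finset.mem_insert_self a s) hia
        rcases (hp i (Finset.mem_insert_of_mem hi)).2.2 _ _ h1 with h | h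
        · exact absurd h h2
        · exact h
      exact mul_dvd_mul_left (f a)
        (ih m (fun i hi => hp i (Finset.mem_insert_of_mem hi)) hm
          (fun i hi j hj => hne i (Finset.mem_insert_of_mem hi) j (Finset.mem_insert_of_mem hj)))

/-- the set of ordered pairs -/
def pairs (n : ℕ) : Finset (Σ _ : Fin n, Fin n) :=
  Finset.univ.sigma fun i : Fin n => Finset.Ioi i

lemma mem_pairs {n : ℕ} {x : Σ _ : Fin n, Fin n} : x ∈ pairs n ↔ x.1 < x.2 := by
  simp [pairs]

noncomputable def vmonde (n : ℕ) : MvPolynomial (Fin n) ℤ :=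
  ∏ x ∈ pairs n, (X x.2 - X x.1)

noncomputable def gdet (n : ℕ) (b : Fin n → ℕ) : MvPolynomial (Fin n) ℤ :=
  Matrix.det (Matrix.of fun i j : Fin n => (X i : MvPolynomial (Fin n) ℤ) ^ (b j))

lemma pair_not_dvd {n : ℕ} {x y : Σ _ : Fin n, Fin n} (hx : x.1 < x.2) (hy : y.1 < y.2)
    (hxy : x ≠ y) :
    ¬ ((X x.2 - X x.1 : MvPolynomial (Fin n) ℤ) ∣ (X y.2 - X y.1)) := by
  obtain ⟨x1, x2⟩ := x
  obtain ⟨y1, y2⟩ := y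
  simp only at hx hy
  intro hdvd
  have hw : ∃ w : Fin n, (w = y1 ∨ w = y2) ∧ w ≠ x1 ∧ w ≠ x2 := by
    by_cases h1 : y1 = x1
    · subst h1
      have h2 : y2 ≠ x2 := by
        intro h; exact hxy (by rw [h])
      exact ⟨y2, Or.inr rfl, (lt_of_lt_of_le hy le_rfl).ne', h2⟩
    · by_cases h2 : y1 = x2
      · subst h2
        exact ⟨y2, Or.inr rfl, (hx.trans hy).ne', hy.ne'⟩
      · exact ⟨y1, Or.inl rfl, h1, h2⟩
  obtain ⟨w, hmem, hw1, hw2⟩ := hw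
  classical
  set v : Fin n → ℤ := fun m => if m = w then 1 else 0 with hv
  have h0 : MvPolynomial.aeval v ((X x2 - X x1 : MvPolynomial (Fin n) ℤ)) = 0 := by
    simp [hv, Ne.symm hw1, Ne.symm hw2]
  have h1 : MvPolynomial.aeval v ((X y2 - X y1 : MvPolynomial (Fin n) ℤ)) ≠ 0 := by
    rcases hmem with rfl | rfl
    · have : y2 ≠ w := hy.ne'
      simp [hv, this]
    · have : y1 ≠ w := hy.ne
      simp [hv, this]
  have := map_dvd (MvPolynomial.aeval v) hdvd
  rw [h0, zero_dvd_iff] at this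
  exact h1 this

lemma vmonde_dvd_gdet (n : ℕ) (b : Fin n → ℕ) : vmonde n ∣ gdet n b := by
  classical
  refine prod_primes_dvd'' _ _ _ ?_ ?_ ?_
  · rintro ⟨i, j⟩ hij
    exact prime_X_sub_X (mem_pairs.mp hij).ne
  · rintro ⟨i, j⟩ hij
    have hij' : i < j := mem_pairs.mp hij
    apply dvd_of_subst_eq_zero i j
    rw [gdet, AlgHom.map_det]
    apply Matrix.det_zero_of_row_eq hij'.ne
    funext k
    simp only [AlgHom.mapMatrix_apply, Matrix.map_apply, Matrix.of_apply, map_pow]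
    rw [subst_X_self, subst_X_ne i j hij'.ne]
  · rintro x hx y hy hne
    exact pair_not_dvd (mem_pairs.mp hx) (mem_pairs.mp hy) hne

lemma X_pow_sub_X_pow (c d : ℕ) (h : d < c) :
    (Polynomial.X ^ c - Polynomial.X ^ d : Polynomial ℤ) =
      (Polynomial.X - 1) *
        (Polynomial.X ^ d * ∑ k ∈ Finset.range (c - d), Polynomial.X ^ k) := by
  have hg := geom_sum_mul (Polynomial.X : Polynomial ℤ) (c - d)
  have hd : d + (c - d) = c := Nat.add_sub_cancel' h.le
  calc (Polynomial.X ^ c - Polynomial.X ^ d : Polynomial ℤ)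
      = Polynomial.X ^ d * (Polynomial.X ^ (c - d) - 1) := by
        rw [mul_sub, ← pow_add, hd, mul_one]
    _ = Polynomial.X ^ d *
          ((∑ k ∈ Finset.range (c - d), Polynomial.X ^ k) * (Polynomial.X - 1)) := by rw [hg]
    _ = _ := by ring

lemma aeval_one_qfactor (c d : ℕ) (h : d < c) :
    Polynomial.aeval (1 : ℤ)
        ((Polynomial.X : Polynomial ℤ) ^ d * ∑ k ∈ Finset.range (c - d), Polynomial.X ^ k)
      = (c : ℤ) - d := by
  simp [Nat.cast_sub h.le]

lemma key_int (n : ℕ) (b : Fin n → ℕ) (hb : StrictMono b) (s : MvPolynomial (Fin n) ℤ)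
    (hs : gdet n b = vmonde n * s) :
    (∏ x ∈ pairs n, ((b x.2 : ℤ) - (b x.1 : ℤ)))
      = (∏ x ∈ pairs n, (((x.2 : ℕ) : ℤ) - ((x.1 : ℕ) : ℤ)))
        * MvPolynomial.aeval (fun _ => (1:ℤ)) s := by
  classical
  set θ : MvPolynomial (Fin n) ℤ →ₐ[ℤ] Polynomial ℤ :=
    MvPolynomial.aeval (fun i : Fin n => (Polynomial.X : Polynomial ℤ) ^ (i : ℕ)) with hθ
  have happ := congrArg θ hs
  have hL : θ (gdet n b) =
      ∏ x ∈ pairs n, ((Polynomial.X : Polynomial ℤ) ^ (b x.2) - Polynomial.X ^ (b x.1)) := by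
    rw [gdet, AlgHom.map_det]
    have hm : (θ.mapMatrix (Matrix.of fun i j : Fin n =>
        (X i : MvPolynomial (Fin n) ℤ) ^ (b j))) =
        Matrix.transpose
          (Matrix.vandermonde (fun j : Fin n => (Polynomial.X : Polynomial ℤ) ^ (b j))) := by
      refine Matrix.ext fun i j => ?_
      simp only [AlgHom.mapMatrix_apply, Matrix.map_apply, Matrix.of_apply, map_pow,
        Matrix.transpose_apply, Matrix.vandermonde, hθ, MvPolynomial.aeval_X]
      rw [← pow_mul, ← pow_mul, mul_comm]
    rw [hm, Matrix.det_transpose, Matrix.det_vandermonde, Finset.prod_sigma']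
    rfl
  have hR : θ (vmonde n * s) =
      (∏ x ∈ pairs n, ((Polynomial.X : Polynomial ℤ) ^ ((x.2 : ℕ)) - Polynomial.X ^ ((x.1 : ℕ))))
        * θ s := by
    rw [map_mul, vmonde, map_prod]
    congr 1
    refine Finset.prod_congr rfl fun x hx => ?_
    simp [hθ]
  rw [hL, hR] at happ
  have hb' : ∀ x ∈ pairs n, b x.1 < b x.2 := fun x hx => hb (mem_pairs.mp hx)
  have hi' : ∀ x ∈ pairs n, ((x.1 : ℕ)) < ((x.2 : ℕ)) := fun x hx => mem_pairs.mp hx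
  have e1 : (∏ x ∈ pairs n,
        ((Polynomial.X : Polynomial ℤ) ^ (b x.2) - Polynomial.X ^ (b x.1)))
      = (Polynomial.X - 1) ^ (pairs n).card *
        ∏ x ∈ pairs n, ((Polynomial.X : Polynomial ℤ) ^ (b x.1) *
          ∑ k ∈ Finset.range (b x.2 - b x.1), Polynomial.X ^ k) := by
    rw [Finset.prod_congr rfl (fun x hx => X_pow_sub_X_pow _ _ (hb' x hx)),
      Finset.prod_mul_distrib, Finset.prod_const]
  have e2 : (∏ x ∈ pairs n,
        ((Polynomial.X : Polynomial ℤ) ^ ((x.2 : ℕ)) - Polynomial.X ^ ((x.1 : ℕ))))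
      = (Polynomial.X - 1) ^ (pairs n).card *
        ∏ x ∈ pairs n, ((Polynomial.X : Polynomial ℤ) ^ ((x.1 : ℕ)) *
          ∑ k ∈ Finset.range ((x.2 : ℕ) - (x.1 : ℕ)), Polynomial.X ^ k) := by
    rw [Finset.prod_congr rfl (fun x hx => X_pow_sub_X_pow _ _ (hi' x hx)),
      Finset.prod_mul_distrib, Finset.prod_const]
  rw [e1, e2, mul_assoc] at happ
  have hX1 : ((Polynomial.X - 1 : Polynomial ℤ)) ^ (pairs n).card ≠ 0 := by
    apply pow_ne_zero
    simpa using Polynomial.X_sub_C_ne_zero (1 : ℤ)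
  have hcan := mul_left_cancel₀ hX1 happ
  have heval := congrArg (Polynomial.aeval (1 : ℤ)) hcan
  rw [map_mul, map_prod, map_prod,
      Finset.prod_congr rfl (fun x hx => aeval_one_qfactor _ _ (hb' x hx)),
      Finset.prod_congr rfl (fun x hx => aeval_one_qfactor _ _ (hi' x hx))] at heval
  have hbridge : Polynomial.aeval (1:ℤ) (θ s)
      = MvPolynomial.aeval (fun _ : Fin n => (1:ℤ)) s := by
    rw [hθ, MvPolynomial.comp_aeval_apply]
    simp only [map_pow, Polynomial.aeval_X, one_pow]
  rw [heval, hbridge]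

end MvStuff

theorem cheb {K : Type*} [Field K] [CharZero K] {p n : ℕ} (hp : p.Prime) {ζ : K}
    (hζ : IsPrimitiveRoot ζ p) {a b : Fin n → ℕ} (ha : StrictMono a) (hb : StrictMono b)
    (hap : ∀ i, a i < p) (hbp : ∀ i, b i < p) :
    (Matrix.of fun i j : Fin n => ζ ^ (a i * b j)).det ≠ 0 := by
  classical
  haveI := Fact.mk hp
  obtain ⟨s, hs⟩ := vmonde_dvd_gdet n b
  set N : ℤ := MvPolynomial.aeval (fun _ : Fin n => (1:ℤ)) s with hN
  have hkey := key_int n b hb s hs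
  have hpN : ¬ ((p:ℤ) ∣ N) := by
    intro hdvd
    have hprod : (p:ℤ) ∣ ∏ x ∈ pairs n, ((b x.2 : ℤ) - (b x.1 : ℤ)) := by
      rw [hkey]; exact Dvd.dvd.mul_left hdvd _
    have hprime : Prime (p:ℤ) := Nat.prime_iff_prime_int.mp hp
    obtain ⟨x, hx, hxd⟩ := hprime.exists_mem_finset_dvd hprod
    have hblt := hb (mem_pairs.mp hx)
    have hbub := hbp x.2
    have h1 : 0 < (b x.2 : ℤ) - (b x.1 : ℤ) := by omega
    have hle := Int.le_of_dvd h1 hxd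
    push_cast at hle
    omega
  -- evaluate the factorization at powers of ζ
  have hev := congrArg (MvPolynomial.aeval (fun i : Fin n => ζ ^ (a i))) hs
  rw [map_mul] at hev
  have hgd : MvPolynomial.aeval (fun i : Fin n => ζ ^ (a i)) (gdet n b)
      = (Matrix.of fun i j : Fin n => ζ ^ (a i * b j)).det := by
    rw [gdet, AlgHom.map_det]
    congr 1
    refine Matrix.ext fun i j => ?_
    simp only [AlgHom.mapMatrix_apply, Matrix.map_apply, Matrix.of_apply, map_pow,
      MvPolynomial.aeval_X]
    rw [← pow_mul]
  have hvm : MvPolynomial.aeval (fun i : Fin n => ζ ^ (a i)) (vmonde n) ≠ 0 := by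
    rw [vmonde, map_prod]
    apply Finset.prod_ne_zero_iff.mpr
    intro x hx
    have hlt := mem_pairs.mp hx
    have hne : ζ ^ (a x.2) ≠ ζ ^ (a x.1) := by
      intro h
      exact (ha hlt).ne' (hζ.pow_inj (hap x.2) (hap x.1) h)
    simpa [sub_eq_zero] using hne
  intro hdet0
  rw [hgd, hdet0] at hev
  have has : MvPolynomial.aeval (fun i : Fin n => ζ ^ (a i)) s = 0 := by
    rcases mul_eq_zero.mp hev.symm with h | h
    · exact absurd h hvm
    · exact h
  set S : Polynomial ℤ :=
    MvPolynomial.aeval (fun i : Fin n => (Polynomial.X : Polynomial ℤ) ^ (a i)) s with hS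
  have hSζ : Polynomial.aeval ζ S = 0 := by
    rw [hS, MvPolynomial.comp_aeval_apply]
    simp only [map_pow, Polynomial.aeval_X]
    exact has
  have hmin : Polynomial.cyclotomic p ℤ ∣ S := by
    have h1 : Polynomial.aeval ζ (S.map (algebraMap ℤ ℚ)) = 0 := by
      rw [Polynomial.aeval_map_algebraMap]
      exact hSζ
    have h2 := minpoly.dvd ℚ ζ h1
    rw [← Polynomial.cyclotomic_eq_minpoly_rat hζ hp.pos,
      ← Polynomial.map_cyclotomic_int p ℚ, ← algebraMap_int_eq] at h2
    exact (Polynomial.map_dvd_map (algebraMap ℤ ℚ)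
      (by rw [algebraMap_int_eq]; exact Int.cast_injective)
      (Polynomial.cyclotomic.monic p ℤ)).mp h2
  have hpN' : (p:ℤ) ∣ N := by
    obtain ⟨m, hm⟩ := hmin
    have heval := congrArg (Polynomial.aeval (1:ℤ)) hm
    rw [map_mul] at heval
    have hc : Polynomial.aeval (1:ℤ) (Polynomial.cyclotomic p ℤ) = (p:ℤ) := by
      rw [show (Polynomial.aeval (1:ℤ) : Polynomial ℤ → ℤ) = Polynomial.eval 1 from
        Polynomial.coe_aeval_eq_eval 1]
      exact Polynomial.eval_one_cyclotomic_prime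
    have hNS : Polynomial.aeval (1:ℤ) S = N := by
      rw [hS, MvPolynomial.comp_aeval_apply]
      simp only [map_pow, Polynomial.aeval_X, one_pow]
      exact hN.symm
    rw [hNS, hc] at heval
    exact ⟨_, heval⟩
  exact hpN hpN'

theorem card_lt_support {K : Type*} [Field K] [CharZero K] {p : ℕ} (hp : p.Prime) {ζ : K}
    (hζ : IsPrimitiveRoot ζ p) {f : Polynomial K} (hf : f ≠ 0) (hdeg : f.natDegree < p)
    (s : Finset ℕ) (hs : ∀ x ∈ s, x < p) (hroot : ∀ x ∈ s, f.eval (ζ ^ x) = 0) :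
    s.card < f.support.card := by
  classical
  by_contra hle
  push_neg at hle
  obtain ⟨s', hs's, hs'card⟩ := Finset.exists_subset_card_eq hle
  set t := f.support.card with ht
  let a : Fin t ↪o ℕ := s'.orderEmbOfFin hs'card
  let b : Fin t ↪o ℕ := f.support.orderEmbOfFin rfl
  have hbp : ∀ j, b j < p := fun j =>
    lt_of_le_of_lt (Polynomial.le_natDegree_of_mem_supp _ (f.support.orderEmbOfFin_mem rfl j)) hdeg
  have hap : ∀ i, a i < p := fun i => hs _ (hs's (s'.orderEmbOfFin_mem hs'card i))
  have hdet := cheb hp hζ a.strictMono b.strictMono hap hbp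
  set M := Matrix.of fun i j : Fin t => ζ ^ (a i * b j) with hM
  set c : Fin t → K := fun j => f.coeff (b j) with hc
  have hcne : c ≠ 0 := by
    have htpos : 0 < t := Finset.card_pos.mpr (Polynomial.support_nonempty.mpr hf)
    intro h
    have := congrFun h ⟨0, htpos⟩
    exact Polynomial.mem_support_iff.mp (f.support.orderEmbOfFin_mem rfl ⟨0, htpos⟩) this
  have hmv : M.mulVec c = 0 := by
    funext i
    have heval : f.eval (ζ ^ a i) = 0 := hroot _ (hs's (s'.orderEmbOfFin_mem hs'card i))
    have hsum : f.eval (ζ ^ a i) = ∑ j : Fin t, f.coeff (b j) * (ζ ^ a i) ^ (b j) := by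
      rw [Polynomial.eval_eq_sum, Polynomial.sum_def, ← Finset.sum_attach]
      exact (Equiv.sum_comp (f.support.orderIsoOfFin rfl).toEquiv
        (fun x => f.coeff x * (ζ ^ a i) ^ (x : ℕ))).symm
    rw [Matrix.mulVec, Pi.zero_apply]
    rw [heval] at hsum
    show ∑ j : Fin t, M i j * c j = 0
    rw [hsum]
    refine Finset.sum_congr rfl fun j _ => ?_
    simp only [hM, hc, Matrix.of_apply, pow_mul]
    ring
  exact hdet (Matrix.exists_mulVec_eq_zero_iff.mp ⟨c, hcne, hmv⟩)

theorem dvd_deg_lt_wt {F : Type*} [Field F] [CharZero F] {p : ℕ} (hp : p.Prime)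
    {f g : Polynomial F} (hf : f ≠ 0) (hdeg : f.natDegree < p)
    (hgq : g ∣ (X : Polynomial F) ^ p - 1) (hgf : g ∣ f) :
    g.natDegree < f.support.card := by
  classical
  haveI : NeZero p := ⟨hp.ne_zero⟩
  set q : Polynomial F := X ^ p - 1 with hqdef
  have hq1 : q = X ^ p - C 1 := by rw [hqdef, map_one]
  have hqmonic : q.Monic := by rw [hq1]; exact monic_X_pow_sub_C 1 hp.ne_zero
  have hq0 : q ≠ 0 := hqmonic.ne_zero
  have hqdeg : q.natDegree = p := by rw [hq1, natDegree_X_pow_sub_C]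
  have hqsep : q.Separable := by
    rw [hq1]
    exact separable_X_pow_sub_C 1 (by exact_mod_cast hp.ne_zero) one_ne_zero
  set L := q.SplittingField
  set φ := algebraMap F L with hφ
  have hsplits : Splits (q.map φ) := SplittingField.splits q
  set qL := q.map φ with hqL
  have hqL0 : qL ≠ 0 := Polynomial.map_ne_zero hq0
  have hqLsplits : Splits qL := hsplits
  have hqLsep : qL.Separable := hqsep.map
  have h4 : qL = (X ^ p - 1 : Polynomial L) := by
    show (X ^ p - 1 : Polynomial F).map φ = _
    simp only [Polynomial.map_sub, Polynomial.map_pow, Polynomial.map_X, Polynomial.map_one]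
  have hroots_pow : ∀ μ ∈ qL.roots, μ ^ p = 1 := by
    intro μ hμ
    have h3 := (mem_roots hqL0).mp hμ
    rw [h4, IsRoot.def, eval_sub, eval_pow, eval_X, eval_one, sub_eq_zero] at h3
    exact h3
  have hcard : Multiset.card qL.roots = p := by
    have h := hsplits.natDegree_eq_card_roots
    rw [hqL, natDegree_map, hqdeg] at h
    rw [hqL]
    exact h.symm
  obtain ⟨ζ, hζ⟩ : ∃ ζ : L, IsPrimitiveRoot ζ p := by
    have hnodup : qL.roots.Nodup := nodup_roots hqLsep
    obtain ⟨α, hα, β, hβ, hαβ⟩ := Finset.one_lt_card.mp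
      (show 1 < qL.roots.toFinset.card by
        rw [Multiset.toFinset_card_of_nodup hnodup, hcard]; exact hp.one_lt)
    rw [Multiset.mem_toFinset] at hα hβ
    have hβ0 : β ≠ 0 := by
      intro h
      have := hroots_pow β hβ
      rw [h] at this
      simp [hp.ne_zero] at this
    set ζ := α / β with hζdef
    have hζp : ζ ^ p = 1 := by
      rw [hζdef, div_pow, hroots_pow α hα, hroots_pow β hβ]
      simp
    have hζ1 : ζ ≠ 1 := by
      rw [hζdef]
      intro h
      exact hαβ ((div_eq_one_iff_eq hβ0).mp h)
    have hord : orderOf ζ = p := by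
      have hdvd : orderOf ζ ∣ p := orderOf_dvd_of_pow_eq_one hζp
      rcases (Nat.Prime.eq_one_or_self_of_dvd hp _ hdvd) with h | h
      · exact absurd (orderOf_eq_one_iff.mp h) hζ1
      · exact h
    exact ⟨ζ, hord ▸ IsPrimitiveRoot.orderOf ζ⟩
  have hg0 : g ≠ 0 := fun h => hf (by simpa [h] using hgf)
  set gL := g.map φ with hgL
  have hgL0 : gL ≠ 0 := Polynomial.map_ne_zero hg0
  have hgLq : gL ∣ qL := Polynomial.map_dvd φ hgq
  have hgLsplits : Splits gL := hqLsplits.of_dvd hqL0 hgLq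
  have hgLsep : gL.Separable := hqLsep.of_dvd hgLq
  have hgcard : Multiset.card gL.roots = g.natDegree := by
    have h := hgLsplits.natDegree_eq_card_roots
    rw [← h, hgL, natDegree_map]
  set s : Finset ℕ := (Finset.range p).filter (fun x => gL.eval (ζ ^ x) = 0) with hsdef
  have hscard : s.card = g.natDegree := by
    rw [← hgcard, ← Multiset.toFinset_card_of_nodup (nodup_roots hgLsep)]
    apply Finset.card_bij (fun x _ => ζ ^ x)
    · intro x hx
      rw [hsdef] at hx
      simp only [Finset.mem_filter] at hx
      rw [Multiset.mem_toFinset, mem_roots hgL0]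
      exact hx.2
    · intro x hx y hy hxy
      rw [hsdef] at hx hy
      simp only [Finset.mem_filter, Finset.mem_range] at hx hy
      exact hζ.pow_inj hx.1 hy.1 hxy
    · intro μ hμ
      rw [Multiset.mem_toFinset] at hμ
      have hμq : μ ^ p = 1 := by
        apply hroots_pow
        exact Multiset.mem_of_le (Polynomial.roots.le_of_dvd hqL0 hgLq) hμ
      obtain ⟨i, hip, hi⟩ := hζ.eq_pow_of_pow_eq_one hμq
      refine ⟨i, ?_, hi⟩
      rw [hsdef]
      simp only [Finset.mem_filter, Finset.mem_range]
      exact ⟨hip, by rw [hi]; exact (mem_roots hgL0).mp hμ⟩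
  set fL := f.map φ with hfL
  have hfL0 : fL ≠ 0 := Polynomial.map_ne_zero hf
  have hfLdeg : fL.natDegree < p := by rw [hfL, natDegree_map]; exact hdeg
  have hfLsupp : fL.support.card = f.support.card := by
    rw [hfL, Polynomial.support_map_of_injective f φ.injective]
  have hroots : ∀ x ∈ s, fL.eval (ζ ^ x) = 0 := by
    intro x hx
    rw [hsdef] at hx
    simp only [Finset.mem_filter] at hx
    obtain ⟨h1, h2⟩ := hx
    obtain ⟨c, hc⟩ := Polynomial.map_dvd φ hgf
    rw [hfL, hc, eval_mul, show eval (ζ ^ x) (g.map φ) = 0 from by rw [← hgL]; exact h2,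
      zero_mul]
  have hmain := card_lt_support hp hζ hfL0 hfLdeg s
    (fun x hx => by rw [hsdef] at hx; exact Finset.mem_range.mp (Finset.mem_filter.mp hx).1)
    hroots
  rw [hscard, hfLsupp] at hmain
  exact hmain

lemma finrank_quot {F : Type*} [Field F] (h : Polynomial F) (hh : h ≠ 0) :
    Module.finrank F (Polynomial F ⧸ Ideal.span {h}) = h.natDegree := by
  have := (AdjoinRoot.powerBasis hh).finrank
  exact this

lemma finite_quot {F : Type*} [Field F] (h : Polynomial F) (hh : h ≠ 0) :
    Module.Finite F (Polynomial F ⧸ Ideal.span {h}) :=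
  (AdjoinRoot.powerBasis hh).finite


end Unc

set_option synthInstance.maxHeartbeats 1000000 in
set_option maxHeartbeats 2000000 in
/-- Uncertainty principle over fields of characteristic zero: for every prime `p` and every
nonzero `f ∈ F[X]` of degree `< p`, `wt(f) + dim I_f ≥ p + 1`, where `I_f` is the ideal
generated by `f` in `F[X]/(X^p - 1)`. -/
theorem uncertainty_char_zero (F : Type*) [Field F] [CharZero F] (p : ℕ) (hp : p.Prime) :
    ∀ f : Polynomial F, f ≠ 0 → f.natDegree < p →
      p + 1 ≤ f.support.card +
        Module.finrank F
          (Ideal.span {Ideal.Quotient.mk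
            (Ideal.span {(X : Polynomial F) ^ p - 1}) f}) := by
  intro f hf hdeg
  classical
  set q : Polynomial F := X ^ p - 1 with hq
  set I : Ideal (Polynomial F) := Ideal.span {q} with hI
  have hq1 : q = X ^ p - C 1 := by rw [hq, map_one]
  have hqmonic : q.Monic := by rw [hq1]; exact monic_X_pow_sub_C 1 hp.ne_zero
  have hq0 : q ≠ 0 := hqmonic.ne_zero
  have hqdeg : q.natDegree = p := by rw [hq1, natDegree_X_pow_sub_C]
  set g := EuclideanDomain.gcd q f with hg
  have hgq : g ∣ q := EuclideanDomain.gcd_dvd_left q f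
  have hgf : g ∣ f := EuclideanDomain.gcd_dvd_right q f
  have hg0 : g ≠ 0 := fun h => hf (by simpa [h] using hgf)
  have hwt : g.natDegree < f.support.card := Unc.dvd_deg_lt_wt hp hf hdeg (hq ▸ hgq) hgf
  have hdegg : g.natDegree ≤ p := by
    have := Polynomial.natDegree_le_of_dvd hgq hq0
    omega
  set J : Ideal (Polynomial F ⧸ I) := Ideal.span {Ideal.Quotient.mk I f} with hJ
  haveI : Module.Finite F (Polynomial F ⧸ I) := Unc.finite_quot q hq0
  have e1 : Module.finrank F (Polynomial F ⧸ I) = p := by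
    rw [hI, Unc.finrank_quot q hq0, hqdeg]
  have hsup : I ⊔ Ideal.span {f} = Ideal.span {g} := by
    rw [hI, hg, EuclideanDomain.span_gcd, Ideal.span_insert]
  have hmap : (Ideal.span {f}).map (Ideal.Quotient.mkₐ F I) = J := by
    rw [Ideal.map_span, Set.image_singleton, hJ, Ideal.Quotient.mkₐ_eq_mk]
  have e2 : Module.finrank F ((Polynomial F ⧸ I) ⧸ J) = g.natDegree := by
    rw [← hmap]
    rw [((DoubleQuot.quotQuotEquivQuotSupₐ F I (Ideal.span {f})).trans
      (Ideal.quotientEquivAlgOfEq F hsup)).toLinearEquiv.finrank_eq]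
    exact Unc.finrank_quot g hg0
  have e3 := Submodule.finrank_quotient_add_finrank (R := F) (M := Polynomial F ⧸ I)
    (J.restrictScalars F)
  have q1 : Module.finrank F ((Polynomial F ⧸ I) ⧸ J.restrictScalars F)
      = Module.finrank F ((Polynomial F ⧸ I) ⧸ J) :=
    (Submodule.Quotient.restrictScalarsEquiv F J).finrank_eq
  have q2 : Module.finrank F (J.restrictScalars F) = Module.finrank F J :=
    ((Submodule.restrictScalarsEquiv F (Polynomial F ⧸ I) (Polynomial F ⧸ I) J).restrictScalars
      F).finrank_eq
  rw [q1, q2, e1, e2] at e3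
  omega
end

section
/- Let F = F_ℓ be a finite field of prime order ℓ, and suppose there exist real numbers 0 < ε < δ < 1 and an infinite set P of primes such that for every p ∈ P: (1) every nonzero f ∈ F[X]/(X^p - 1) satisfies wt(f) + dim(I_f) > δp, and (2) ord_p(ℓ) < εp. Then for each p ∈ P there exists an ideal I_p ⊆ F[X]/(X^p - 1) with dim(I_p) ≥ εp/2 and such that every nonzero h ∈ I_p has wt(h) > (δ - ε)p; i.e., there is an infinite family of cyclic codes over F with rate ≥ ε/2 and relative distance ≥ δ - ε. -/
open Polynomial

section Helpers

variable {F : Type*} [Field F]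

lemma geomsum_coeff (p k : ℕ) :
    ((Finset.range p).sum fun i => (X : F[X]) ^ i).coeff k = if k < p then 1 else 0 := by
  rw [finset_sum_coeff]
  simp only [coeff_X_pow]
  rw [Finset.sum_ite_eq (Finset.range p) k fun _ => (1 : F)]
  simp [Finset.mem_range]

lemma geomsum_support (p : ℕ) :
    ((Finset.range p).sum fun i => (X : F[X]) ^ i).support = Finset.range p := by
  ext k
  rw [mem_support_iff, geomsum_coeff, Finset.mem_range]
  by_cases h : k < p <;> simp [h]

lemma geomsum_natDegree {p : ℕ} (hp : 0 < p) :
    ((Finset.range p).sum fun i => (X : F[X]) ^ i).natDegree = p - 1 := by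
  apply le_antisymm
  · rw [natDegree_le_iff_coeff_eq_zero]
    intro k hk
    rw [geomsum_coeff, if_neg (by omega)]
  · apply le_natDegree_of_ne_zero
    rw [geomsum_coeff, if_pos (by omega)]
    exact one_ne_zero

end Helpers

lemma exists_sub_multiset {α : Type*} (w : α → ℕ) (a b : ℝ) (hb : 0 ≤ b) (hab : 2 * a ≤ b) :
    ∀ t : Multiset α, (∀ d ∈ t, (w d : ℝ) ≤ b) → a ≤ ((t.map w).sum : ℝ) →
      ∃ u ≤ t, a ≤ ((u.map w).sum : ℝ) ∧ ((u.map w).sum : ℝ) ≤ b := by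
  intro t
  induction t using Multiset.induction_on with
  | empty =>
    intro _ ha
    exact ⟨0, le_refl _, by simpa using ha, by simpa using hb⟩
  | cons d t ih =>
    intro hle ha
    by_cases hda : a ≤ (w d : ℝ)
    · exact ⟨{d}, by simpa using Multiset.singleton_le.mpr (Multiset.mem_cons_self d t),
        by simpa using hda, by simpa using hle d (Multiset.mem_cons_self d t)⟩
    · push_neg at hda
      by_cases hta : a ≤ ((t.map w).sum : ℝ)
      · obtain ⟨u, hu, h1, h2⟩ := ih (fun x hx => hle x (Multiset.mem_cons_of_mem hx)) hta
        exact ⟨u, le_trans hu (Multiset.le_cons_self t d), h1, h2⟩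
      · push_neg at hta
        refine ⟨d ::ₘ t, le_refl _, ?_, ?_⟩
        · simpa using ha
        · have : (((d ::ₘ t).map w).sum : ℝ) = (w d : ℝ) + ((t.map w).sum : ℝ) := by
            push_cast [Multiset.map_cons, Multiset.sum_cons]; ring
          rw [this]; linarith

set_option maxHeartbeats 1000000
set_option synthInstance.maxHeartbeats 400000

lemma finrank_restrictScalars_ideal {F A : Type*} [Field F] [CommRing A] [Algebra F A]
    (I : Ideal A) :
    Module.finrank F (I.restrictScalars F) = Module.finrank F I :=
  LinearEquiv.finrank_eq ((Submodule.restrictScalarsEquiv F A A I).restrictScalars F)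

lemma finrank_ideal_span_mk {F : Type*} [Field F] (m g c : F[X]) (hg : g ≠ 0) (hc : c ≠ 0)
    (hm : m = g * c) :
    Module.finrank F
      (Ideal.span {Ideal.Quotient.mk (Ideal.span {m}) g} :
        Ideal (F[X] ⧸ Ideal.span {m})) = c.natDegree := by
  subst hm
  set m : F[X] := g * c with hm
  let ψ : F[X] →ₗ[F] (F[X] ⧸ Ideal.span {m}) :=
    (Ideal.Quotient.mkₐ F (Ideal.span {m})).toLinearMap.comp
      (LinearMap.mulRight F g)
  have hrange : LinearMap.range ψ =
      (Ideal.span {Ideal.Quotient.mk (Ideal.span {m}) g}).restrictScalars F := by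
    ext x
    simp only [LinearMap.mem_range, Submodule.restrictScalars_mem, Ideal.mem_span_singleton]
    constructor
    · rintro ⟨u, rfl⟩
      exact ⟨Ideal.Quotient.mk _ u, by simp [ψ, mul_comm]⟩
    · rintro ⟨y, rfl⟩
      obtain ⟨u, rfl⟩ := Ideal.Quotient.mk_surjective y
      exact ⟨u, by simp [ψ, mul_comm]⟩
  have hker : LinearMap.ker ψ = (Ideal.span {c}).restrictScalars F := by
    ext u
    simp only [LinearMap.mem_ker, Submodule.restrictScalars_mem, Ideal.mem_span_singleton]
    have : ψ u = Ideal.Quotient.mk (Ideal.span {m}) (u * g) := rfl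
    rw [this, Ideal.Quotient.eq_zero_iff_mem, Ideal.mem_span_singleton, hm]
    constructor
    · intro h
      have h' : c * g ∣ u * g := by rwa [mul_comm c g]
      exact (mul_dvd_mul_iff_right hg).mp h'
    · intro h
      have := mul_dvd_mul_right h g
      rwa [mul_comm c g] at this
  have e1 : (F[X] ⧸ LinearMap.ker ψ) ≃ₗ[F] LinearMap.range ψ :=
    LinearMap.quotKerEquivRange ψ
  rw [hker] at e1
  have e2 : (F[X] ⧸ (Ideal.span {c}).restrictScalars F) ≃ₗ[F] (F[X] ⧸ Ideal.span {c}) :=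
    Submodule.Quotient.restrictScalarsEquiv F (Ideal.span {c})
  have h4 : Module.finrank F (F[X] ⧸ Ideal.span {c}) = c.natDegree := by
    have := (AdjoinRoot.powerBasis hc).finrank
    simp [AdjoinRoot.powerBasis] at this
    exact this
  calc Module.finrank F
        (Ideal.span {Ideal.Quotient.mk (Ideal.span {m}) g} : Ideal (F[X] ⧸ Ideal.span {m}))
      = Module.finrank F
          ((Ideal.span {Ideal.Quotient.mk (Ideal.span {m}) g}).restrictScalars F) :=
        (finrank_restrictScalars_ideal _).symm
    _ = Module.finrank F (F[X] ⧸ (Ideal.span {c}).restrictScalars F) := by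
        rw [← hrange]
        exact (LinearEquiv.finrank_eq e1).symm
    _ = Module.finrank F (F[X] ⧸ Ideal.span {c}) := LinearEquiv.finrank_eq e2
    _ = c.natDegree := h4

lemma natDegree_le_of_dvd_X_pow_card {ℓ : ℕ} (hℓ : ℓ.Prime) {r : ℕ} (hr : r ≠ 0)
    (q : (ZMod ℓ)[X]) (hq : Irreducible q)
    (hdvd : q ∣ X ^ ℓ ^ r - X) : q.natDegree ≤ r := by
  haveI : Fact ℓ.Prime := ⟨hℓ⟩
  haveI : Fact (Irreducible q) := ⟨hq⟩
  set K := AdjoinRoot q with hK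
  have hq0 : q ≠ 0 := hq.ne_zero
  haveI : CharP K ℓ := charP_of_injective_algebraMap (algebraMap (ZMod ℓ) K).injective ℓ
  have hroot : (AdjoinRoot.root q) ^ ℓ ^ r = AdjoinRoot.root q := by
    have h0 : (aeval (AdjoinRoot.root q)) ((X : (ZMod ℓ)[X]) ^ ℓ ^ r - X) = 0 := by
      rw [AdjoinRoot.aeval_eq, AdjoinRoot.mk_eq_zero]
      exact hdvd
    have : (AdjoinRoot.root q) ^ ℓ ^ r - AdjoinRoot.root q = 0 := by
      simpa using h0
    exact sub_eq_zero.mp this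
  have key : ∀ x : K, x ^ ℓ ^ r = x := by
    intro x
    have hx : x ∈ Algebra.adjoin (ZMod ℓ) ({AdjoinRoot.root q} : Set K) := by
      rw [AdjoinRoot.adjoinRoot_eq_top]; trivial
    induction hx using Algebra.adjoin_induction with
    | mem y hy => rw [Set.mem_singleton_iff.mp hy]; exact hroot
    | algebraMap c => rw [← map_pow, ZMod.pow_card_pow]
    | add y z _ _ hy hz => rw [add_pow_char_pow, hy, hz]
    | mul y z _ _ hy hz => rw [mul_pow, hy, hz]
  let pb := AdjoinRoot.powerBasis hq0
  haveI : Module.Finite (ZMod ℓ) K := Module.Finite.of_basis pb.basis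
  haveI : Finite K := Module.finite_of_finite (ZMod ℓ)
  haveI : Fintype K := Fintype.ofFinite K
  have hcard : Fintype.card K = ℓ ^ q.natDegree := by
    rw [Module.card_fintype pb.basis, ZMod.card, Fintype.card_fin]
    rfl
  have hP0 : ((X : K[X]) ^ ℓ ^ r - X) ≠ 0 :=
    FiniteField.X_pow_card_pow_sub_X_ne_zero K hr hℓ.one_lt
  have hsub : Finset.univ ⊆ ((X : K[X]) ^ ℓ ^ r - X).roots.toFinset := by
    intro x _
    rw [Multiset.mem_toFinset, mem_roots hP0]
    simp [IsRoot.def, key x]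
  have hle : Fintype.card K ≤ ℓ ^ r := by
    calc Fintype.card K ≤ ((X : K[X]) ^ ℓ ^ r - X).roots.toFinset.card :=
          Finset.card_le_card hsub
      _ ≤ Multiset.card ((X : K[X]) ^ ℓ ^ r - X).roots := Multiset.toFinset_card_le _
      _ ≤ ((X : K[X]) ^ ℓ ^ r - X).natDegree := Polynomial.card_roots' _
      _ = ℓ ^ r := FiniteField.X_pow_card_pow_sub_X_natDegree_eq K hr hℓ.one_lt
  rw [hcard] at hle
  exact (Nat.pow_le_pow_iff_right hℓ.one_lt).mp hle

lemma factor_degree_le {ℓ p : ℕ} (hℓ : ℓ.Prime) (hp : p.Prime)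
    (q : (ZMod ℓ)[X]) (hq : Irreducible q) (hdvd : q ∣ X ^ p - 1) :
    q.natDegree ≤ max (orderOf ((ℓ : ZMod p))) 1 := by
  haveI : Fact ℓ.Prime := ⟨hℓ⟩
  haveI : Fact p.Prime := ⟨hp⟩
  by_cases hpe : p = ℓ
  · subst hpe
    have hfac : (X : (ZMod p)[X]) ^ p - 1 = (X - 1) ^ p := by
      rw [sub_eq_add_neg (X : (ZMod p)[X]) 1, add_pow_char, neg_one_pow_char ((ZMod p)[X])]
      ring
    rw [hfac] at hdvd
    have hq1 : q ∣ X - 1 := (hq.prime).dvd_of_dvd_pow hdvd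
    have h1 : ((X : (ZMod p)[X]) - 1) ≠ 0 := by
      have : ((X : (ZMod p)[X]) - 1) = X - C 1 := by simp
      rw [this]; exact X_sub_C_ne_zero 1
    calc q.natDegree ≤ ((X : (ZMod p)[X]) - 1).natDegree := natDegree_le_of_dvd hq1 h1
      _ = 1 := by
          have : ((X : (ZMod p)[X]) - 1) = X - C 1 := by simp
          rw [this, natDegree_X_sub_C]
      _ ≤ _ := le_max_right _ _
  · set r := orderOf ((ℓ : ZMod p)) with hrdef
    have hu : ((ℓ : ZMod p)) ≠ 0 := by
      rw [Ne, ZMod.natCast_eq_zero_iff]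
      intro hdvd'
      exact hpe ((Nat.prime_dvd_prime_iff_eq hp hℓ).mp hdvd')
    have hfin : IsOfFinOrder ((ℓ : ZMod p)) := by
      refine isOfFinOrder_iff_pow_eq_one.mpr ⟨p - 1, ?_, ZMod.pow_card_sub_one_eq_one hu⟩
      have := hp.two_le; omega
    have hr : r ≠ 0 := hfin.orderOf_pos.ne'
    have hpow : ((ℓ : ZMod p)) ^ r = 1 := pow_orderOf_eq_one _
    have hone : 1 ≤ ℓ ^ r := Nat.one_le_pow _ _ hℓ.pos
    have hdvd1 : p ∣ ℓ ^ r - 1 := by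
      rw [← ZMod.natCast_eq_zero_iff]
      push_cast [Nat.cast_sub hone]
      rw [hpow]; ring
    obtain ⟨t, ht⟩ := hdvd1
    have h2 : ((X : (ZMod ℓ)[X]) ^ p - 1) ∣ X ^ (ℓ ^ r - 1) - 1 := by
      have := sub_dvd_pow_sub_pow ((X : (ZMod ℓ)[X]) ^ p) 1 t
      rwa [one_pow, ← pow_mul, ← ht] at this
    have h3 : ((X : (ZMod ℓ)[X]) ^ (ℓ ^ r - 1) - 1) ∣ X ^ ℓ ^ r - X := by
      have : (X : (ZMod ℓ)[X]) ^ ℓ ^ r - X = X * (X ^ (ℓ ^ r - 1) - 1) := by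
        rw [mul_sub, mul_one, ← pow_succ']
        congr 2
        omega
      rw [this]
      exact Dvd.intro_left _ rfl
    exact le_trans (natDegree_le_of_dvd_X_pow_card hℓ hr q hq (hdvd.trans (h2.trans h3)))
      (le_max_left _ _)

/-- If `F = F_ℓ` satisfies the `(ε,δ)`-uncertainty principle along an infinite set `P` of
primes (i.e. for `p ∈ P`, `wt(f) + dim I_f > δp` for every nonzero `f`, and `ord_p ℓ < εp`),
then for each `p ∈ P` there is an ideal `I_p` of `F[X]/(X^p-1)` of dimension `≥ εp/2` all
of whose nonzero elements have weight `> (δ-ε)p`: an infinite family of good cyclic codes. -/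
theorem good_cyclic_codes_of_weak_uncertainty (ℓ : ℕ) (hℓ : ℓ.Prime)
    (ε δ : ℝ) (hε : 0 < ε) (hεδ : ε < δ) (hδ : δ < 1)
    (P : Set ℕ) (hPinf : P.Infinite) (hPprime : ∀ p ∈ P, p.Prime)
    (hup : ∀ p ∈ P, ∀ f : Polynomial (ZMod ℓ), f ≠ 0 → f.natDegree < p →
      δ * p < (f.support.card : ℝ) +
        (Module.finrank (ZMod ℓ)
          (Ideal.span {Ideal.Quotient.mk
            (Ideal.span {(X : Polynomial (ZMod ℓ)) ^ p - 1}) f}) : ℝ))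
    (hord : ∀ p ∈ P, (orderOf ((ℓ : ZMod p)) : ℝ) < ε * p) :
    ∀ p ∈ P, ∃ I : Ideal (Polynomial (ZMod ℓ) ⧸
        Ideal.span {(X : Polynomial (ZMod ℓ)) ^ p - 1}),
      ε * p / 2 ≤ (Module.finrank (ZMod ℓ) I : ℝ) ∧
      ∀ g : Polynomial (ZMod ℓ), g.natDegree < p →
        Ideal.Quotient.mk (Ideal.span {(X : Polynomial (ZMod ℓ)) ^ p - 1}) g ∈ I →
        g ≠ 0 → (δ - ε) * p < (g.support.card : ℝ) := by
  intro p hP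
  haveI : Fact ℓ.Prime := ⟨hℓ⟩
  have hp : p.Prime := hPprime p hP
  have hppos : 0 < p := hp.pos
  set m : (ZMod ℓ)[X] := X ^ p - 1 with hmdef
  have hmX : m = X ^ p - C 1 := by simp [hmdef]
  have hmonic : m.Monic := by
    rw [hmX]; exact monic_X_pow_sub_C 1 hppos.ne'
  have hm0 : m ≠ 0 := hmonic.ne_zero
  have hmdeg : m.natDegree = p := by
    rw [hmX, natDegree_X_pow_sub_C]
  haveI : FiniteDimensional (ZMod ℓ) ((ZMod ℓ)[X] ⧸ Ideal.span {m}) :=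
    Module.Finite.of_basis (AdjoinRoot.powerBasis hm0).basis
  by_cases hcase : (1 : ℝ) ≤ ε * p
  · -- general case
    set t := UniqueFactorizationMonoid.normalizedFactors m with htdef
    have ht0 : (0 : (ZMod ℓ)[X]) ∉ t := UniqueFactorizationMonoid.zero_notMem_normalizedFactors m
    have hmonics : ∀ q ∈ t, q.Monic := by
      intro q hq
      have hq0 : q ≠ 0 := (UniqueFactorizationMonoid.irreducible_of_normalized_factor q hq).ne_zero
      have := monic_normalize (R := ZMod ℓ) hq0
      rwa [UniqueFactorizationMonoid.normalize_normalized_factor q hq] at this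
    have htprod : t.prod = m := by
      have hassoc := UniqueFactorizationMonoid.prod_normalizedFactors hm0
      have hmp : (t.map id).prod.Monic :=
        monic_multiset_prod_of_monic t id (fun q hq => hmonics q hq)
      rw [Multiset.map_id] at hmp
      exact eq_of_monic_of_associated hmp hmonic hassoc
    have hsum : ((t.map natDegree).sum : ℕ) = p := by
      rw [← hmdeg, ← htprod, natDegree_multiset_prod _ ht0]
    have hbound : ∀ q ∈ t, ((q.natDegree : ℝ)) ≤ ε * p := by
      intro q hq
      have hirr := UniqueFactorizationMonoid.irreducible_of_normalized_factor q hq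
      have hdvd := UniqueFactorizationMonoid.dvd_of_mem_normalizedFactors hq
      have hnat := factor_degree_le hℓ hp q hirr (by rwa [← hmdef])
      have : ((q.natDegree : ℝ)) ≤ max ((orderOf ((ℓ : ZMod p)) : ℝ)) 1 := by
        calc ((q.natDegree : ℝ)) ≤ ((max (orderOf ((ℓ : ZMod p))) 1 : ℕ) : ℝ) := by
              exact_mod_cast hnat
          _ = max ((orderOf ((ℓ : ZMod p)) : ℝ)) 1 := by push_cast [Nat.cast_max]; rfl
      exact le_trans this (max_le (le_of_lt (hord p hP)) hcase)
    have hstart : ε * p / 2 ≤ ((t.map natDegree).sum : ℝ) := by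
      rw [hsum]
      have hp1 : (1 : ℝ) ≤ p := by exact_mod_cast hppos
      nlinarith
    obtain ⟨u, hut, h1, h2⟩ := exists_sub_multiset natDegree (ε * p / 2) (ε * p)
      (by positivity) (le_of_eq (by ring)) t hbound hstart
    set g := (t - u).prod with hgdef
    set c := u.prod with hcdef
    have hmem_t : ∀ q ∈ u, q ∈ t := fun q hq => Multiset.mem_of_le hut hq
    have hmem_t' : ∀ q ∈ t - u, q ∈ t := fun q hq => Multiset.mem_of_le (tsub_le_self) hq
    have hg0 : g ≠ 0 := Multiset.prod_ne_zero (fun h => ht0 (hmem_t' 0 h))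
    have hc0 : c ≠ 0 := Multiset.prod_ne_zero (fun h => ht0 (hmem_t 0 h))
    have hmgc : m = g * c := by
      rw [← htprod]
      conv_lhs => rw [← tsub_add_cancel_of_le hut]
      rw [Multiset.prod_add]
    have hcdeg : (c.natDegree : ℝ) = ((u.map natDegree).sum : ℝ) := by
      rw [hcdef, natDegree_multiset_prod _ (fun h => ht0 (hmem_t 0 h))]
    refine ⟨Ideal.span {Ideal.Quotient.mk (Ideal.span {m}) g}, ?_, ?_⟩
    · rw [finrank_ideal_span_mk m g c hg0 hc0 hmgc]
      rw [hcdeg] at *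
      linarith
    · intro f hdeg hmem hne
      have hupf := hup p hP f hne hdeg
      have hspan : Ideal.span {Ideal.Quotient.mk (Ideal.span {m}) f} ≤
          Ideal.span {Ideal.Quotient.mk (Ideal.span {m}) g} := by
        rw [Ideal.span_le, Set.singleton_subset_iff]
        exact hmem
      have hmono : Module.finrank (ZMod ℓ)
          (Ideal.span {Ideal.Quotient.mk (Ideal.span {m}) f}) ≤
          Module.finrank (ZMod ℓ)
          (Ideal.span {Ideal.Quotient.mk (Ideal.span {m}) g}) := by
        rw [← finrank_restrictScalars_ideal, ← finrank_restrictScalars_ideal]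
        exact Submodule.finrank_mono (fun x hx => hspan hx)
      have hIval : (Module.finrank (ZMod ℓ)
          (Ideal.span {Ideal.Quotient.mk (Ideal.span {m}) g}) : ℝ) ≤ ε * p := by
        rw [finrank_ideal_span_mk m g c hg0 hc0 hmgc, hcdeg]
        exact h2
      have : (Module.finrank (ZMod ℓ)
          (Ideal.span {Ideal.Quotient.mk (Ideal.span {m}) f}) : ℝ) ≤ ε * p :=
        le_trans (by exact_mod_cast hmono) hIval
      linarith
  · -- special case : ε * p < 1, use the ideal generated by 1 + X + ... + X^(p-1)
    push_neg at hcase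
    set g₀ : (ZMod ℓ)[X] := (Finset.range p).sum fun i => X ^ i with hg₀def
    have hgeom : g₀ * ((X : (ZMod ℓ)[X]) - 1) = m := by
      rw [hg₀def, hmdef]; exact geom_sum_mul X p
    have hX1 : ((X : (ZMod ℓ)[X]) - 1) ≠ 0 := by
      have : ((X : (ZMod ℓ)[X]) - 1) = X - C 1 := by simp
      rw [this]; exact X_sub_C_ne_zero 1
    have hg₀deg : g₀.natDegree = p - 1 := geomsum_natDegree hppos
    have hg₀0 : g₀ ≠ 0 := by
      intro h
      have := geomsum_coeff (F := ZMod ℓ) p 0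
      rw [← hg₀def, h] at this
      simp [hppos] at this
    refine ⟨Ideal.span {Ideal.Quotient.mk (Ideal.span {m}) g₀}, ?_, ?_⟩
    · rw [finrank_ideal_span_mk m g₀ (X - 1) hg₀0 hX1 hgeom.symm]
      have : ((X : (ZMod ℓ)[X]) - 1).natDegree = 1 := by
        have h : ((X : (ZMod ℓ)[X]) - 1) = X - C 1 := by simp
        rw [h, natDegree_X_sub_C]
      rw [this]
      push_cast
      linarith
    · intro f hdeg hmem hne
      -- f is a nonzero constant multiple of g₀
      rw [Ideal.mem_span_singleton] at hmem
      obtain ⟨y, hy⟩ := hmem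
      obtain ⟨v, rfl⟩ := Ideal.Quotient.mk_surjective y
      rw [← map_mul, Ideal.Quotient.mk_eq_mk_iff_sub_mem, Ideal.mem_span_singleton] at hy
      obtain ⟨w, hw⟩ := hy
      have hfg : f = g₀ * (v + (X - 1) * w) := by
        have : f - g₀ * v = m * w := hw
        rw [← hgeom] at this
        ring_nf
        ring_nf at this
        linear_combination this
      set u := v + ((X : (ZMod ℓ)[X]) - 1) * w with hudef
      have hu0 : u ≠ 0 := by
        intro h
        rw [h, mul_zero] at hfg
        exact hne hfg
      have hudeg : u.natDegree = 0 := by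
        have hdegf : f.natDegree = g₀.natDegree + u.natDegree := by
          rw [hfg]; exact natDegree_mul hg₀0 hu0
        omega
      have hCa : u = C (u.coeff 0) := eq_C_of_natDegree_eq_zero hudeg
      have ha0 : u.coeff 0 ≠ 0 := fun h => hu0 (by rw [hCa, h, map_zero])
      have hsupp : f.support = Finset.range p := by
        rw [hfg, hCa]
        ext k
        rw [mem_support_iff, coeff_mul_C, hg₀def, geomsum_coeff]
        by_cases hk : k < p <;> simp [hk, ha0, Finset.mem_range]
      rw [hsupp, Finset.card_range]
      have hp1 : (0 : ℝ) < p := by exact_mod_cast hppos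
      nlinarith
end

section
/- Let p be a prime, F a field containing a primitive p-th root of unity ξ. Then the following are equivalent: (a) for all subsets A, B ⊆ {0,...,p-1} with |A| = |B|, the minor (ξ^{ij})_{i∈A, j∈B} of the Vandermonde matrix has nonzero determinant; (b) for every nonzero f ∈ F[X] of degree < p, wt(f) + #{0 ≤ i ≤ p-1 : f(ξ^i) ≠ 0} ≥ p + 1. -/
open Polynomial Finset

private lemma sum_orderEmbOfFin_comp {α M : Type*} [LinearOrder α] [AddCommMonoid M]
    (s : Finset α) {k : ℕ} (h : s.card = k) (g : α → M) :
    ∑ j : Fin k, g (s.orderEmbOfFin h j) = ∑ x ∈ s, g x := by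
  rw [← Finset.sum_coe_sort s g]
  exact Fintype.sum_equiv (s.orderIsoOfFin h).toEquiv _ _ (fun j => by simp)

private lemma sum_attachFin_comp {M : Type*} [AddCommMonoid M] {n : ℕ}
    (s : Finset ℕ) (h : ∀ m ∈ s, m < n) (g : ℕ → M) :
    ∑ b ∈ s.attachFin h, g (b : ℕ) = ∑ m ∈ s, g m := by
  refine Finset.sum_bij' (fun b _ => (b : ℕ)) (fun m hm => ⟨m, h m hm⟩) ?_ ?_ ?_ ?_ ?_
  · intro b hb; rwa [Finset.mem_attachFin] at hb
  · intro m hm; rw [Finset.mem_attachFin]; exact hm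
  · intro b hb; rfl
  · intro m hm; rfl
  · intro b hb; rfl

/-- For a prime `p` and a field `F` containing a primitive `p`-th root of unity `ξ`,
Chebotarev's property — every square minor of the Vandermonde matrix `(ξ^{ij})` is
invertible — is equivalent to the uncertainty principle over `F` for `p`:
`wt(f) + #{i : f(ξ^i) ≠ 0} ≥ p + 1` for every nonzero `f` of degree `< p`. -/
theorem chebotarev_iff_uncertainty (p : ℕ) (hp : p.Prime) (F : Type*) [Field F]
    (ξ : F) (hξ : IsPrimitiveRoot ξ p) :
    (∀ (k : ℕ) (A B : Finset (Fin p)) (hA : A.card = k) (hB : B.card = k),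
      Matrix.det (fun i j : Fin k =>
        ξ ^ ((A.orderEmbOfFin hA i : ℕ) * (B.orderEmbOfFin hB j : ℕ))) ≠ 0) ↔
    (∀ f : Polynomial F, f ≠ 0 → f.natDegree < p →
      p + 1 ≤ f.support.card + {i : Fin p | f.eval (ξ ^ (i : ℕ)) ≠ 0}.ncard) := by
  classical
  constructor
  · -- Chebotarev ⇒ uncertainty
    intro hcheb f hf hdeg
    by_contra hlt
    push_neg at hlt
    set k := f.support.card with hk
    have hsup : ∀ m ∈ f.support, m < p := fun m hm =>
      lt_of_le_of_lt (le_natDegree_of_mem_supp m hm) hdeg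
    set B : Finset (Fin p) := f.support.attachFin hsup with hBdef
    have hBcard : B.card = k := f.support.card_attachFin hsup
    set N := {i : Fin p | f.eval (ξ ^ (i : ℕ)) ≠ 0}.ncard with hN
    have hNeq : N = (Finset.univ.filter
        (fun i : Fin p => ¬ f.eval (ξ ^ (i : ℕ)) = 0)).card := by
      rw [hN, Set.ncard_eq_toFinset_card', Set.toFinset_setOf]
    set Z : Finset (Fin p) :=
      Finset.univ.filter (fun i : Fin p => f.eval (ξ ^ (i : ℕ)) = 0) with hZ
    have hsplit := Finset.card_filter_add_card_filter_not
      (s := (Finset.univ : Finset (Fin p)))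
      (p := fun i : Fin p => f.eval (ξ ^ (i : ℕ)) = 0)
    have hcardu : (Finset.univ : Finset (Fin p)).card = p := by simp
    have hkZ : k ≤ Z.card := by
      rw [hZ]
      omega
    obtain ⟨A, hAZ, hAcard⟩ := Finset.exists_subset_card_eq hkZ
    refine hcheb k A B hAcard hBcard ?_
    refine Matrix.exists_mulVec_eq_zero_iff.mp ?_
    refine ⟨fun j => f.coeff (B.orderEmbOfFin hBcard j : ℕ), ?_, ?_⟩
    · have h0 : 0 < k := Finset.card_pos.mpr (nonempty_support_iff.mpr hf)
      intro hv
      have h1 := congrFun hv ⟨0, h0⟩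
      have hmem : ((B.orderEmbOfFin hBcard ⟨0, h0⟩ : Fin p) : ℕ) ∈ f.support := by
        exact (Finset.mem_attachFin hsup).mp (B.orderEmbOfFin_mem hBcard ⟨0, h0⟩)
      exact (mem_support_iff.mp hmem) h1
    · funext i
      have hi : A.orderEmbOfFin hAcard i ∈ Z := hAZ (A.orderEmbOfFin_mem hAcard i)
      rw [hZ, Finset.mem_filter] at hi
      set a : ℕ := (A.orderEmbOfFin hAcard i : ℕ) with ha
      have : (∑ j : Fin k, ξ ^ (a * ((B.orderEmbOfFin hBcard j : Fin p) : ℕ)) *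
          f.coeff ((B.orderEmbOfFin hBcard j : Fin p) : ℕ)) = f.eval (ξ ^ a) := by
        rw [sum_orderEmbOfFin_comp B hBcard
          (fun b : Fin p => ξ ^ (a * (b : ℕ)) * f.coeff (b : ℕ))]
        rw [hBdef, sum_attachFin_comp f.support hsup
          (fun m : ℕ => ξ ^ (a * m) * f.coeff m)]
        rw [Polynomial.eval_eq_sum, Polynomial.sum_def]
        refine Finset.sum_congr rfl fun m hm => ?_
        rw [pow_mul, mul_comm]
      have h2 := hi.2
      rw [← this] at h2
      simpa [Matrix.mulVec, dotProduct, ha] using h2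
  · -- uncertainty ⇒ Chebotarev
    intro hup k A B hA hB hdet
    obtain ⟨v, hv0, hMv⟩ := Matrix.exists_mulVec_eq_zero_iff.mpr hdet
    set e : Fin k → ℕ := fun j => (B.orderEmbOfFin hB j : ℕ) with he_def
    have he : Function.Injective e := fun i j h =>
      (B.orderEmbOfFin hB).injective (Fin.val_injective h)
    set f : Polynomial F := ∑ j : Fin k, C (v j) * X ^ (e j) with hfdef
    have hcoeff : ∀ j, f.coeff (e j) = v j := by
      intro j
      rw [hfdef, Polynomial.finset_sum_coeff, Finset.sum_eq_single j]
      · simp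
      · intro b _ hb
        rw [Polynomial.coeff_C_mul, Polynomial.coeff_X_pow, if_neg, mul_zero]
        exact fun h => hb (he h.symm)
      · simp
    obtain ⟨j0, hj0⟩ := Function.ne_iff.mp hv0
    have hfne : f ≠ 0 := fun h => hj0 (by rw [← hcoeff j0, h, Polynomial.coeff_zero]; rfl)
    have hdegf : f.degree < (p : ℕ) := by
      refine lt_of_le_of_lt (Polynomial.degree_sum_le _ _) ?_
      rw [Finset.sup_lt_iff (by exact_mod_cast WithBot.bot_lt_coe p)]
      intro j _
      refine lt_of_le_of_lt (Polynomial.degree_C_mul_X_pow_le _ _) ?_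
      exact_mod_cast (B.orderEmbOfFin hB j).2
    have hndeg : f.natDegree < p := (Polynomial.natDegree_lt_iff_degree_lt hfne).mpr hdegf
    have hsupp : f.support ⊆ Finset.image e Finset.univ := by
      intro n hn
      rw [Polynomial.mem_support_iff] at hn
      by_contra hne
      apply hn
      rw [hfdef, Polynomial.finset_sum_coeff]
      refine Finset.sum_eq_zero fun j _ => ?_
      rw [Polynomial.coeff_C_mul, Polynomial.coeff_X_pow, if_neg, mul_zero]
      exact fun h => hne (Finset.mem_image.mpr ⟨j, Finset.mem_univ j, h.symm⟩)
    have hcard : f.support.card ≤ k := by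
      refine le_trans (Finset.card_le_card hsupp) ?_
      refine le_trans (Finset.card_image_le) ?_
      simp
    have hevalA : ∀ i : Fin k, f.eval (ξ ^ ((A.orderEmbOfFin hA i : Fin p) : ℕ)) = 0 := by
      intro i
      set a : ℕ := (A.orderEmbOfFin hA i : ℕ) with ha
      have h1 := congrFun hMv i
      rw [hfdef, Polynomial.eval_finset_sum]
      simp only [Polynomial.eval_mul, Polynomial.eval_C, Polynomial.eval_pow,
        Polynomial.eval_X]
      calc (∑ j : Fin k, v j * (ξ ^ a) ^ e j)
          = ∑ j : Fin k, ξ ^ (a * e j) * v j := by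
            refine Finset.sum_congr rfl fun j _ => ?_
            rw [pow_mul, mul_comm]
        _ = 0 := by simpa [Matrix.mulVec, dotProduct] using h1
    have hsub : {i : Fin p | f.eval (ξ ^ (i : ℕ)) ≠ 0} ⊆ (↑A : Set (Fin p))ᶜ := by
      intro i hi hiA
      have : i ∈ Set.range (A.orderEmbOfFin hA) := by
        rw [Finset.range_orderEmbOfFin]; exact hiA
      obtain ⟨i', rfl⟩ := this
      exact hi (hevalA i')
    have hncard : {i : Fin p | f.eval (ξ ^ (i : ℕ)) ≠ 0}.ncard ≤ p - k := by
      refine le_trans (Set.ncard_le_ncard hsub (Set.toFinite _)) ?_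
      rw [← Finset.coe_compl, Set.ncard_coe_finset, Finset.card_compl,
        Fintype.card_fin, hA]
    have hkp : k ≤ p := by
      rw [← hA]
      exact le_trans (Finset.card_le_univ A) (by simp)
    have := hup f hfne hndeg
    omega
end

section
/- Let p be a prime and ξ = e^{2πi/p} ∈ ℂ. Then every square submatrix of the Vandermonde matrix V = (ξ^{ij})_{0 ≤ i,j ≤ p-1} is invertible: for all A, B ⊆ {0,...,p-1} with |A| = |B|, det((ξ^{ij})_{i∈A, j∈B}) ≠ 0. -/
namespace ChebAux
open Polynomial Finset Matrix

variable {k : ℕ}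

lemma filter_lt_range (m n : ℕ) :
    (Finset.range n).filter (fun d => d < m) = Finset.range (min m n) := by
  ext x; simp only [Finset.mem_filter, Finset.mem_range, Nat.lt_min]; omega

lemma count_eq (r : Fin k → ℕ) :
    (∑ i, min (r i) k)
      = ∑ d ∈ Finset.range k, ((Finset.univ : Finset (Fin k)).filter (fun i => d < r i)).card := by
  have h1 : ∀ i, min (r i) k = ((Finset.range k).filter (fun d => d < r i)).card := by
    intro i; rw [filter_lt_range, Finset.card_range]
  simp only [h1, Finset.card_filter]
  exact Finset.sum_comm

lemma compl_card (r : Fin k → ℕ) (d : ℕ) :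
    ((Finset.univ : Finset (Fin k)).filter (fun i => r i ≤ d)).card
      + ((Finset.univ : Finset (Fin k)).filter (fun i => d < r i)).card = k := by
  have := Finset.card_filter_add_card_filter_not
    (s := (Finset.univ : Finset (Fin k))) (p := fun i => r i ≤ d)
  simp only [not_le, Finset.card_univ, Fintype.card_fin] at this
  convert this using 3

lemma reflect_sum : ∑ d ∈ Finset.range k, (k - 1 - d) = ∑ d ∈ Finset.range k, d :=
  Finset.sum_range_reflect (fun d => d) k

lemma sum_ge (r : Fin k → ℕ)
    (h : ∀ d, ((Finset.univ : Finset (Fin k)).filter (fun i => r i ≤ d)).card ≤ d + 1) :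
    ∑ d ∈ Finset.range k, d ≤ ∑ i, r i := by
  have h2 : ∀ d ∈ Finset.range k,
      (k - 1 - d) ≤ ((Finset.univ : Finset (Fin k)).filter (fun i => d < r i)).card := by
    intro d hd
    have := compl_card r d
    have := h d
    omega
  calc ∑ d ∈ Finset.range k, d = ∑ d ∈ Finset.range k, (k - 1 - d) := reflect_sum.symm
    _ ≤ ∑ d ∈ Finset.range k, ((Finset.univ : Finset (Fin k)).filter (fun i => d < r i)).card :=
        Finset.sum_le_sum h2
    _ = ∑ i, min (r i) k := (count_eq r).symm
    _ ≤ ∑ i, r i := Finset.sum_le_sum (fun i _ => Nat.min_le_left _ _)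

end ChebAux


open Polynomial Finset Matrix

namespace ChebAux2
variable {k : ℕ}

lemma exists_perm (r : Fin k → ℕ)
    (h : ∀ d, ((Finset.univ : Finset (Fin k)).filter (fun i => r i ≤ d)).card ≤ d + 1)
    (hs : ∑ i, r i = ∑ d ∈ Finset.range k, d) :
    ∃ σ : Equiv.Perm (Fin k), ∀ i, r i = (σ i : ℕ) := by
  rcases Nat.eq_zero_or_pos k with hk0 | hk0
  · subst hk0
    exact ⟨Equiv.refl _, fun i => i.elim0⟩
  -- shorthand
  set cgt : ℕ → ℕ := fun d => ((Finset.univ : Finset (Fin k)).filter (fun i => d < r i)).card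
    with hcgt
  set cle : ℕ → ℕ := fun d => ((Finset.univ : Finset (Fin k)).filter (fun i => r i ≤ d)).card
    with hcle
  have hcompl : ∀ d, cle d + cgt d = k := fun d => ChebAux.compl_card r d
  have hcle' : ∀ d, cle d ≤ d + 1 := h
  have h2 : ∀ d ∈ Finset.range k, (k - 1 - d) ≤ cgt d := by
    intro d hd
    have := hcompl d; have := hcle' d; omega
  -- total equalities
  have htot1 : ∑ d ∈ Finset.range k, cgt d = ∑ i, min (r i) k := (ChebAux.count_eq r).symm
  have htot2 : ∑ i, min (r i) k ≤ ∑ i, r i :=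
    Finset.sum_le_sum (fun i _ => Nat.min_le_left _ _)
  have htot3 : ∑ d ∈ Finset.range k, (k - 1 - d) = ∑ d ∈ Finset.range k, d := ChebAux.reflect_sum
  have htot : ∑ d ∈ Finset.range k, (k - 1 - d) = ∑ d ∈ Finset.range k, cgt d := by
    have hle : ∑ d ∈ Finset.range k, (k-1-d) ≤ ∑ d ∈ Finset.range k, cgt d :=
      Finset.sum_le_sum h2
    have hge : ∑ d ∈ Finset.range k, cgt d ≤ ∑ d ∈ Finset.range k, (k-1-d) := by
      rw [htot1, htot3]; exact le_of_le_of_eq htot2 hs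
    omega
  have heq1 : ∀ d ∈ Finset.range k, cgt d = k - 1 - d :=
    fun d hd => ((Finset.sum_eq_sum_iff_of_le h2).1 htot d hd).symm
  have hminr : ∀ i, min (r i) k = r i := by
    have : ∑ i, min (r i) k = ∑ i, r i := by
      rw [← htot1, ← htot, htot3, hs]
    intro i
    exact (Finset.sum_eq_sum_iff_of_le (fun i _ => Nat.min_le_left _ _)).1 this i (mem_univ i)
  have hcled : ∀ d ∈ Finset.range k, cle d = d + 1 := by
    intro d hd
    have := hcompl d; have := heq1 d hd
    rw [Finset.mem_range] at hd; omega
  -- every value is at most k-1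
  have hrb : ∀ i, r i ≤ k - 1 := by
    intro i
    have hm : k - 1 ∈ Finset.range k := by rw [Finset.mem_range]; omega
    have := heq1 (k-1) hm
    have h0 : cgt (k-1) = 0 := by omega
    rw [hcgt] at h0
    simp only [Finset.card_eq_zero, Finset.filter_eq_empty_iff, Finset.mem_univ, not_lt,
      forall_const] at h0
    exact h0 (x := i)
  -- injectivity
  have hinj : Function.Injective r := by
    intro i1 i2 hv
    by_contra hne
    rcases Nat.eq_zero_or_pos (r i1) with hv0 | hvpos
    · have h0 : cle 0 = 1 := hcled 0 (by rw [Finset.mem_range]; omega)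
      have hmem1 : i1 ∈ (Finset.univ : Finset (Fin k)).filter (fun i => r i ≤ 0) := by
        simp [hv0]
      have hmem2 : i2 ∈ (Finset.univ : Finset (Fin k)).filter (fun i => r i ≤ 0) := by
        simp [← hv, hv0]
      exact hne (Finset.card_le_one.1 (le_of_eq h0) _ hmem1 _ hmem2)
    · obtain ⟨w, hw⟩ : ∃ w, r i1 = w + 1 := ⟨r i1 - 1, by omega⟩
      have hwk : w + 1 < k := by have := hrb i1; omega
      have hcw1 : cle (w+1) = w + 2 := hcled (w+1) (by rw [Finset.mem_range]; omega)
      have hcw : cle w = w + 1 := hcled w (by rw [Finset.mem_range]; omega)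
      set s := ((Finset.univ : Finset (Fin k)).filter (fun i => r i ≤ w + 1)) \
        ((Finset.univ : Finset (Fin k)).filter (fun i => r i ≤ w)) with hsdef
      have hsub : ((Finset.univ : Finset (Fin k)).filter (fun i => r i ≤ w)) ⊆
          ((Finset.univ : Finset (Fin k)).filter (fun i => r i ≤ w + 1)) := by
        intro x hx
        simp only [Finset.mem_filter, Finset.mem_univ, true_and] at hx ⊢
        omega
      have hcards : s.card = 1 := by
        rw [hsdef, Finset.card_sdiff_of_subset hsub]
        show cle (w+1) - cle w = 1
        omega
      have hmem1 : i1 ∈ s := by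
        rw [hsdef, Finset.mem_sdiff]
        simp [hw]
      have hmem2 : i2 ∈ s := by
        rw [hsdef, Finset.mem_sdiff]
        simp [← hv, hw]
      exact hne (Finset.card_le_one.1 (le_of_eq hcards) _ hmem1 _ hmem2)
  -- build the permutation
  have hlt : ∀ i, r i < k := fun i => by have := hrb i; omega
  set f : Fin k → Fin k := fun i => ⟨r i, hlt i⟩ with hf
  have hfinj : Function.Injective f := by
    intro i1 i2 hfe
    apply hinj
    have := congrArg Fin.val hfe
    simpa [hf] using this
  obtain hbij := Finite.injective_iff_bijective.1 hfinj
  exact ⟨Equiv.ofBijective f hbij, fun i => rfl⟩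

lemma perm_sum (σ : Equiv.Perm (Fin k)) :
    ∑ i, ((σ i : Fin k) : ℕ) = ∑ d ∈ Finset.range k, d := by
  rw [Equiv.sum_comp σ (fun i : Fin k => (i : ℕ))]
  exact Fin.sum_univ_eq_sum_range (fun i => i) k

lemma perm_good (σ : Equiv.Perm (Fin k)) (d : ℕ) :
    ((Finset.univ : Finset (Fin k)).filter (fun i => ((σ i : Fin k) : ℕ) ≤ d)).card ≤ d + 1 := by
  have : ((Finset.univ : Finset (Fin k)).filter (fun i => ((σ i : Fin k) : ℕ) ≤ d)).card
      ≤ (Finset.range (d+1)).card := by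
    apply Finset.card_le_card_of_injOn (fun i => ((σ i : Fin k) : ℕ))
    · intro i hi
      simp only [Finset.mem_coe, Finset.mem_filter] at hi
      rw [Finset.mem_coe, Finset.mem_range]; dsimp only; omega
    · intro x _ y _ hxy
      exact σ.injective (Fin.val_injective hxy)
  simpa using this

end ChebAux2

namespace ChebAux3
open Polynomial Finset Matrix
variable {k : ℕ}

noncomputable def cdet (a b r : Fin k → ℕ) : ℤ :=
  Matrix.det (Matrix.of fun i j : Fin k => ((a i * b j).choose (r i) : ℤ))

/-- Entry as polynomial evaluation: `choose (a*b) m = (m!)⁻¹ * Q.eval b` where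
`Q = (descPochhammer ℚ m).comp (C a * X)`. -/
lemma choose_eq_eval (a b m : ℕ) :
    ((a * b).choose m : ℚ) =
      (m.factorial : ℚ)⁻¹ *
        (((descPochhammer ℚ m).comp (C (a : ℚ) * X)).eval (b : ℚ)) := by
  rw [eval_comp, eval_mul, eval_C, eval_X, ← Nat.cast_mul,
    descPochhammer_eval_eq_descFactorial, Nat.descFactorial_eq_factorial_mul_choose]
  push_cast
  rw [← mul_assoc, inv_mul_cancel₀ (by exact_mod_cast Nat.factorial_ne_zero m), one_mul]

lemma Qdeg (a : ℚ) (m d : ℕ) (hm : m ≤ d) :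
    ((descPochhammer ℚ m).comp (C a * X)).natDegree < d + 1 := by
  have h1 : ((descPochhammer ℚ m).comp (C a * X)).natDegree
      ≤ (descPochhammer ℚ m).natDegree * (C a * X).natDegree := natDegree_comp_le
  have h2 : (C a * X).natDegree ≤ 1 :=
    le_trans (natDegree_mul_le) (by simp)
  have h3 : (descPochhammer ℚ m).natDegree = m := descPochhammer_natDegree ℚ m
  calc ((descPochhammer ℚ m).comp (C a * X)).natDegree
      ≤ (descPochhammer ℚ m).natDegree * (C a * X).natDegree := h1
    _ ≤ m * 1 := by rw [h3]; exact Nat.mul_le_mul_left m h2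
    _ < d + 1 := by omega

lemma cdet_eq_zero (a b r : Fin k → ℕ) {d : ℕ}
    (hd : d + 2 ≤ ((Finset.univ : Finset (Fin k)).filter (fun i => r i ≤ d)).card) :
    cdet a b r = 0 := by
  have hq : Matrix.det (Matrix.of fun i j : Fin k => ((a i * b j).choose (r i) : ℚ)) = 0 := by
    set Mq : Matrix (Fin k) (Fin k) ℚ :=
      Matrix.of fun i j : Fin k => ((a i * b j).choose (r i) : ℚ) with hMq
    set w : Fin (d+1) → (Fin k → ℚ) := fun l => fun j => (b j : ℚ) ^ (l : ℕ) with hw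
    set W : Submodule ℚ (Fin k → ℚ) := Submodule.span ℚ (Set.range w) with hW
    set S : Finset (Fin k) := (Finset.univ : Finset (Fin k)).filter (fun i => r i ≤ d) with hS
    have hrowW : ∀ i ∈ S, Mq i ∈ W := by
      intro i hi
      rw [hS, Finset.mem_filter] at hi
      set m := r i with hm
      set Q : ℚ[X] := (descPochhammer ℚ m).comp (C (a i : ℚ) * X) with hQ
      have hdeg := Qdeg (a i : ℚ) m d hi.2
      have hrow : Mq i = ∑ l ∈ Finset.range (d+1),
          ((m.factorial : ℚ)⁻¹ * Q.coeff l) • (fun j : Fin k => (b j : ℚ) ^ l) := by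
        funext j
        rw [Finset.sum_apply]
        simp only [Pi.smul_apply, smul_eq_mul]
        rw [hMq]
        show ((a i * b j).choose m : ℚ) = _
        rw [choose_eq_eval, eval_eq_sum_range' hdeg]
        rw [Finset.mul_sum]
        exact Finset.sum_congr rfl fun l _ => by ring
      rw [hrow]
      apply Submodule.sum_mem
      intro l hl
      apply Submodule.smul_mem
      apply Submodule.subset_span
      rw [Finset.mem_range] at hl
      exact ⟨(⟨l, hl⟩ : Fin (d+1)), rfl⟩
    -- the rows indexed by S are linearly dependent
    have hnli : ¬ LinearIndependent ℚ (fun s : {x // x ∈ S} => Mq s.1) := by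
      intro hli
      have h1 : Fintype.card {x // x ∈ S} ≤
          (Set.range (fun s : {x // x ∈ S} => Mq s.1)).finrank ℚ :=
        linearIndependent_iff_card_le_finrank_span.mp hli
      have h2 : Submodule.span ℚ (Set.range (fun s : {x // x ∈ S} => Mq s.1)) ≤ W := by
        rw [Submodule.span_le]
        rintro x ⟨s, rfl⟩
        exact hrowW s.1 s.2
      have h3 : (Set.range (fun s : {x // x ∈ S} => Mq s.1)).finrank ℚ
          ≤ Module.finrank ℚ W := Submodule.finrank_mono h2
      have h4 : Module.finrank ℚ W ≤ d + 1 := by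
        have := finrank_range_le_card (R := ℚ) w
        simpa [hW, Set.finrank] using this
      have h5 : Fintype.card {x // x ∈ S} = S.card := Fintype.card_coe S
      omega
    obtain ⟨g, hg0, s0, hs0⟩ := Fintype.not_linearIndependent_iff.mp hnli
    apply Matrix.exists_vecMul_eq_zero_iff.mp
    refine ⟨(fun i => if h : i ∈ S then g ⟨i, h⟩ else 0), ?_, ?_⟩
    · intro hzero
      apply hs0
      have := congrFun hzero s0.1
      simpa [s0.2] using this
    · funext j
      show (∑ i, (if h : i ∈ S then g ⟨i, h⟩ else 0) * Mq i j) = 0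
      rw [← Finset.sum_subset (Finset.subset_univ S)
        (by intro i _ hiS; rw [dif_neg hiS, zero_mul])]
      rw [← Finset.sum_attach S (fun i => (if h : i ∈ S then g ⟨i, h⟩ else 0) * Mq i j)]
      have := congrFun hg0 j
      simp only [Finset.sum_apply, Pi.smul_apply, smul_eq_mul, Pi.zero_apply] at this
      rw [← this]
      apply Finset.sum_congr rfl
      intro s _
      rw [dif_pos s.2]
  -- descend to ℤ
  have hmap := RingHom.map_det (Int.castRingHom ℚ)
    (Matrix.of fun i j : Fin k => ((a i * b j).choose (r i) : ℤ))
  have : ((cdet a b r : ℤ) : ℚ) = 0 := by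
    rw [cdet]
    rw [show (((Matrix.of fun i j : Fin k => ((a i * b j).choose (r i) : ℤ)).det : ℤ) : ℚ)
      = (Int.castRingHom ℚ) (Matrix.of fun i j : Fin k => ((a i * b j).choose (r i) : ℤ)).det
      from rfl, hmap]
    convert hq using 2
    ext i j; simp
  exact_mod_cast this

end ChebAux3

namespace ChebAux4
open Polynomial Finset Matrix ChebAux3
variable {k : ℕ}

lemma cdet_cast (a b r : Fin k → ℕ) :
    ((cdet a b r : ℤ) : ℚ)
      = Matrix.det (Matrix.of fun i j : Fin k => (((a i * b j).choose (r i)) : ℚ)) := by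
  have hmap := RingHom.map_det (Int.castRingHom ℚ)
    (Matrix.of fun i j : Fin k => ((a i * b j).choose (r i) : ℤ))
  rw [cdet]
  rw [show (((Matrix.of fun i j : Fin k => ((a i * b j).choose (r i) : ℤ)).det : ℤ) : ℚ)
    = (Int.castRingHom ℚ) (Matrix.of fun i j : Fin k => ((a i * b j).choose (r i) : ℤ)).det
    from rfl, hmap]
  congr 1

lemma perm_ge_id_eq_id (ρ : Equiv.Perm (Fin k)) (h : ∀ l : Fin k, (l : ℕ) ≤ ((ρ l : Fin k) : ℕ)) :
    ρ = 1 := by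
  have hsum : ∑ l : Fin k, ((ρ l : Fin k) : ℕ) = ∑ l : Fin k, (l : ℕ) :=
    Equiv.sum_comp ρ (fun i : Fin k => (i : ℕ))
  have := (Finset.sum_eq_sum_iff_of_le (fun l (_ : l ∈ univ) => h l)).1 hsum.symm
  ext l
  exact (this l (Finset.mem_univ l)).symm

lemma diag_sum :
    ∑ ρ : Equiv.Perm (Fin k),
        ∏ l : Fin k, (descPochhammer ℚ ((ρ l : Fin k) : ℕ)).coeff (l : ℕ) = 1 := by
  rw [Finset.sum_eq_single 1]
  · apply Finset.prod_eq_one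
    intro l _
    have h1 : (descPochhammer ℚ ((l : Fin k) : ℕ)).natDegree = (l : ℕ) :=
      descPochhammer_natDegree ℚ _
    have := (monic_descPochhammer ℚ ((l : Fin k) : ℕ)).coeff_natDegree
    rw [h1] at this
    simpa using this
  · intro ρ _ hρ
    have : ∃ l : Fin k, ((ρ l : Fin k) : ℕ) < (l : ℕ) := by
      by_contra hcon
      push_neg at hcon
      exact hρ (perm_ge_id_eq_id ρ hcon)
    obtain ⟨l0, hl0⟩ := this
    apply Finset.prod_eq_zero (Finset.mem_univ l0)
    apply Polynomial.coeff_eq_zero_of_natDegree_lt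
    rw [descPochhammer_natDegree ℚ _]
    exact hl0
  · intro h; exact absurd (Finset.mem_univ 1) h

lemma entry_eq (a b m : ℕ) (hm : m < k) :
    ((m.factorial : ℚ)) * ((a * b).choose m : ℚ)
      = ∑ l : Fin k, (descPochhammer ℚ m).coeff (l : ℕ) * (a : ℚ) ^ (l : ℕ) * (b : ℚ) ^ (l : ℕ) := by
  have h1 : ((m.factorial : ℚ)) * ((a * b).choose m : ℚ) = ((a * b).descFactorial m : ℚ) := by
    rw [Nat.descFactorial_eq_factorial_mul_choose]; push_cast; ring
  have h2 : ((a * b).descFactorial m : ℚ) = (descPochhammer ℚ m).eval ((a * b : ℕ) : ℚ) :=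
    (descPochhammer_eval_eq_descFactorial ℚ _ _).symm
  have h3 : (descPochhammer ℚ m).natDegree < k := by
    rw [descPochhammer_natDegree ℚ m]; exact hm
  rw [h1, h2, Polynomial.eval_eq_sum_range' h3]
  rw [← Fin.sum_univ_eq_sum_range
    (fun l => (descPochhammer ℚ m).coeff l * ((a * b : ℕ) : ℚ) ^ l) k]
  apply Finset.sum_congr rfl
  intro l _
  push_cast
  ring

lemma stepA (a b : Fin k → ℕ) (σ : Equiv.Perm (Fin k)) :
    (∏ m ∈ Finset.range k, (m.factorial : ℚ)) * ((cdet a b (fun i => ((σ i : Fin k) : ℕ)) : ℤ) : ℚ)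
      = Matrix.det (Matrix.of fun i l : Fin k =>
          (descPochhammer ℚ ((σ i : Fin k) : ℕ)).coeff (l : ℕ) * (a i : ℚ) ^ (l : ℕ))
        * Matrix.det (Matrix.of fun l j : Fin k => (b j : ℚ) ^ (l : ℕ)) := by
  have hfact : (∏ m ∈ Finset.range k, (m.factorial : ℚ))
      = ∏ i : Fin k, ((((σ i : Fin k) : ℕ)).factorial : ℚ) := by
    rw [← Fin.prod_univ_eq_prod_range (fun m => (m.factorial : ℚ)) k]
    exact (Equiv.prod_comp σ fun i : Fin k => (((i : Fin k) : ℕ).factorial : ℚ)).symm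
  rw [cdet_cast, hfact, ← Matrix.det_mul_column]
  rw [← Matrix.det_mul]
  congr 1
  ext i j
  rw [Matrix.mul_apply]
  show ((((σ i : Fin k) : ℕ)).factorial : ℚ) * ((a i * b j).choose ((σ i : Fin k) : ℕ) : ℚ) = _
  rw [entry_eq (a i) (b j) _ (σ i).isLt]
  rfl

lemma stepB (a : Fin k → ℕ) :
    ∑ σ : Equiv.Perm (Fin k), Matrix.det (Matrix.of fun i l : Fin k =>
        (descPochhammer ℚ ((σ i : Fin k) : ℕ)).coeff (l : ℕ) * (a i : ℚ) ^ (l : ℕ))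
      = Matrix.det (Matrix.vandermonde (fun i : Fin k => (a i : ℚ))) := by
  have hdet : ∀ σ : Equiv.Perm (Fin k), Matrix.det (Matrix.of fun i l : Fin k =>
      (descPochhammer ℚ ((σ i : Fin k) : ℕ)).coeff (l : ℕ) * (a i : ℚ) ^ (l : ℕ))
      = ∑ τ : Equiv.Perm (Fin k), ((Equiv.Perm.sign τ : ℤ) : ℚ)
          * ((∏ l : Fin k, (descPochhammer ℚ ((σ (τ l) : Fin k) : ℕ)).coeff (l : ℕ))
            * ∏ l : Fin k, (a (τ l) : ℚ) ^ (l : ℕ)) := by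
    intro σ
    rw [Matrix.det_apply']
    apply Finset.sum_congr rfl
    intro τ _
    rw [← Finset.prod_mul_distrib]
    rfl
  simp_rw [hdet]
  rw [Finset.sum_comm]
  have hτ : ∀ τ : Equiv.Perm (Fin k),
      (∑ σ : Equiv.Perm (Fin k), ((Equiv.Perm.sign τ : ℤ) : ℚ)
        * ((∏ l : Fin k, (descPochhammer ℚ ((σ (τ l) : Fin k) : ℕ)).coeff (l : ℕ))
          * ∏ l : Fin k, (a (τ l) : ℚ) ^ (l : ℕ)))
      = ((Equiv.Perm.sign τ : ℤ) : ℚ) * ∏ l : Fin k, (a (τ l) : ℚ) ^ (l : ℕ) := by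
    intro τ
    have hre : (∑ σ : Equiv.Perm (Fin k),
        ∏ l : Fin k, (descPochhammer ℚ ((σ (τ l) : Fin k) : ℕ)).coeff (l : ℕ))
        = ∑ ρ : Equiv.Perm (Fin k),
            ∏ l : Fin k, (descPochhammer ℚ ((ρ l : Fin k) : ℕ)).coeff (l : ℕ) :=
      Fintype.sum_bijective (fun σ => σ * τ) (Group.mulRight_bijective τ) _ _
        (fun σ => Finset.prod_congr rfl (fun l _ => rfl))
    calc (∑ σ : Equiv.Perm (Fin k), ((Equiv.Perm.sign τ : ℤ) : ℚ)
        * ((∏ l : Fin k, (descPochhammer ℚ ((σ (τ l) : Fin k) : ℕ)).coeff (l : ℕ))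
          * ∏ l : Fin k, (a (τ l) : ℚ) ^ (l : ℕ)))
        = (((Equiv.Perm.sign τ : ℤ) : ℚ) * ∏ l : Fin k, (a (τ l) : ℚ) ^ (l : ℕ))
          * ∑ σ : Equiv.Perm (Fin k),
              ∏ l : Fin k, (descPochhammer ℚ ((σ (τ l) : Fin k) : ℕ)).coeff (l : ℕ) := by
          rw [Finset.mul_sum]
          exact Finset.sum_congr rfl (fun σ _ => by ring)
      _ = ((Equiv.Perm.sign τ : ℤ) : ℚ) * ∏ l : Fin k, (a (τ l) : ℚ) ^ (l : ℕ) := by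
          rw [hre, diag_sum, mul_one]
  simp_rw [hτ]
  rw [Matrix.det_apply']
  rfl

lemma not_dvd_vandermonde_prod (p : ℕ) (hp : p.Prime) (c : Fin k → ℕ) (hc : StrictMono c)
    (hcp : ∀ i, c i < p) :
    ¬ ((p : ℤ) ∣ ∏ i : Fin k, ∏ j ∈ Finset.Ioi i, ((c j : ℤ) - (c i : ℤ))) := by
  intro hdvd
  have hpz : Prime (p : ℤ) := Nat.prime_iff_prime_int.mp hp
  obtain ⟨i, _, hdvd1⟩ := (hpz.dvd_finset_prod_iff _).1 hdvd
  obtain ⟨j, hj, hdvd2⟩ := (hpz.dvd_finset_prod_iff _).1 hdvd1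
  rw [Finset.mem_Ioi] at hj
  have hij : c i < c j := hc hj
  have hpos : (0 : ℤ) < (c j : ℤ) - (c i : ℤ) := by
    have : (c i : ℤ) < (c j : ℤ) := by exact_mod_cast hij
    omega
  have hle := Int.le_of_dvd hpos hdvd2
  have hjp : (c j : ℤ) < (p : ℤ) := by exact_mod_cast hcp j
  omega

lemma not_dvd (p : ℕ) (hp : p.Prime) (a b : Fin k → ℕ) (ha : StrictMono a) (hb : StrictMono b)
    (hap : ∀ i, a i < p) (hbp : ∀ i, b i < p) :
    ¬ ((p : ℤ) ∣ ∑ σ : Equiv.Perm (Fin k), cdet a b (fun i => ((σ i : Fin k) : ℕ))) := by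
  intro hdvd
  -- the rational identity
  have hQ : (∏ m ∈ Finset.range k, (m.factorial : ℚ))
      * ((∑ σ : Equiv.Perm (Fin k), cdet a b (fun i => ((σ i : Fin k) : ℕ)) : ℤ) : ℚ)
      = Matrix.det (Matrix.vandermonde (fun i : Fin k => (a i : ℚ)))
        * Matrix.det (Matrix.vandermonde (fun i : Fin k => (b i : ℚ))) := by
    push_cast
    rw [Finset.mul_sum]
    have : ∀ σ : Equiv.Perm (Fin k),
        (∏ m ∈ Finset.range k, (m.factorial : ℚ))
          * ((cdet a b (fun i => ((σ i : Fin k) : ℕ)) : ℤ) : ℚ)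
        = Matrix.det (Matrix.of fun i l : Fin k =>
            (descPochhammer ℚ ((σ i : Fin k) : ℕ)).coeff (l : ℕ) * (a i : ℚ) ^ (l : ℕ))
          * Matrix.det (Matrix.of fun l j : Fin k => (b j : ℚ) ^ (l : ℕ)) := stepA a b
    calc (∑ σ : Equiv.Perm (Fin k), (∏ m ∈ Finset.range k, (m.factorial : ℚ))
          * ((cdet a b (fun i => ((σ i : Fin k) : ℕ)) : ℤ) : ℚ))
        = (∑ σ : Equiv.Perm (Fin k), Matrix.det (Matrix.of fun i l : Fin k =>
            (descPochhammer ℚ ((σ i : Fin k) : ℕ)).coeff (l : ℕ) * (a i : ℚ) ^ (l : ℕ)))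
          * Matrix.det (Matrix.of fun l j : Fin k => (b j : ℚ) ^ (l : ℕ)) := by
          rw [Finset.sum_mul]
          exact Finset.sum_congr rfl (fun σ _ => this σ)
      _ = Matrix.det (Matrix.vandermonde (fun i : Fin k => (a i : ℚ)))
          * Matrix.det (Matrix.vandermonde (fun i : Fin k => (b i : ℚ))) := by
          rw [stepB]
          congr 1
          rw [← Matrix.det_transpose (Matrix.vandermonde (fun i : Fin k => (b i : ℚ)))]
          rfl
  -- descend to ℤ
  have hZ : (∏ m ∈ Finset.range k, (m.factorial : ℤ))
      * (∑ σ : Equiv.Perm (Fin k), cdet a b (fun i => ((σ i : Fin k) : ℕ)))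
      = (∏ i : Fin k, ∏ j ∈ Finset.Ioi i, ((a j : ℤ) - (a i : ℤ)))
        * (∏ i : Fin k, ∏ j ∈ Finset.Ioi i, ((b j : ℤ) - (b i : ℤ))) := by
    have := hQ
    rw [Matrix.det_vandermonde, Matrix.det_vandermonde] at this
    apply @Int.cast_injective ℚ
    push_cast
    push_cast at this
    convert this using 2
  have hdvd2 : (p : ℤ) ∣ (∏ i : Fin k, ∏ j ∈ Finset.Ioi i, ((a j : ℤ) - (a i : ℤ)))
      * (∏ i : Fin k, ∏ j ∈ Finset.Ioi i, ((b j : ℤ) - (b i : ℤ))) := by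
    rw [← hZ]
    exact Dvd.dvd.mul_left hdvd _
  have hpz : Prime (p : ℤ) := Nat.prime_iff_prime_int.mp hp
  rcases hpz.dvd_mul.1 hdvd2 with h | h
  · exact not_dvd_vandermonde_prod p hp a ha hap h
  · exact not_dvd_vandermonde_prod p hp b hb hbp h

end ChebAux4

namespace ChebAux5
open Polynomial Finset Matrix ChebAux3
variable {k : ℕ}

lemma good_of_good' (r : Fin k → ℕ)
    (h : ∀ d, d < k →
      ((Finset.univ : Finset (Fin k)).filter (fun i => r i ≤ d)).card ≤ d + 1) :
    ∀ d, ((Finset.univ : Finset (Fin k)).filter (fun i => r i ≤ d)).card ≤ d + 1 := by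
  intro d
  by_cases hd : d < k
  · exact h d hd
  · calc ((Finset.univ : Finset (Fin k)).filter (fun i => r i ≤ d)).card
        ≤ (Finset.univ : Finset (Fin k)).card := Finset.card_filter_le _ _
      _ = k := by simp
      _ ≤ d + 1 := by omega

lemma det_term (a b : Fin k → ℕ) (r : Fin k → ℕ) :
    Matrix.det (Matrix.of fun i j : Fin k =>
        (monomial (r i) (((a i * b j).choose (r i) : ℤ)) : ℤ[X]))
      = (X : ℤ[X]) ^ (∑ i, r i) * C (cdet a b r) := by
  have h1 : (Matrix.of fun i j : Fin k =>
      (monomial (r i) (((a i * b j).choose (r i) : ℤ)) : ℤ[X]))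
      = Matrix.of fun i j : Fin k =>
        (X : ℤ[X]) ^ (r i) * C (((a i * b j).choose (r i) : ℤ)) := by
    apply Matrix.ext
    intro i j
    show (monomial (r i)) (((a i * b j).choose (r i) : ℤ))
      = (X : ℤ[X]) ^ r i * C (((a i * b j).choose (r i) : ℤ))
    rw [← C_mul_X_pow_eq_monomial]
    exact mul_comm _ _
  rw [h1, Matrix.det_mul_column (fun i => (X : ℤ[X]) ^ r i)
    (fun i j => C (((a i * b j).choose (r i) : ℤ))), Finset.prod_pow_eq_pow_sum]
  congr 1
  have hmap := RingHom.map_det (Polynomial.C : ℤ →+* ℤ[X])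
    (Matrix.of fun i j : Fin k => ((a i * b j).choose (r i) : ℤ))
  rw [cdet]
  rw [show (Polynomial.C ((Matrix.of fun i j : Fin k => ((a i * b j).choose (r i) : ℤ)).det))
    = (Polynomial.C : ℤ →+* ℤ[X]) ((Matrix.of fun i j : Fin k =>
        ((a i * b j).choose (r i) : ℤ)).det) from rfl, hmap]
  rfl

lemma hexp (a b : Fin k → ℕ) (NN : ℕ) (hbox : ∀ i j, a i * b j < NN + 1) :
    Matrix.det (Matrix.of fun i j : Fin k => ((X : ℤ[X]) + 1) ^ (a i * b j))
      = ∑ r ∈ Fintype.piFinset (fun _ : Fin k => Finset.range (NN + 1)),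
          (X : ℤ[X]) ^ (∑ i, r i) * C (cdet a b r) := by
  have hrows : (Matrix.of fun i j : Fin k => ((X : ℤ[X]) + 1) ^ (a i * b j))
      = fun i => ∑ m ∈ Finset.range (NN + 1),
          (fun j : Fin k => (monomial m (((a i * b j).choose m : ℤ)) : ℤ[X])) := by
    funext i j
    rw [Finset.sum_apply]
    have hmon : ((X : ℤ[X]) + 1).Monic := by
      have := monic_X_add_C (1 : ℤ)
      simpa using this
    have hdeg : (((X : ℤ[X]) + 1) ^ (a i * b j)).natDegree < NN + 1 := by
      rw [hmon.natDegree_pow]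
      have h1 : ((X : ℤ[X]) + 1).natDegree = 1 := by
        have := natDegree_X_add_C (1 : ℤ)
        simpa using this
      rw [h1, mul_one]
      exact hbox i j
    show (((X : ℤ[X]) + 1) ^ (a i * b j)) = _
    conv_lhs => rw [Polynomial.as_sum_range' _ _ hdeg]
    apply Finset.sum_congr rfl
    intro m _
    rw [Polynomial.coeff_X_add_one_pow]
  have hml := (Matrix.detRowAlternating (n := Fin k)
      (R := ℤ[X])).toMultilinearMap.map_sum_finset
    (fun i m => (fun j : Fin k => (monomial m (((a i * b j).choose m : ℤ)) : ℤ[X])))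
    (fun _ => Finset.range (NN + 1))
  calc Matrix.det (Matrix.of fun i j : Fin k => ((X : ℤ[X]) + 1) ^ (a i * b j))
      = (Matrix.detRowAlternating (n := Fin k) (R := ℤ[X])).toMultilinearMap
          (fun i => ∑ m ∈ Finset.range (NN + 1),
            (fun j : Fin k => (monomial m (((a i * b j).choose m : ℤ)) : ℤ[X]))) := by
        rw [← hrows]; rfl
    _ = ∑ r ∈ Fintype.piFinset (fun _ : Fin k => Finset.range (NN + 1)),
          (Matrix.detRowAlternating (n := Fin k) (R := ℤ[X])).toMultilinearMap
            (fun i => fun j : Fin k =>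
              (monomial (r i) (((a i * b j).choose (r i) : ℤ)) : ℤ[X])) := hml
    _ = ∑ r ∈ Fintype.piFinset (fun _ : Fin k => Finset.range (NN + 1)),
          (X : ℤ[X]) ^ (∑ i, r i) * C (cdet a b r) := by
        apply Finset.sum_congr rfl
        intro r _
        exact det_term a b r

lemma main_aux (p : ℕ) (hp : p.Prime) (a b : Fin k → ℕ)
    (ha : StrictMono a) (hb : StrictMono b) (hap : ∀ i, a i < p) (hbp : ∀ i, b i < p)
    (hk : k ≤ p) (ξ : ℂ) (hξ : IsPrimitiveRoot ξ p) :
    Matrix.det (Matrix.of fun i j : Fin k => ξ ^ (a i * b j)) ≠ 0 := by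
  intro hD0
  haveI : Fact p.Prime := ⟨hp⟩
  set NN := p * p with hNN
  have hppos : 0 < p := hp.pos
  have hkNN : k ≤ NN + 1 := by
    have h1 : p * 1 ≤ p * p := Nat.mul_le_mul_left p hp.one_lt.le
    omega
  have hbox : ∀ i j, a i * b j < NN + 1 := by
    intro i j
    have : a i * b j < p * p :=
      mul_lt_mul'' (hap i) (hbp j) (Nat.zero_le _) (Nat.zero_le _)
    omega
  set F : ℤ[X] := Matrix.det (Matrix.of fun i j : Fin k => ((X : ℤ[X]) + 1) ^ (a i * b j))
    with hF
  set Mg : ℕ := ∑ d ∈ Finset.range k, d with hMg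
  set Nint : ℤ := ∑ σ : Equiv.Perm (Fin k), cdet a b (fun i => ((σ i : Fin k) : ℕ)) with hNint
  have hcoeff : ∀ mm : ℕ, F.coeff mm
      = ∑ r ∈ Fintype.piFinset (fun _ : Fin k => Finset.range (NN + 1)),
          if (∑ i, r i) = mm then cdet a b r else 0 := by
    intro mm
    rw [hF, hexp a b NN hbox, Polynomial.finset_sum_coeff]
    apply Finset.sum_congr rfl
    intro r _
    rw [mul_comm, C_mul_X_pow_eq_monomial, Polynomial.coeff_monomial]
  -- low coefficients vanish
  have hlow : ∀ mm, mm < Mg → F.coeff mm = 0 := by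
    intro mm hmm
    rw [hcoeff]
    apply Finset.sum_eq_zero
    intro r _
    by_cases hs : (∑ i, r i) = mm
    · rw [if_pos hs]
      have hbad : ¬ ∀ d, ((Finset.univ : Finset (Fin k)).filter (fun i => r i ≤ d)).card ≤ d + 1 := by
        intro hgood
        have := ChebAux.sum_ge r hgood
        omega
      push_neg at hbad
      obtain ⟨d, hd⟩ := hbad
      exact cdet_eq_zero a b r (d := d) (by omega)
    · rw [if_neg hs]
  obtain ⟨G, hG⟩ : (X : ℤ[X]) ^ Mg ∣ F := Polynomial.X_pow_dvd_iff.mpr hlow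
  -- top coefficient
  have hcoeffM : F.coeff Mg = Nint := by
    rw [hcoeff, ← Finset.sum_filter]
    have hsub : ((Fintype.piFinset (fun _ : Fin k => Finset.range (NN + 1))).filter
          (fun r => (∑ i, r i) = Mg)).filter
          (fun r => ∀ d ∈ Finset.range k,
            ((Finset.univ : Finset (Fin k)).filter (fun i => r i ≤ d)).card ≤ d + 1)
        ⊆ (Fintype.piFinset (fun _ : Fin k => Finset.range (NN + 1))).filter
          (fun r => (∑ i, r i) = Mg) := Finset.filter_subset _ _
    rw [← Finset.sum_subset hsub (by
      intro r hr0 hr1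
      simp only [Finset.mem_filter] at hr0 hr1
      have hbad : ¬ ∀ d ∈ Finset.range k,
          ((Finset.univ : Finset (Fin k)).filter (fun i => r i ≤ d)).card ≤ d + 1 := by
        intro hgood'
        exact hr1 ⟨hr0, hgood'⟩
      push_neg at hbad
      obtain ⟨d, _, hd⟩ := hbad
      exact cdet_eq_zero a b r (d := d) (by omega))]
    rw [hNint]
    symm
    apply Finset.sum_nbij (fun σ : Equiv.Perm (Fin k) => (fun i => ((σ i : Fin k) : ℕ)))
    · intro σ _
      simp only [Finset.mem_filter, Fintype.mem_piFinset, Finset.mem_range]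
      refine ⟨⟨fun i => ?_, ChebAux2.perm_sum σ⟩, fun d _ => ChebAux2.perm_good σ d⟩
      have := (σ i).isLt
      omega
    · intro σ1 _ σ2 _ hfe
      ext i
      exact congrFun hfe i
    · intro r hr
      simp only [Finset.mem_coe, Finset.mem_filter, Fintype.mem_piFinset, Finset.mem_range] at hr
      obtain ⟨⟨hr1, hr2⟩, hr3⟩ := hr
      obtain ⟨σ, hσ⟩ := ChebAux2.exists_perm r (good_of_good' r hr3) hr2
      exact ⟨σ, Finset.mem_coe.mpr (Finset.mem_univ σ), (funext fun i => (hσ i).symm)⟩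
    · intro σ _
      rfl
  -- extract constant coefficient of G
  have hG0 : G.coeff 0 = Nint := by
    have h1 := Polynomial.coeff_X_pow_mul G Mg 0
    rw [zero_add] at h1
    rw [← h1, ← hG, hcoeffM]
  -- evaluate at ξ - 1
  have hDeval : (Polynomial.aeval (ξ - 1)) F = 0 := by
    have hmap := RingHom.map_det ((Polynomial.aeval (ξ - 1) : ℤ[X] →ₐ[ℤ] ℂ).toRingHom)
      (Matrix.of fun i j : Fin k => ((X : ℤ[X]) + 1) ^ (a i * b j))
    have h2 : (Polynomial.aeval (ξ - 1)) F
        = Matrix.det (Matrix.of fun i j : Fin k => ξ ^ (a i * b j)) := by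
      rw [hF]
      rw [show ((Polynomial.aeval (ξ - 1)) (Matrix.det (Matrix.of fun i j : Fin k =>
          ((X : ℤ[X]) + 1) ^ (a i * b j))))
        = ((Polynomial.aeval (ξ - 1) : ℤ[X] →ₐ[ℤ] ℂ).toRingHom) (Matrix.det
          (Matrix.of fun i j : Fin k => ((X : ℤ[X]) + 1) ^ (a i * b j))) from rfl, hmap]
      congr 1
      ext i j
      simp [Matrix.map_apply, sub_add_cancel]
    rw [h2, hD0]
  rw [hG, _root_.map_mul, map_pow, Polynomial.aeval_X] at hDeval
  have hξ1 : ξ - 1 ≠ 0 := sub_ne_zero.mpr (hξ.ne_one hp.one_lt)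
  have hGe : (Polynomial.aeval (ξ - 1)) G = 0 := by
    rcases mul_eq_zero.mp hDeval with h | h
    · exact absurd h (pow_ne_zero _ hξ1)
    · exact h
  have hG2 : (Polynomial.aeval ξ) (G.comp ((X : ℤ[X]) - C 1)) = 0 := by
    rw [Polynomial.aeval_comp]
    have h3 : (Polynomial.aeval ξ) ((X : ℤ[X]) - C 1) = ξ - 1 := by simp
    rw [h3, hGe]
  have hdvd : minpoly ℤ ξ ∣ G.comp ((X : ℤ[X]) - C 1) :=
    minpoly.isIntegrallyClosed_dvd (hξ.isIntegral hp.pos) hG2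
  rw [← Polynomial.cyclotomic_eq_minpoly hξ hp.pos] at hdvd
  have hpN : (p : ℤ) ∣ Nint := by
    obtain ⟨H, hH⟩ := hdvd
    have h1 : (G.comp ((X : ℤ[X]) - C 1)).eval 1 = Nint := by
      rw [Polynomial.eval_comp]
      have h4 : Polynomial.eval (1 : ℤ) ((X : ℤ[X]) - C 1) = 0 := by simp
      rw [h4, ← Polynomial.coeff_zero_eq_eval_zero, hG0]
    rw [← h1, hH, Polynomial.eval_mul, Polynomial.eval_one_cyclotomic_prime]
    exact Dvd.intro _ rfl
  exact ChebAux4.not_dvd p hp a b ha hb hap hbp hpN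

end ChebAux5

/-- Chebotarev's theorem: for a prime `p` and `ξ = e^{2πi/p}`, every square submatrix of the
Vandermonde matrix `(ξ^{ij})_{0 ≤ i,j ≤ p-1}` is invertible. -/
theorem chebotarev_vandermonde (p : ℕ) (hp : p.Prime)
    (k : ℕ) (A B : Finset (Fin p)) (hA : A.card = k) (hB : B.card = k) :
    Matrix.det (fun i j : Fin k =>
      Complex.exp (2 * Real.pi * Complex.I / p) ^
        ((A.orderEmbOfFin hA i : ℕ) * (B.orderEmbOfFin hB j : ℕ))) ≠ 0 := by
  have hξ : IsPrimitiveRoot (Complex.exp (2 * Real.pi * Complex.I / p)) p :=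
    Complex.isPrimitiveRoot_exp p hp.ne_zero
  have hk : k ≤ p := by
    calc k = A.card := hA.symm
      _ ≤ (Finset.univ : Finset (Fin p)).card := Finset.card_le_univ A
      _ = p := by simp
  have ha : StrictMono (fun i => ((A.orderEmbOfFin hA i : Fin p) : ℕ)) := by
    intro i j hij
    exact (A.orderEmbOfFin hA).strictMono hij
  have hb : StrictMono (fun i => ((B.orderEmbOfFin hB i : Fin p) : ℕ)) := by
    intro i j hij
    exact (B.orderEmbOfFin hB).strictMono hij
  exact ChebAux5.main_aux p hp _ _ ha hb (fun i => (A.orderEmbOfFin hA i).isLt)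
    (fun i => (B.orderEmbOfFin hB i).isLt) hk _ hξ
end
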